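/- arXiv:0907.5338 — 4 statements merged into one kernel-verified Lean document; each statement's English description precedes it below -/
import Mathlib

section
/- Let f : (0,∞) → (0,∞) be operator monotone. Then the function h(t) = (t−1)²/f(t), defined for t > 0, is operator convex. -/
set_option linter.unusedSectionVars false
set_option maxHeartbeats 1000000


open Matrix Kronecker ComplexOrder

/-- Functional calculus: apply `g : ℝ → ℝ` to a Hermitian matrix via its spectral
decomposition (junk value `0` on non-Hermitian matrices). -/
noncomputable def matFun {ι : Type} [Fintype ι] [DecidableEq ι] (g : ℝ → ℝ)
    (M : Matrix ι ι ℂ) : Matrix ι ι ℂ :=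
  if hM : M.IsHermitian then
    ∑ i, (g (hM.eigenvalues i) : ℂ) •
      Matrix.vecMulVec (⇑(hM.eigenvectorBasis i)) (star ⇑(hM.eigenvectorBasis i))
  else 0

/-- Operator monotonicity on `(0,∞)`: monotone w.r.t. the Loewner order on positive
definite complex Hermitian matrices of all sizes. -/
def OperatorMonotone (g : ℝ → ℝ) : Prop :=
  ∀ (k : ℕ) (A B : Matrix (Fin k) (Fin k) ℂ), A.PosDef → B.PosDef →
    (B - A).PosSemidef → (matFun g B - matFun g A).PosSemidef

/-- Operator convexity on `(0,∞)` for positive definite complex Hermitian matrices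
of all sizes. -/
def OperatorConvex (g : ℝ → ℝ) : Prop :=
  ∀ (k : ℕ) (A B : Matrix (Fin k) (Fin k) ℂ), A.PosDef → B.PosDef →
    ∀ t : ℝ, 0 ≤ t → t ≤ 1 →
      (t • matFun g A + (1 - t) • matFun g B - matFun g (t • A + (1 - t) • B)).PosSemidef

section Aux
variable {ι : Type} [Fintype ι] [DecidableEq ι]

/-- real diagonal as a complex matrix -/
noncomputable def rD (μ : ι → ℝ) : Matrix ι ι ℂ := Matrix.diagonal fun i => (μ i : ℂ)

lemma rD_conjTranspose (μ : ι → ℝ) : (rD μ)ᴴ = rD μ := by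
  simp [rD, Matrix.diagonal_conjTranspose]

lemma matFun_spectral (g : ℝ → ℝ) {M : Matrix ι ι ℂ} (hM : M.IsHermitian) :
    matFun g M = (hM.eigenvectorUnitary : Matrix ι ι ℂ) * rD (fun i => g (hM.eigenvalues i)) *
      (hM.eigenvectorUnitary : Matrix ι ι ℂ)ᴴ := by
  rw [matFun, dif_pos hM]
  ext a b
  simp only [Matrix.sum_apply, Matrix.smul_apply, Matrix.vecMulVec_apply, Matrix.mul_apply,
    rD, Matrix.diagonal_apply, Matrix.conjTranspose_apply, IsHermitian.eigenvectorUnitary_apply]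
  congr 1
  ext i
  simp only [mul_ite, mul_zero]
  rw [Finset.sum_ite_eq' Finset.univ i (fun x => (hM.eigenvectorBasis x).ofLp a * (g (hM.eigenvalues x) : ℂ))]
  simp [smul_eq_mul]
  ring


lemma rD_herm (μ : ι → ℝ) : (rD μ).IsHermitian := rD_conjTranspose μ

lemma rep_herm {W : Matrix ι ι ℂ} (μ : ι → ℝ) : (W * rD μ * Wᴴ).IsHermitian := by
  unfold Matrix.IsHermitian
  rw [Matrix.conjTranspose_mul, Matrix.conjTranspose_mul, rD_conjTranspose,
    Matrix.conjTranspose_conjTranspose, Matrix.mul_assoc]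

/-- Key well-definedness: `matFun` only depends on *a* unitary diagonalization. -/
lemma matFun_rep (g : ℝ → ℝ) {M W : Matrix ι ι ℂ} {μ : ι → ℝ}
    (hW1 : W * Wᴴ = 1) (hW2 : Wᴴ * W = 1) (hrep : M = W * rD μ * Wᴴ) :
    matFun g M = W * rD (fun i => g (μ i)) * Wᴴ := by
  have hM : M.IsHermitian := hrep ▸ rep_herm μ
  set V : Matrix ι ι ℂ := (hM.eigenvectorUnitary : Matrix ι ι ℂ) with hV
  have hV2 : Vᴴ * V = 1 := by
    simpa [hV, Matrix.star_eq_conjTranspose] using hM.eigenvectorUnitary.2.1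
  have hV1 : V * Vᴴ = 1 := by
    simpa [hV, Matrix.star_eq_conjTranspose] using hM.eigenvectorUnitary.2.2
  have hspec : M = V * rD hM.eigenvalues * Vᴴ := by
    simpa [rD, Function.comp_def, Matrix.star_eq_conjTranspose] using hM.spectral_theorem
  set U : Matrix ι ι ℂ := Wᴴ * V with hU
  have e1 : Wᴴ * (V * rD hM.eigenvalues * Vᴴ) * V = Wᴴ * (W * rD μ * Wᴴ) * V := by
    rw [← hspec, ← hrep]
  have hA : Wᴴ * (V * rD hM.eigenvalues * Vᴴ) * V = U * rD hM.eigenvalues := by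
    simp only [hU, Matrix.mul_assoc]
    rw [hV2, Matrix.mul_one]
  have hB : Wᴴ * (W * rD μ * Wᴴ) * V = rD μ * U := by
    simp only [hU, ← Matrix.mul_assoc]
    rw [hW2, Matrix.one_mul]
  have hcomm : U * rD hM.eigenvalues = rD μ * U := by rw [← hA, ← hB, e1]
  have hcomm' : U * rD (fun i => g (hM.eigenvalues i)) = rD (fun i => g (μ i)) * U := by
    ext i j
    have h1 := congrFun (congrFun hcomm i) j
    simp only [rD, Matrix.mul_diagonal, Matrix.diagonal_mul] at h1 ⊢
    by_cases h : U i j = 0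
    · simp [h]
    · have heq : (hM.eigenvalues j : ℂ) = (μ i : ℂ) := by
        exact mul_left_cancel₀ h (by rw [h1, mul_comm])
      have heq' : hM.eigenvalues j = μ i := by exact_mod_cast heq
      rw [heq', mul_comm]
  have hUU' : U * Uᴴ = 1 := by
    rw [hU, Matrix.conjTranspose_mul, Matrix.conjTranspose_conjTranspose,
      Matrix.mul_assoc, ← Matrix.mul_assoc V Vᴴ W, hV1, Matrix.one_mul, hW2]
  have hVWU : V = W * U := by rw [hU, ← Matrix.mul_assoc, hW1, Matrix.one_mul]
  rw [matFun_spectral g hM, ← hV]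
  calc V * rD (fun i => g (hM.eigenvalues i)) * Vᴴ
      = W * (U * rD (fun i => g (hM.eigenvalues i)) * Uᴴ) * Wᴴ := by
        rw [hVWU, Matrix.conjTranspose_mul]
        simp only [Matrix.mul_assoc]
    _ = W * rD (fun i => g (μ i)) * Wᴴ := by
        rw [hcomm']
        simp only [Matrix.mul_assoc]
        rw [← Matrix.mul_assoc U Uᴴ Wᴴ, hUU', Matrix.one_mul]

lemma herm_rep {M : Matrix ι ι ℂ} (hM : M.IsHermitian) :
    ∃ W : Matrix ι ι ℂ, W * Wᴴ = 1 ∧ Wᴴ * W = 1 ∧ M = W * rD hM.eigenvalues * Wᴴ := by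
  refine ⟨(hM.eigenvectorUnitary : Matrix ι ι ℂ), ?_, ?_, ?_⟩
  · simpa [Matrix.star_eq_conjTranspose] using hM.eigenvectorUnitary.2.2
  · simpa [Matrix.star_eq_conjTranspose] using hM.eigenvectorUnitary.2.1
  · simpa [rD, Function.comp_def, Matrix.star_eq_conjTranspose] using hM.spectral_theorem

lemma rD_mul (μ ν : ι → ℝ) : rD μ * rD ν = rD (fun i => μ i * ν i) := by
  simp [rD, Matrix.diagonal_mul_diagonal]

lemma rD_one : rD (fun _ : ι => (1:ℝ)) = 1 := by simp [rD]

lemma rD_add (μ ν : ι → ℝ) : rD μ + rD ν = rD (fun i => μ i + ν i) := by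
  simp [rD, Matrix.diagonal_add]

lemma rD_sub (μ ν : ι → ℝ) : rD μ - rD ν = rD (fun i => μ i - ν i) := by
  simp [rD, Matrix.diagonal_sub]

lemma rD_smul (c : ℝ) (μ : ι → ℝ) : c • rD μ = rD (fun i => c * μ i) := by
  ext i j
  by_cases h : i = j <;> simp [rD, Matrix.diagonal_apply, h, Complex.real_smul]

section rep
variable {W : Matrix ι ι ℂ} (hW1 : W * Wᴴ = 1) (hW2 : Wᴴ * W = 1) (μ ν : ι → ℝ)

include hW2 in
lemma rep_mul : (W * rD μ * Wᴴ) * (W * rD ν * Wᴴ) = W * rD (fun i => μ i * ν i) * Wᴴ := by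
  rw [← rD_mul]
  calc (W * rD μ * Wᴴ) * (W * rD ν * Wᴴ)
      = W * (rD μ * ((Wᴴ * W) * (rD ν * Wᴴ))) := by simp only [Matrix.mul_assoc]
    _ = W * (rD μ * rD ν) * Wᴴ := by rw [hW2, Matrix.one_mul]; simp only [Matrix.mul_assoc]

lemma rep_add : (W * rD μ * Wᴴ) + (W * rD ν * Wᴴ) = W * rD (fun i => μ i + ν i) * Wᴴ := by
  rw [← rD_add, Matrix.mul_add, Matrix.add_mul]

lemma rep_sub : (W * rD μ * Wᴴ) - (W * rD ν * Wᴴ) = W * rD (fun i => μ i - ν i) * Wᴴ := by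
  rw [← rD_sub, Matrix.mul_sub, Matrix.sub_mul]

lemma rep_smul (c : ℝ) : c • (W * rD μ * Wᴴ) = W * rD (fun i => c * μ i) * Wᴴ := by
  rw [← rD_smul, Matrix.mul_smul, Matrix.smul_mul]

include hW1 in
lemma rep_one : W * rD (fun _ => (1:ℝ)) * Wᴴ = 1 := by rw [rD_one, Matrix.mul_one, hW1]

include hW1 hW2 in
lemma rep_inv (hμ : ∀ i, μ i ≠ 0) :
    (W * rD μ * Wᴴ)⁻¹ = W * rD (fun i => (μ i)⁻¹) * Wᴴ := by
  apply Matrix.inv_eq_right_inv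
  rw [rep_mul hW2]
  have : (fun i => μ i * (μ i)⁻¹) = fun _ => (1:ℝ) := by
    ext i; exact mul_inv_cancel₀ (hμ i)
  rw [this, rep_one hW1]

lemma rep_posSemidef (hμ : ∀ i, 0 ≤ μ i) : (W * rD μ * Wᴴ).PosSemidef := by
  have : (rD μ).PosSemidef := by
    apply Matrix.PosSemidef.diagonal
    intro i
    exact Complex.zero_le_real.mpr (hμ i)
  exact this.mul_mul_conjTranspose_same W

lemma posDef_conj {N : Matrix ι ι ℂ} (hN : N.PosDef) (hW1 : W * Wᴴ = 1) :
    (W * N * Wᴴ).PosDef := by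
  refine Matrix.PosDef.of_dotProduct_mulVec_pos ?_ (fun x hx => ?_)
  · unfold Matrix.IsHermitian
    rw [Matrix.conjTranspose_mul, Matrix.conjTranspose_mul, hN.1,
      Matrix.conjTranspose_conjTranspose, Matrix.mul_assoc]
  · have hy : Wᴴ *ᵥ x ≠ 0 := by
      intro h
      apply hx
      have := congrArg (W *ᵥ ·) h
      simpa [Matrix.mulVec_mulVec, hW1] using this
    have : dotProduct (star x) ((W * N * Wᴴ) *ᵥ x)
        = dotProduct (star (Wᴴ *ᵥ x)) (N *ᵥ (Wᴴ *ᵥ x)) := by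
      rw [← Matrix.mulVec_mulVec, ← Matrix.mulVec_mulVec, Matrix.dotProduct_mulVec,
        Matrix.star_mulVec, Matrix.conjTranspose_conjTranspose]
    rw [this]
    exact hN.dotProduct_mulVec_pos hy

include hW1 in
lemma rep_posDef (hμ : ∀ i, 0 < μ i) : (W * rD μ * Wᴴ).PosDef := by
  apply posDef_conj _ hW1
  apply Matrix.PosDef.diagonal
  intro i
  exact Complex.zero_lt_real.mpr (hμ i)

end rep

lemma matFun_conj_unitary (g : ℝ → ℝ) {M W : Matrix ι ι ℂ}
    (hW1 : W * Wᴴ = 1) (hW2 : Wᴴ * W = 1) (hM : M.IsHermitian) :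
    matFun g (W * M * Wᴴ) = W * matFun g M * Wᴴ := by
  obtain ⟨V, hV1, hV2, hrep⟩ := herm_rep hM
  have h1 : (W * V) * (W * V)ᴴ = 1 := by
    rw [Matrix.conjTranspose_mul]
    calc W * V * (Vᴴ * Wᴴ) = W * (V * Vᴴ) * Wᴴ := by simp only [Matrix.mul_assoc]
      _ = 1 := by rw [hV1, Matrix.mul_one, hW1]
  have h2 : (W * V)ᴴ * (W * V) = 1 := by
    rw [Matrix.conjTranspose_mul]
    calc Vᴴ * Wᴴ * (W * V) = Vᴴ * (Wᴴ * W) * V := by simp only [Matrix.mul_assoc]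
      _ = 1 := by rw [hW2, Matrix.mul_one, hV2]
  have hrep' : W * M * Wᴴ = (W * V) * rD hM.eigenvalues * (W * V)ᴴ := by
    conv_lhs => rw [hrep]
    rw [Matrix.conjTranspose_mul]
    simp only [Matrix.mul_assoc]
  rw [matFun_rep g h1 h2 hrep', matFun_rep g hV1 hV2 hrep, Matrix.conjTranspose_mul]
  simp only [Matrix.mul_assoc]

variable {κ : Type} [Fintype κ] [DecidableEq κ]

lemma rD_elim (μ : ι → ℝ) (ν : κ → ℝ) :
    rD (Sum.elim μ ν) = Matrix.fromBlocks (rD μ) 0 0 (rD ν) := by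
  rw [rD, show (fun i => ((Sum.elim μ ν i : ℝ) : ℂ)) =
    Sum.elim (fun i => ((μ i : ℝ) : ℂ)) (fun j => ((ν j : ℝ) : ℂ)) by ext (i|j) <;> rfl]
  exact (Matrix.fromBlocks_diagonal _ _).symm

lemma matFun_fromBlocks (g : ℝ → ℝ) {P : Matrix ι ι ℂ} {Q : Matrix κ κ ℂ}
    (hP : P.IsHermitian) (hQ : Q.IsHermitian) :
    matFun g (Matrix.fromBlocks P 0 0 Q)
      = Matrix.fromBlocks (matFun g P) 0 0 (matFun g Q) := by
  obtain ⟨V, hV1, hV2, hrepP⟩ := herm_rep hP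
  obtain ⟨X, hX1, hX2, hrepQ⟩ := herm_rep hQ
  set W : Matrix (ι ⊕ κ) (ι ⊕ κ) ℂ := Matrix.fromBlocks V 0 0 X with hW
  have hWc : Wᴴ = Matrix.fromBlocks Vᴴ 0 0 Xᴴ := by
    rw [hW, Matrix.fromBlocks_conjTranspose]; simp
  have hW1 : W * Wᴴ = 1 := by
    rw [hW, hWc, Matrix.fromBlocks_multiply]
    simp [hV1, hX1, Matrix.fromBlocks_one]
  have hW2 : Wᴴ * W = 1 := by
    rw [hW, hWc, Matrix.fromBlocks_multiply]
    simp [hV2, hX2, Matrix.fromBlocks_one]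
  have hrep : Matrix.fromBlocks P 0 0 Q
      = W * rD (Sum.elim hP.eigenvalues hQ.eigenvalues) * Wᴴ := by
    rw [rD_elim, hW, hWc, Matrix.fromBlocks_multiply, Matrix.fromBlocks_multiply]
    simp [← hrepP, ← hrepQ]
  rw [matFun_rep g hW1 hW2 hrep, matFun_rep g hV1 hV2 hrepP, matFun_rep g hX1 hX2 hrepQ]
  rw [show (fun i => g (Sum.elim hP.eigenvalues hQ.eigenvalues i))
      = Sum.elim (fun i => g (hP.eigenvalues i)) (fun j => g (hQ.eigenvalues j)) by
    ext (i|j) <;> rfl]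
  rw [rD_elim, hW, hWc, Matrix.fromBlocks_multiply, Matrix.fromBlocks_multiply]
  simp

lemma matFun_submatrix (g : ℝ → ℝ) {M : Matrix ι ι ℂ} (hM : M.IsHermitian) (e : κ ≃ ι) :
    matFun g (M.submatrix e e) = (matFun g M).submatrix e e := by
  obtain ⟨V, hV1, hV2, hrep⟩ := herm_rep hM
  set W : Matrix κ κ ℂ := V.submatrix e e with hW
  have hWc : Wᴴ = Vᴴ.submatrix e e := by rw [hW]; exact (Matrix.conjTranspose_submatrix _ _ _).symm
  have key : ∀ (A B : Matrix ι ι ℂ), A.submatrix (e : κ → ι) (e : κ → ι) * B.submatrix e e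
      = (A * B).submatrix e e := by
    intro A B
    exact Matrix.submatrix_mul_equiv A B _ e _
  have hW1 : W * Wᴴ = 1 := by
    rw [hW, hWc, key, hV1, Matrix.submatrix_one_equiv]
  have hW2 : Wᴴ * W = 1 := by
    rw [hW, hWc, key, hV2, Matrix.submatrix_one_equiv]
  have hdiag : ∀ (ν : ι → ℝ), (rD ν).submatrix (e : κ → ι) (e : κ → ι) = rD (ν ∘ e) := by
    intro ν
    rw [rD, rD, Matrix.submatrix_diagonal_equiv]
    rfl
  have hrep' : M.submatrix (e : κ → ι) (e : κ → ι) = W * rD (hM.eigenvalues ∘ e) * Wᴴ := by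
    rw [hW, hWc, ← hdiag, key, key]
    conv_lhs => rw [hrep]
  rw [matFun_rep g hW1 hW2 hrep', matFun_rep g hV1 hV2 hrep, hW, hWc, ← key, ← key, hdiag]
  rfl

lemma real_smul_mat (r : ℝ) (M : Matrix ι κ ℂ) : r • M = (r : ℂ) • M := by
  ext i j; simp [Complex.real_smul]

lemma psd_toBlocks₁₁ {A : Matrix ι ι ℂ} {B : Matrix ι κ ℂ} {C : Matrix κ ι ℂ} {D : Matrix κ κ ℂ}
    (h : (Matrix.fromBlocks A B C D).PosSemidef) : A.PosSemidef := by
  have h2 := h.submatrix (Sum.inl : ι → ι ⊕ κ)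
  have : (Matrix.fromBlocks A B C D).submatrix (Sum.inl : ι → ι ⊕ κ) Sum.inl = A := by
    ext i j; rfl
  rwa [this] at h2

lemma psd_embed₁ {P : Matrix ι ι ℂ} (hP : P.PosSemidef) :
    (Matrix.fromBlocks P 0 0 (0 : Matrix κ κ ℂ)).PosSemidef := by
  have := hP.mul_mul_conjTranspose_same
    (Matrix.fromRows (1 : Matrix ι ι ℂ) (0 : Matrix κ ι ℂ))
  rw [Matrix.fromRows_mul, Matrix.conjTranspose_fromRows_eq_fromCols_conjTranspose,
    Matrix.fromRows_mul_fromCols] at this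
  simpa using this

lemma psd_embed₂ {Q : Matrix κ κ ℂ} (hQ : Q.PosSemidef) :
    (Matrix.fromBlocks (0 : Matrix ι ι ℂ) 0 0 Q).PosSemidef := by
  have := hQ.mul_mul_conjTranspose_same
    (Matrix.fromRows (0 : Matrix ι κ ℂ) (1 : Matrix κ κ ℂ))
  rw [Matrix.fromRows_mul, Matrix.conjTranspose_fromRows_eq_fromCols_conjTranspose,
    Matrix.fromRows_mul_fromCols] at this
  simpa using this

lemma psd_smul_real {P : Matrix ι ι ℂ} (hP : P.PosSemidef) {c : ℝ} (hc : 0 ≤ c) :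
    (c • P).PosSemidef := by
  rw [real_smul_mat]
  refine Matrix.PosSemidef.of_dotProduct_mulVec_nonneg ?_ (fun x => ?_)
  · unfold Matrix.IsHermitian
    rw [Matrix.conjTranspose_smul, hP.1]
    congr 1
    simp [Complex.star_def, Complex.conj_ofReal]
  · rw [Matrix.smul_mulVec, dotProduct_smul]
    have := hP.dotProduct_mulVec_nonneg x
    rw [smul_eq_mul]
    exact mul_nonneg (Complex.zero_le_real.mpr hc) this

lemma matFun_herm (g : ℝ → ℝ) {M : Matrix ι ι ℂ} (hM : M.IsHermitian) :
    (matFun g M).IsHermitian := by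
  obtain ⟨V, hV1, hV2, hrep⟩ := herm_rep hM
  rw [matFun_rep g hV1 hV2 hrep]
  exact rep_herm _

lemma matFun_rD (g : ℝ → ℝ) (μ : ι → ℝ) : matFun g (rD μ) = rD (fun i => g (μ i)) := by
  have h1 : (1 : Matrix ι ι ℂ) * (1 : Matrix ι ι ℂ)ᴴ = 1 := by simp
  have h2 : (1 : Matrix ι ι ℂ)ᴴ * (1 : Matrix ι ι ℂ) = 1 := by simp
  have := matFun_rep g h1 h2 (show rD μ = 1 * rD μ * (1:Matrix ι ι ℂ)ᴴ by simp)
  simpa using this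

lemma posDef_submatrix_equiv {M : Matrix ι ι ℂ} (hM : M.PosDef) (e : κ ≃ ι) :
    (M.submatrix e e).PosDef := by
  obtain ⟨V, hV1, hV2, hrep⟩ := herm_rep hM.1
  set W : Matrix κ κ ℂ := V.submatrix e e with hW
  have hWc : Wᴴ = Vᴴ.submatrix e e := by rw [hW]; exact (Matrix.conjTranspose_submatrix _ _ _).symm
  have key : ∀ (A B : Matrix ι ι ℂ), A.submatrix (e : κ → ι) (e : κ → ι) * B.submatrix e e
      = (A * B).submatrix e e := fun A B => Matrix.submatrix_mul_equiv A B _ e _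
  have hW1 : W * Wᴴ = 1 := by rw [hW, hWc, key, hV1, Matrix.submatrix_one_equiv]
  have hrep' : M.submatrix (e : κ → ι) (e : κ → ι) = W * rD (hM.1.eigenvalues ∘ e) * Wᴴ := by
    rw [hW, hWc, show rD (hM.1.eigenvalues ∘ e) = (rD hM.1.eigenvalues).submatrix e e by
      rw [rD, rD, Matrix.submatrix_diagonal_equiv]; rfl, key, key]
    conv_lhs => rw [hrep]
  rw [hrep']
  exact rep_posDef hW1 _ (fun i => hM.eigenvalues_pos (e i))

/-- matFun of a positive definite matrix, when g is positive on positives. -/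
lemma matFun_posDef {g : ℝ → ℝ} (hg : ∀ t > 0, 0 < g t) {M : Matrix ι ι ℂ} (hM : M.PosDef) :
    (matFun g M).PosDef := by
  obtain ⟨V, hV1, hV2, hrep⟩ := herm_rep hM.1
  rw [matFun_rep g hV1 hV2 hrep]
  exact rep_posDef hV1 _ (fun i => hg _ (hM.eigenvalues_pos i))

section Ublock
variable (a b : ℝ) (P Q : Matrix ι ι ℂ)

/-- The 2x2 rotation block unitary. -/
noncomputable def Ub : Matrix (ι ⊕ ι) (ι ⊕ ι) ℂ :=
  Matrix.fromBlocks ((a:ℂ) • 1) (-((b:ℂ) • 1)) ((b:ℂ) • 1) ((a:ℂ) • 1)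

lemma Ub_conjTranspose : (Ub a b (ι := ι))ᴴ =
    Matrix.fromBlocks ((a:ℂ) • 1) ((b:ℂ) • 1) (-((b:ℂ) • 1)) ((a:ℂ) • 1) := by
  rw [Ub, Matrix.fromBlocks_conjTranspose]
  simp [Matrix.conjTranspose_smul, Complex.star_def, Complex.conj_ofReal]

lemma Ub_conj_fromBlocks :
    (Ub a b)ᴴ * (Matrix.fromBlocks P 0 0 Q) * Ub a b =
    Matrix.fromBlocks (((a:ℂ)*(a:ℂ)) • P + ((b:ℂ)*(b:ℂ)) • Q) (((a:ℂ)*(b:ℂ)) • (Q - P))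
      (((a:ℂ)*(b:ℂ)) • (Q - P)) (((b:ℂ)*(b:ℂ)) • P + ((a:ℂ)*(a:ℂ)) • Q) := by
  rw [Ub_conjTranspose, Ub, Matrix.fromBlocks_multiply, Matrix.fromBlocks_multiply,
    Matrix.fromBlocks_inj]
  simp only [Matrix.smul_mul, Matrix.mul_smul, Matrix.one_mul, Matrix.mul_one, Matrix.mul_zero,
    Matrix.zero_mul, smul_zero, zero_add, add_zero, smul_smul, Matrix.neg_mul,
    Matrix.mul_neg, neg_smul, smul_neg]
  refine ⟨?_, ?_, ?_, ?_⟩ <;> first | trivial | module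

lemma Ub_unitary (hab : a^2 + b^2 = 1) :
    (Ub a b (ι := ι))ᴴ * Ub a b = 1 ∧ Ub a b * (Ub a b (ι := ι))ᴴ = 1 := by
  have h1 : (Ub a b (ι := ι))ᴴ * Ub a b = 1 := by
    have := Ub_conj_fromBlocks a b (1 : Matrix ι ι ℂ) 1
    rw [Matrix.fromBlocks_one] at this
    rw [show (Ub a b (ι := ι))ᴴ * Ub a b = (Ub a b (ι := ι))ᴴ * 1 * Ub a b by
      rw [Matrix.mul_one], this]
    have hc : ((a:ℂ)*(a:ℂ)) + ((b:ℂ)*(b:ℂ)) = 1 := by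
      push_cast [← Complex.ofReal_mul]
      exact_mod_cast congrArg (Complex.ofReal) (by nlinarith : a*a + b*b = 1)
    rw [← Matrix.fromBlocks_one, Matrix.fromBlocks_inj]
    refine ⟨?_, ?_, ?_, ?_⟩
    · rw [← add_smul, hc, one_smul]
    · simp
    · simp
    · rw [← add_smul, add_comm, hc, one_smul]
  exact ⟨h1, mul_eq_one_comm.mp h1⟩

end Ublock

lemma herm_smul_real {M : Matrix ι ι ℂ} (hM : M.IsHermitian) (r : ℝ) :
    ((r:ℂ) • M).IsHermitian := by
  unfold Matrix.IsHermitian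
  rw [Matrix.conjTranspose_smul, hM.eq]
  congr 1
  simp [Complex.star_def, Complex.conj_ofReal]

lemma herm_fromBlocks {P : Matrix ι ι ℂ} {Q : Matrix κ κ ℂ}
    (hP : P.IsHermitian) (hQ : Q.IsHermitian) :
    (Matrix.fromBlocks P 0 0 Q).IsHermitian := by
  unfold Matrix.IsHermitian
  rw [Matrix.fromBlocks_conjTranspose, hP.eq, hQ.eq]
  simp

lemma posDef_fromBlocks_diag {P : Matrix ι ι ℂ} {Q : Matrix κ κ ℂ}
    (hP : P.PosDef) (hQ : Q.PosDef) : (Matrix.fromBlocks P 0 0 Q).PosDef := by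
  refine Matrix.PosDef.of_dotProduct_mulVec_pos (herm_fromBlocks hP.1 hQ.1) (fun x hx => ?_)
  have hmv : (Matrix.fromBlocks P 0 0 Q) *ᵥ x
      = Sum.elim (P *ᵥ (x ∘ Sum.inl)) (Q *ᵥ (x ∘ Sum.inr)) := by
    rw [Matrix.fromBlocks_mulVec]
    simp
  rw [hmv, show star x = Sum.elim (star (x ∘ Sum.inl)) (star (x ∘ Sum.inr)) by
      ext (i|j) <;> rfl, sumElim_dotProduct_sumElim]
  by_cases h1 : x ∘ Sum.inl = 0
  · have h2 : x ∘ Sum.inr ≠ 0 := by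
      intro h2
      apply hx
      ext (i|j)
      · exact congrFun h1 i
      · exact congrFun h2 j
    have h3 := hQ.dotProduct_mulVec_pos h2
    have h0 := hP.posSemidef.dotProduct_mulVec_nonneg (x ∘ Sum.inl)
    exact add_pos_of_nonneg_of_pos h0 h3
  · have := hP.dotProduct_mulVec_pos h1
    have h0 := hQ.posSemidef.dotProduct_mulVec_nonneg (x ∘ Sum.inr)
    exact add_pos_of_pos_of_nonneg this h0

lemma conc_eps (f : ℝ → ℝ) (hf_mono : OperatorMonotone f) (k : ℕ)
    (A B : Matrix (Fin k) (Fin k) ℂ) (hA : A.PosDef) (hB : B.PosDef)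
    (t : ℝ) (ht0 : 0 ≤ t) (ht1 : t ≤ 1) (ε : ℝ) (hε : 0 < ε) :
    (matFun f (t • A + (1-t) • B + ε • (1 : Matrix (Fin k) (Fin k) ℂ))
      - (t • matFun f A + (1-t) • matFun f B)).PosSemidef := by
  have ht0' : (0:ℝ) ≤ 1 - t := by linarith
  set a := Real.sqrt t with ha
  set b := Real.sqrt (1-t) with hb
  have ha2 : (a:ℂ) * (a:ℂ) = (t:ℂ) := by
    rw [← Complex.ofReal_mul]; exact_mod_cast congrArg Complex.ofReal (Real.mul_self_sqrt ht0)
  have hb2 : (b:ℂ) * (b:ℂ) = ((1-t:ℝ):ℂ) := by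
    rw [← Complex.ofReal_mul]; exact_mod_cast congrArg Complex.ofReal (Real.mul_self_sqrt ht0')
  have hab : a^2 + b^2 = 1 := by
    rw [ha, hb, Real.sq_sqrt ht0, Real.sq_sqrt ht0']; ring
  set U := Ub a b (ι := Fin k) with hUdef
  obtain ⟨hU1, hU2⟩ := Ub_unitary a b (ι := Fin k) hab
  set X : Matrix (Fin k ⊕ Fin k) (Fin k ⊕ Fin k) ℂ := Matrix.fromBlocks A 0 0 B with hX
  have hXpd : X.PosDef := posDef_fromBlocks_diag hA hB
  set Cc : Matrix (Fin k) (Fin k) ℂ := ((a:ℂ)*(a:ℂ)) • A + ((b:ℂ)*(b:ℂ)) • B with hCc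
  set Ec : Matrix (Fin k) (Fin k) ℂ := ((b:ℂ)*(b:ℂ)) • A + ((a:ℂ)*(a:ℂ)) • B with hEc
  set Dc : Matrix (Fin k) (Fin k) ℂ := ((a:ℂ)*(b:ℂ)) • (B - A) with hDc
  have hDcherm : Dcᴴ = Dc := by
    rw [hDc, Matrix.conjTranspose_smul, Matrix.conjTranspose_sub, hA.1.eq, hB.1.eq]
    congr 1
    simp [Complex.star_def, ← Complex.ofReal_mul, Complex.conj_ofReal]
  set Y := Uᴴ * X * U with hYdef
  have hU1' : Uᴴ * (Uᴴ)ᴴ = 1 := by rwa [Matrix.conjTranspose_conjTranspose]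
  have hYpd : Y.PosDef := by
    have := posDef_conj hXpd hU1'
    rwa [Matrix.conjTranspose_conjTranspose] at this
  have hYblocks : Y = Matrix.fromBlocks Cc Dc Dc Ec := by
    rw [hYdef, hX, hUdef, Ub_conj_fromBlocks]
  -- the Schur-complement correction term
  set γ := Real.sqrt ε with hγ
  have hγpos : 0 < γ := Real.sqrt_pos.mpr hε
  have hγ2 : (γ:ℂ) * (γ:ℂ) = (ε:ℂ) := by
    rw [← Complex.ofReal_mul]; exact_mod_cast congrArg Complex.ofReal (Real.mul_self_sqrt hε.le)
  have hγne : (γ:ℂ) ≠ 0 := by exact_mod_cast Complex.ofReal_ne_zero.mpr hγpos.ne'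
  set S : Matrix (Fin k) (Fin k ⊕ Fin k) ℂ :=
    Matrix.fromCols ((γ:ℂ) • 1) (-((γ:ℂ)⁻¹ • Dc)) with hS
  set R := Sᴴ * S + Matrix.fromBlocks 0 0 0 ((ε:ℂ) • (1 : Matrix (Fin k) (Fin k) ℂ)) with hR
  have hRpsd : R.PosSemidef := by
    apply (Matrix.posSemidef_conjTranspose_mul_self S).add
    apply psd_embed₂
    rw [← real_smul_mat]
    exact psd_smul_real Matrix.PosSemidef.one hε.le
  have hRblocks : R = Matrix.fromBlocks ((ε:ℂ) • 1) (-Dc) (-Dc)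
      ((ε:ℂ)⁻¹ • (Dc * Dc) + (ε:ℂ) • 1) := by
    rw [hR, hS, Matrix.conjTranspose_fromCols_eq_fromRows_conjTranspose,
      Matrix.fromRows_mul_fromCols, Matrix.fromBlocks_add]
    have e1 : ((γ:ℂ) • (1 : Matrix (Fin k) (Fin k) ℂ))ᴴ = (γ:ℂ) • 1 := by
      rw [Matrix.conjTranspose_smul]
      simp [Complex.star_def, Complex.conj_ofReal]
    have e2 : (-((γ:ℂ)⁻¹ • Dc))ᴴ = -((γ:ℂ)⁻¹ • Dc) := by
      rw [Matrix.conjTranspose_neg, Matrix.conjTranspose_smul, hDcherm]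
      congr 1
      simp [Complex.star_def, ← Complex.ofReal_inv, Complex.conj_ofReal]
    rw [e1, e2, Matrix.fromBlocks_inj]
    refine ⟨?_, ?_, ?_, ?_⟩
    · rw [Matrix.smul_mul, Matrix.mul_smul, smul_smul, hγ2, Matrix.one_mul, add_zero]
    · rw [Matrix.mul_neg, Matrix.smul_mul, Matrix.mul_smul, smul_smul, Matrix.one_mul,
        mul_inv_cancel₀ hγne, one_smul, add_zero]
    · rw [Matrix.neg_mul, Matrix.smul_mul, Matrix.mul_smul, smul_smul, Matrix.mul_one,
        inv_mul_cancel₀ hγne, one_smul, add_zero]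
    · rw [Matrix.neg_mul, Matrix.mul_neg, neg_neg, Matrix.smul_mul, Matrix.mul_smul, smul_smul]
      congr 2
      rw [← Complex.ofReal_inv, ← Complex.ofReal_mul, ← Complex.ofReal_inv]
      congr 1
      rw [← Real.sqrt_inv]
      exact Real.mul_self_sqrt (inv_nonneg.mpr hε.le)
  set Z := Y + R with hZ
  have hZpd : Z.PosDef := hYpd.add_posSemidef hRpsd
  set Z₁ : Matrix (Fin k) (Fin k) ℂ := Cc + (ε:ℂ) • 1 with hZ₁
  set Z₂ : Matrix (Fin k) (Fin k) ℂ := Ec + ((ε:ℂ)⁻¹ • (Dc * Dc) + (ε:ℂ) • 1) with hZ₂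
  have hZblocks : Z = Matrix.fromBlocks Z₁ 0 0 Z₂ := by
    rw [hZ, hYblocks, hRblocks, Matrix.fromBlocks_add, hZ₁, hZ₂]
    congr 1 <;> simp
  have hCcherm : Cc.IsHermitian := by
    rw [hCc, ha2, hb2]
    exact ((herm_smul_real hA.1 t).add (herm_smul_real hB.1 (1-t)))
  have hZ₁herm : Z₁.IsHermitian := by
    rw [hZ₁]
    exact hCcherm.add (herm_smul_real Matrix.isHermitian_one ε)
  have hZ₂herm : Z₂.IsHermitian := by
    have : (Matrix.fromBlocks Z₁ 0 0 Z₂).IsHermitian := hZblocks ▸ hZpd.1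
    have h22 := congrArg (fun M => M.submatrix (Sum.inr : Fin k → Fin k ⊕ Fin k) Sum.inr) this
    unfold Matrix.IsHermitian
    ext i j
    exact congrFun (congrFun h22 i) j
  -- transport to Fin (k+k) and apply operator monotonicity
  set e : Fin k ⊕ Fin k ≃ Fin (k+k) := finSumFinEquiv with he
  have hmono := hf_mono (k+k) (Y.submatrix e.symm e.symm) (Z.submatrix e.symm e.symm)
    (posDef_submatrix_equiv hYpd e.symm) (posDef_submatrix_equiv hZpd e.symm) ?hdiff
  case hdiff =>
    have hsub : Z.submatrix (e.symm : Fin (k+k) → Fin k ⊕ Fin k) e.symm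
        - Y.submatrix e.symm e.symm = (Z - Y).submatrix e.symm e.symm := by
      ext i j; simp [Matrix.sub_apply]
    rw [hsub, show Z - Y = R by rw [hZ]; abel]
    exact (Matrix.posSemidef_submatrix_equiv e.symm).mpr hRpsd
  rw [matFun_submatrix f hZpd.1 e.symm, matFun_submatrix f hYpd.1 e.symm] at hmono
  have hsub2 : (matFun f Z).submatrix (e.symm : Fin (k+k) → Fin k ⊕ Fin k) e.symm
      - (matFun f Y).submatrix e.symm e.symm
      = (matFun f Z - matFun f Y).submatrix e.symm e.symm := by
    ext i j; simp [Matrix.sub_apply]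
  rw [hsub2] at hmono
  have hbig : (matFun f Z - matFun f Y).PosSemidef :=
    (Matrix.posSemidef_submatrix_equiv e.symm).mp hmono
  -- compute the two matFun values blockwise
  have hmfZ : matFun f Z = Matrix.fromBlocks (matFun f Z₁) 0 0 (matFun f Z₂) := by
    rw [hZblocks]
    exact matFun_fromBlocks f hZ₁herm hZ₂herm
  have hmfY : matFun f Y = Matrix.fromBlocks
      (((a:ℂ)*(a:ℂ)) • matFun f A + ((b:ℂ)*(b:ℂ)) • matFun f B)
      (((a:ℂ)*(b:ℂ)) • (matFun f B - matFun f A))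
      (((a:ℂ)*(b:ℂ)) • (matFun f B - matFun f A))
      (((b:ℂ)*(b:ℂ)) • matFun f A + ((a:ℂ)*(a:ℂ)) • matFun f B) := by
    have h1 : matFun f Y = Uᴴ * matFun f X * U := by
      rw [hYdef]
      have := matFun_conj_unitary f (W := Uᴴ) (M := X)
        (by rwa [Matrix.conjTranspose_conjTranspose])
        (by rwa [Matrix.conjTranspose_conjTranspose]) hXpd.1
      rwa [Matrix.conjTranspose_conjTranspose] at this
    rw [h1, hX, matFun_fromBlocks f hA.1 hB.1, hUdef, Ub_conj_fromBlocks]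
  have hcorner : matFun f Z - matFun f Y = Matrix.fromBlocks
      (matFun f Z₁ - (((a:ℂ)*(a:ℂ)) • matFun f A + ((b:ℂ)*(b:ℂ)) • matFun f B))
      (0 - ((a:ℂ)*(b:ℂ)) • (matFun f B - matFun f A))
      (0 - ((a:ℂ)*(b:ℂ)) • (matFun f B - matFun f A))
      (matFun f Z₂ - (((b:ℂ)*(b:ℂ)) • matFun f A + ((a:ℂ)*(a:ℂ)) • matFun f B)) := by
    rw [hmfZ, hmfY]
    ext (i|i) (j|j) <;> simp [Matrix.sub_apply, Matrix.fromBlocks]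
  have hfinal := psd_toBlocks₁₁ (hcorner ▸ hbig)
  have heq : Z₁ = t • A + (1-t) • B + ε • (1 : Matrix (Fin k) (Fin k) ℂ) := by
    rw [hZ₁, hCc, ha2, hb2, real_smul_mat t A, real_smul_mat (1-t) B,
      real_smul_mat ε (1 : Matrix (Fin k) (Fin k) ℂ)]
  have heq2 : matFun f Z₁ - (((a:ℂ)*(a:ℂ)) • matFun f A + ((b:ℂ)*(b:ℂ)) • matFun f B)
      = matFun f (t • A + (1-t) • B + ε • (1 : Matrix (Fin k) (Fin k) ℂ))
        - (t • matFun f A + (1-t) • matFun f B) := by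
    rw [heq, ha2, hb2, real_smul_mat t (matFun f A), real_smul_mat (1-t) (matFun f B)]
  rwa [heq2] at hfinal

lemma rD_posDef {μ : ι → ℝ} (hμ : ∀ i, 0 < μ i) : (rD μ).PosDef :=
  Matrix.PosDef.diagonal fun i => Complex.zero_lt_real.mpr (hμ i)

lemma rD_posSemidef {μ : ι → ℝ} (hμ : ∀ i, 0 ≤ μ i) : (rD μ).PosSemidef :=
  Matrix.PosSemidef.diagonal fun i => Complex.zero_le_real.mpr (hμ i)

lemma rD_posSemidef_iff {μ : ι → ℝ} : (rD μ).PosSemidef ↔ ∀ i, 0 ≤ μ i := by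
  rw [rD, Matrix.posSemidef_diagonal_iff]
  exact forall_congr' fun i => Complex.zero_le_real

/-- scalar monotonicity from operator monotonicity -/
lemma scalar_mono {f : ℝ → ℝ} (hf_mono : OperatorMonotone f) {x y : ℝ}
    (hx : 0 < x) (hxy : x ≤ y) : f x ≤ f y := by
  have hy : 0 < y := lt_of_lt_of_le hx hxy
  have := hf_mono 1 (rD (fun _ : Fin 1 => x)) (rD (fun _ : Fin 1 => y))
    (rD_posDef fun _ => hx) (rD_posDef fun _ => hy)
    (by rw [rD_sub]; exact rD_posSemidef fun _ => by linarith)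
  rw [matFun_rD, matFun_rD, rD_sub] at this
  have := rD_posSemidef_iff.mp this (0 : Fin 1)
  linarith

/-- scalar ε-concavity -/
lemma scalar_conc {f : ℝ → ℝ} (hf_mono : OperatorMonotone f) {x y t ε : ℝ}
    (hx : 0 < x) (hy : 0 < y) (ht0 : 0 ≤ t) (ht1 : t ≤ 1) (hε : 0 < ε) :
    t * f x + (1-t) * f y ≤ f (t*x + (1-t)*y + ε) := by
  have h := conc_eps f hf_mono 1 (rD (fun _ : Fin 1 => x)) (rD (fun _ : Fin 1 => y))
    (rD_posDef fun _ => hx) (rD_posDef fun _ => hy) t ht0 ht1 ε hε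
  have h1 : (1 : Matrix (Fin 1) (Fin 1) ℂ) = rD (fun _ : Fin 1 => (1:ℝ)) := rD_one.symm
  rw [h1, rD_smul, rD_smul, rD_smul, rD_add, rD_add, matFun_rD, matFun_rD, matFun_rD,
    rD_smul, rD_smul, rD_add, rD_sub] at h
  have := rD_posSemidef_iff.mp h (0 : Fin 1)
  simp only [mul_one] at this
  linarith

/-- right continuity estimate from monotonicity + ε-concavity -/
lemma f_rightcont {f : ℝ → ℝ} (hf_mono : OperatorMonotone f) {c : ℝ} (hc : 0 < c)
    {η : ℝ} (hη : 0 < η) :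
    ∃ δ > 0, ∀ ε', 0 < ε' → ε' ≤ δ → f (c + ε') ≤ f c + η := by
  set K := f c - f (c/2) with hK
  have hK0 : 0 ≤ K := by
    have := scalar_mono hf_mono (by linarith : (0:ℝ) < c/2) (by linarith : c/2 ≤ c)
    simp [hK]; linarith
  set t := min (1/2 : ℝ) (η / (2*K+1)) with ht
  have ht0 : 0 < t := lt_min (by norm_num) (by positivity)
  have ht12 : t ≤ 1/2 := min_le_left _ _
  have htη : t * (2*K+1) ≤ η := by
    have h2 : t ≤ η / (2*K+1) := min_le_right _ _
    have : (0:ℝ) < 2*K+1 := by linarith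
    calc t * (2*K+1) ≤ (η / (2*K+1)) * (2*K+1) :=
          mul_le_mul_of_nonneg_right h2 (by linarith)
      _ = η := by field_simp
  refine ⟨t*c/8, by nlinarith [mul_pos ht0 hc], fun ε' hε'0 hε' => ?_⟩
  set z := t*(c/2) + (1-t)*(c+ε') + t*c/4 with hz
  have hz_eq : z = c - t*c/4 + (1-t)*ε' := by rw [hz]; ring
  have h1 : (1-t)*ε' ≤ ε' := by nlinarith
  have hc4 : (1-t)*ε' ≤ t*c/4 := by nlinarith
  have hzc : z ≤ c := by rw [hz_eq]; linarith
  have hz0 : 0 < z := by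
    have h5 : t*c ≤ c := by nlinarith
    have h6 : 0 ≤ (1-t)*ε' := by nlinarith
    rw [hz_eq]; linarith
  have hs := scalar_conc hf_mono (by linarith : (0:ℝ) < c/2) (by linarith : 0 < c + ε')
    ht0.le (by linarith) (by positivity : (0:ℝ) < t*c/4)
  have hfz : f z ≤ f c := by
    rcases eq_or_lt_of_le hzc with h | h
    · rw [h]
    · exact scalar_mono hf_mono hz0 hzc
  have key : t * f (c/2) + (1-t) * f (c + ε') ≤ f c := by
    rw [hz] at hfz
    exact le_trans hs hfz
  -- conclude
  set u := f (c + ε') - f c with hu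
  have h2 : (1-t) * u ≤ t * K := by simp only [hu, hK] at *; nlinarith
  by_cases hu0 : u ≤ 0
  · linarith
  · push_neg at hu0
    have h3 : u ≤ 2 * (t*K) := by nlinarith
    have : 2 * (t * K) ≤ η := by nlinarith
    linarith

lemma psd_of_forall_eps {K : Matrix ι ι ℂ} (hH : K.IsHermitian)
    (h : ∀ η : ℝ, 0 < η → (K + η • (1 : Matrix ι ι ℂ)).PosSemidef) : K.PosSemidef := by
  refine Matrix.PosSemidef.of_dotProduct_mulVec_nonneg hH (fun x => ?_)
  set s := dotProduct (star x) x with hs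
  have hs0 : 0 ≤ s := by
    have := Matrix.PosSemidef.one (n := ι) (R := ℂ) |>.dotProduct_mulVec_nonneg x
    rwa [Matrix.one_mulVec] at this
  set q := dotProduct (star x) (K *ᵥ x) with hq
  have hkey : ∀ η : ℝ, 0 < η → 0 ≤ q + (η:ℂ) * s := by
    intro η hη
    have := (h η hη).dotProduct_mulVec_nonneg x
    rwa [Matrix.add_mulVec, dotProduct_add, Matrix.smul_mulVec,
      Matrix.one_mulVec, dotProduct_smul, Complex.real_smul] at this
  rw [Complex.le_def] at hs0 ⊢
  simp only [Complex.zero_re, Complex.zero_im] at hs0 ⊢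
  obtain ⟨hsre, hsim⟩ := hs0
  have him : q.im = 0 := by
    have h1 := (Complex.le_def.mp (hkey 1 one_pos)).2
    simp only [Complex.add_im, Complex.zero_im, Complex.mul_im, Complex.ofReal_re,
      Complex.ofReal_im, Complex.ofReal_one, one_mul, zero_mul, add_zero, sub_zero] at h1
    linarith [h1, hsim.symm ▸ (rfl : s.im = s.im)]
  constructor
  · by_contra hqre
    push_neg at hqre
    have hd : 0 < 2*(s.re+1) := by linarith
    have hη : 0 < (-q.re) / (2*(s.re+1)) := div_pos (by linarith) hd
    have h2 := (Complex.le_def.mp (hkey _ hη)).1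
    simp only [Complex.add_re, Complex.zero_re, Complex.mul_re, Complex.ofReal_re,
      Complex.ofReal_im, zero_mul, sub_zero] at h2
    have hfrac : (-q.re/(2*(s.re+1))) * s.re ≤ -q.re/2 := by
      rw [div_mul_eq_mul_div, div_le_div_iff₀ hd two_pos]
      nlinarith
    linarith
  · linarith [him]

lemma posDef_smul_real {P : Matrix ι ι ℂ} (hP : P.PosDef) {c : ℝ} (hc : 0 < c) :
    (c • P).PosDef := by
  rw [real_smul_mat]
  refine Matrix.PosDef.of_dotProduct_mulVec_pos ?_ (fun x hx => ?_)
  · unfold Matrix.IsHermitian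
    rw [Matrix.conjTranspose_smul, hP.1.eq]
    congr 1
    simp [Complex.star_def, Complex.conj_ofReal]
  · rw [Matrix.smul_mulVec, dotProduct_smul, smul_eq_mul]
    exact mul_pos (Complex.zero_lt_real.mpr hc) (hP.dotProduct_mulVec_pos hx)

lemma psd_of_isEmpty [IsEmpty ι] (M : Matrix ι ι ℂ) : M.PosSemidef := by
  refine Matrix.PosSemidef.of_dotProduct_mulVec_nonneg ?_ (fun x => ?_)
  · ext i j; exact (IsEmpty.false i).elim
  · rw [dotProduct]
    simp

lemma convex_comb_posDef {A B : Matrix ι ι ℂ} (hA : A.PosDef) (hB : B.PosDef)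
    {t : ℝ} (ht0 : 0 ≤ t) (ht1 : t ≤ 1) : (t • A + (1-t) • B).PosDef := by
  rcases eq_or_lt_of_le ht1 with h | h
  · rw [h]
    simp only [one_smul, sub_self, zero_smul, add_zero]
    exact hA
  · exact Matrix.PosDef.posSemidef_add (psd_smul_real hA.posSemidef ht0)
      (posDef_smul_real hB (by linarith))

lemma conc (f : ℝ → ℝ) (hf_mono : OperatorMonotone f) (k : ℕ)
    (A B : Matrix (Fin k) (Fin k) ℂ) (hA : A.PosDef) (hB : B.PosDef)
    (t : ℝ) (ht0 : 0 ≤ t) (ht1 : t ≤ 1) :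
    (matFun f (t • A + (1-t) • B)
      - (t • matFun f A + (1-t) • matFun f B)).PosSemidef := by
  rcases isEmpty_or_nonempty (Fin k) with hk | hk
  · exact psd_of_isEmpty _
  set C := t • A + (1-t) • B with hC
  have hCpd : C.PosDef := convex_comb_posDef hA hB ht0 ht1
  set M := t • matFun f A + (1-t) • matFun f B with hM
  have hMherm : M.IsHermitian := by
    rw [hM, real_smul_mat, real_smul_mat]
    exact (herm_smul_real (matFun_herm f hA.1) t).add (herm_smul_real (matFun_herm f hB.1) (1-t))
  obtain ⟨V, hV1, hV2, hrep⟩ := herm_rep hCpd.1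
  set lam := hCpd.1.eigenvalues with hlamdef
  have hlam : ∀ i, 0 < lam i := fun i => hCpd.eigenvalues_pos i
  have hsmul1 : ∀ r : ℝ, r • (1 : Matrix (Fin k) (Fin k) ℂ) = V * rD (fun _ => r) * Vᴴ := by
    intro r
    rw [show rD (fun _ : Fin k => r) = (r:ℂ) • 1 by
        rw [rD]; exact (Matrix.smul_one_eq_diagonal ((r:ℂ))).symm,
      Matrix.mul_smul, Matrix.mul_one, Matrix.smul_mul, hV1, real_smul_mat]
  apply psd_of_forall_eps ((matFun_herm f hCpd.1).sub hMherm)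
  intro η hη
  have hδ : ∀ i : Fin k, ∃ δ > 0, ∀ ε', 0 < ε' → ε' ≤ δ → f (lam i + ε') ≤ f (lam i) + η :=
    fun i => f_rightcont hf_mono (hlam i) hη
  choose δ hδpos hδprop using hδ
  set ε := Finset.univ.inf' Finset.univ_nonempty δ with hεdef
  have hε0 : 0 < ε := by
    rw [hεdef, Finset.lt_inf'_iff]
    exact fun i _ => hδpos i
  have hεδ : ∀ i, ε ≤ δ i := fun i => Finset.inf'_le _ (Finset.mem_univ i)
  have hNe := conc_eps f hf_mono k A B hA hB t ht0 ht1 ε hε0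
  rw [← hC, ← hM] at hNe
  have h1C : C + ε • 1 = V * rD (fun i => lam i + ε) * Vᴴ := by
    rw [hsmul1 ε]
    conv_lhs => rw [hrep]
    rw [rep_add]
  have h2 : matFun f (C + ε • 1) = V * rD (fun i => f (lam i + ε)) * Vᴴ :=
    matFun_rep f hV1 hV2 h1C
  have h3 : matFun f C = V * rD (fun i => f (lam i)) * Vᴴ := matFun_rep f hV1 hV2 hrep
  have h5 : (η • (1 : Matrix (Fin k) (Fin k) ℂ)
      - (matFun f (C + ε • 1) - matFun f C)).PosSemidef := by
    rw [h2, h3, rep_sub, hsmul1 η, rep_sub]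
    exact rep_posSemidef _ fun i => by
      have := hδprop i ε hε0 (hεδ i)
      linarith
  have hcomb : matFun f C - M + η • (1 : Matrix (Fin k) (Fin k) ℂ)
      = (matFun f (C + ε • 1) - M)
        + (η • (1 : Matrix (Fin k) (Fin k) ℂ) - (matFun f (C + ε • 1) - matFun f C)) := by
    abel
  rw [hcomb]
  exact hNe.add h5

lemma matFun_g_eq (f : ℝ → ℝ) (hf_pos : ∀ s > 0, 0 < f s) {A : Matrix ι ι ℂ} (hA : A.PosDef) :
    matFun (fun s => (s-1)^2 / f s) A = (A - 1) * (matFun f A)⁻¹ * (A - 1) := by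
  obtain ⟨V, hV1, hV2, hrep⟩ := herm_rep hA.1
  set lam := hA.1.eigenvalues with hlamdef
  have hlam : ∀ i, 0 < lam i := fun i => hA.eigenvalues_pos i
  have hfne : ∀ i, f (lam i) ≠ 0 := fun i => (hf_pos _ (hlam i)).ne'
  have hsub : A - 1 = V * rD (fun i => lam i - 1) * Vᴴ := by
    rw [← rep_one hV1 (ι := ι)]
    conv_lhs => rw [hrep]
    rw [rep_sub]
  have hf : matFun f A = V * rD (fun i => f (lam i)) * Vᴴ := matFun_rep f hV1 hV2 hrep
  have hinv : (matFun f A)⁻¹ = V * rD (fun i => (f (lam i))⁻¹) * Vᴴ := by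
    rw [hf]
    exact rep_inv hV1 hV2 _ hfne
  rw [matFun_rep _ hV1 hV2 hrep, hsub, hinv, rep_mul hV2, rep_mul hV2]
  congr 2
  rw [rD, rD]
  exact congrArg Matrix.diagonal (funext fun i => congrArg Complex.ofReal
    (by rw [div_eq_mul_inv]; ring :
      (lam i - 1)^2 / f (lam i) = (lam i - 1) * (f (lam i))⁻¹ * (lam i - 1)))

theorem main_thm (f : ℝ → ℝ)
    (hf_pos : ∀ t > 0, 0 < f t) (hf_mono : OperatorMonotone f) :
    ∀ (k : ℕ) (A B : Matrix (Fin k) (Fin k) ℂ), A.PosDef → B.PosDef →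
    ∀ t : ℝ, 0 ≤ t → t ≤ 1 →
      (t • matFun (fun s => (s - 1) ^ 2 / f s) A
        + (1 - t) • matFun (fun s => (s - 1) ^ 2 / f s) B
        - matFun (fun s => (s - 1) ^ 2 / f s) (t • A + (1 - t) • B)).PosSemidef := by
  intro k A B hA hB t ht0 ht1
  have ht0' : (0:ℝ) ≤ 1 - t := by linarith
  set g : ℝ → ℝ := fun s => (s - 1) ^ 2 / f s with hg
  set C := t • A + (1 - t) • B with hC
  have hCpd : C.PosDef := convex_comb_posDef hA hB ht0 ht1
  have hfA : (matFun f A).PosDef := matFun_posDef hf_pos hA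
  have hfB : (matFun f B).PosDef := matFun_posDef hf_pos hB
  have hfC : (matFun f C).PosDef := matFun_posDef hf_pos hCpd
  have hA1 : (A - 1)ᴴ = A - 1 := by
    rw [Matrix.conjTranspose_sub, hA.1.eq, Matrix.conjTranspose_one]
  have hB1 : (B - 1)ᴴ = B - 1 := by
    rw [Matrix.conjTranspose_sub, hB.1.eq, Matrix.conjTranspose_one]
  have hC1 : (C - 1)ᴴ = C - 1 := by
    rw [Matrix.conjTranspose_sub, hCpd.1.eq, Matrix.conjTranspose_one]
  haveI := hfA.isUnit.invertible
  haveI := hfB.isUnit.invertible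
  haveI := hfC.isUnit.invertible
  have hblockA : (Matrix.fromBlocks (matFun f A) (A-1) ((A-1)ᴴ) (matFun g A)).PosSemidef := by
    rw [Matrix.PosDef.fromBlocks₁₁ _ _ hfA, hA1, matFun_g_eq f hf_pos hA, sub_self]
    exact Matrix.PosSemidef.zero
  have hblockB : (Matrix.fromBlocks (matFun f B) (B-1) ((B-1)ᴴ) (matFun g B)).PosSemidef := by
    rw [Matrix.PosDef.fromBlocks₁₁ _ _ hfB, hB1, matFun_g_eq f hf_pos hB, sub_self]
    exact Matrix.PosSemidef.zero
  have hconc := conc f hf_mono k A B hA hB t ht0 ht1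
  rw [← hC] at hconc
  have hsum : (Matrix.fromBlocks (matFun f C) (C-1) ((C-1)ᴴ)
      (t • matFun g A + (1-t) • matFun g B)).PosSemidef := by
    have h1 := psd_smul_real hblockA ht0
    have h2 := psd_smul_real hblockB ht0'
    have h3 := psd_embed₁ (κ := Fin k) hconc
    have hall := (h1.add h2).add h3
    have hshape : t • Matrix.fromBlocks (matFun f A) (A-1) ((A-1)ᴴ) (matFun g A)
        + (1-t) • Matrix.fromBlocks (matFun f B) (B-1) ((B-1)ᴴ) (matFun g B)
        + Matrix.fromBlocks (matFun f C - (t • matFun f A + (1-t) • matFun f B)) 0 0 0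
        = Matrix.fromBlocks (matFun f C) (C-1) ((C-1)ᴴ)
            (t • matFun g A + (1-t) • matFun g B) := by
      rw [Matrix.fromBlocks_smul, Matrix.fromBlocks_smul, Matrix.fromBlocks_add,
        Matrix.fromBlocks_add, Matrix.fromBlocks_inj]
      refine ⟨by abel, ?_, ?_, by abel⟩
      · rw [hC]; module
      · rw [hA1, hB1, hC1, hC]; module
    rw [← hshape]
    exact hall
  rw [Matrix.PosDef.fromBlocks₁₁ _ _ hfC, hC1] at hsum
  rwa [matFun_g_eq f hf_pos hCpd]

end Aux

/-- If `f : (0,∞) → (0,∞)` is operator monotone, then `h(t) = (t-1)²/f(t)` is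
operator convex on `(0,∞)`. -/
theorem operatorConvex_sq_sub_one_div_of_operatorMonotone (f : ℝ → ℝ)
    (hf_pos : ∀ t > 0, 0 < f t) (hf_mono : OperatorMonotone f) :
    OperatorConvex (fun t => (t - 1) ^ 2 / f t) := by
  intro k A B hA hB t ht0 ht1
  exact main_thm f hf_pos hf_mono k A B hA hB t ht0 ht1
end

section
/- Let f : (0,∞) → (0,∞) be operator monotone. Then the function h₃(t) = 1/f(t), defined for t > 0, is operator convex. -/
open Matrix Kronecker ComplexOrder

namespace OC

variable {ι : Type} [Fintype ι] [DecidableEq ι]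

lemma sum_smul_vecMulVec (V : Matrix ι ι ℂ) (c : ι → ℂ) :
    (∑ i, c i • vecMulVec (fun a => V a i) (star fun a => V a i)) = V * diagonal c * Vᴴ := by
  ext a b
  have hR : (V * diagonal c * Vᴴ) a b = ∑ j, V a j * c j * (starRingEnd ℂ) (V b j) := by
    rw [Matrix.mul_apply]
    exact Finset.sum_congr rfl fun j _ => by
      rw [Matrix.mul_diagonal, conjTranspose_apply, RCLike.star_def]
  rw [hR]
  simp only [Matrix.sum_apply, Matrix.smul_apply, vecMulVec_apply, Pi.star_apply,
    RCLike.star_def, smul_eq_mul]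
  exact Finset.sum_congr rfl fun i _ => by ring

theorem matFun_eq {M : Matrix ι ι ℂ} (g : ℝ → ℝ) (V : Matrix ι ι ℂ) (μ : ι → ℝ)
    (hV : Vᴴ * V = 1) (hMV : M * V = V * diagonal (fun i => (μ i : ℂ))) :
    matFun g M = V * diagonal (fun i => (g (μ i) : ℂ)) * Vᴴ := by
  have hVV : V * Vᴴ = 1 := mul_eq_one_comm.mp hV
  have hrep : M = V * diagonal (fun i => (μ i : ℂ)) * Vᴴ := by
    calc M = (M * V) * Vᴴ := by rw [mul_assoc, hVV, mul_one]
    _ = _ := by rw [hMV]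
  have hdiagstar : ∀ (w : ι → ℝ),
      star (fun i => ((w i : ℂ))) = fun i => ((w i : ℂ)) := by
    intro w; funext i; simp [Complex.conj_ofReal]
  have hM : M.IsHermitian := by
    rw [hrep]
    unfold Matrix.IsHermitian
    rw [conjTranspose_mul, conjTranspose_mul, conjTranspose_conjTranspose,
      diagonal_conjTranspose, hdiagstar, mul_assoc]
  -- spectral data
  set W : Matrix ι ι ℂ := (hM.eigenvectorUnitary : Matrix ι ι ℂ) with hWdef
  set ν : ι → ℝ := hM.eigenvalues with hνdef
  have hW : Wᴴ * W = 1 := by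
    simpa [Matrix.star_eq_conjTranspose] using Unitary.coe_star_mul_self hM.eigenvectorUnitary
  have hWW : W * Wᴴ = 1 := mul_eq_one_comm.mp hW
  have hMW : M = W * diagonal (fun i => (ν i : ℂ)) * Wᴴ := by
    simpa [Function.comp_def, Matrix.star_eq_conjTranspose] using hM.spectral_theorem
  have hmf : matFun g M = W * diagonal (fun i => (g (ν i) : ℂ)) * Wᴴ := by
    rw [matFun, dif_pos hM, ← sum_smul_vecMulVec]
    congr 1
  -- uniqueness argument
  set S : Matrix ι ι ℂ := Wᴴ * V with hSdef
  have hS1 : Sᴴ * S = 1 := by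
    rw [hSdef, conjTranspose_mul, conjTranspose_conjTranspose, mul_assoc, ← mul_assoc W, hWW,
      one_mul, hV]
  have hSS : S * Sᴴ = 1 := mul_eq_one_comm.mp hS1
  have hWS : W * S = V := by rw [hSdef, ← mul_assoc, hWW, one_mul]
  have hSD : S * diagonal (fun i => (μ i : ℂ)) = diagonal (fun i => (ν i : ℂ)) * S := by
    have h1 : Wᴴ * M = diagonal (fun i => (ν i : ℂ)) * Wᴴ := by
      rw [hMW, ← mul_assoc, ← mul_assoc, hW, one_mul]
    calc S * diagonal (fun i => (μ i : ℂ)) = Wᴴ * (V * diagonal (fun i => (μ i : ℂ))) := by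
          rw [hSdef, mul_assoc]
    _ = Wᴴ * (M * V) := by rw [hMV]
    _ = (Wᴴ * M) * V := by rw [mul_assoc]
    _ = diagonal (fun i => (ν i : ℂ)) * S := by rw [h1, hSdef, mul_assoc]
  have hSg : S * diagonal (fun i => (g (μ i) : ℂ)) = diagonal (fun i => (g (ν i) : ℂ)) * S := by
    ext i j
    rw [Matrix.mul_diagonal, Matrix.diagonal_mul]
    rcases eq_or_ne (S i j) 0 with h0 | h0
    · rw [h0, zero_mul, mul_zero]
    · have := congrFun (congrFun hSD i) j
      rw [Matrix.mul_diagonal, Matrix.diagonal_mul] at this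
      have hμν : μ j = ν i := by
        have h2 : (μ j : ℂ) * S i j = (ν i : ℂ) * S i j := by
          rw [mul_comm ((μ j : ℂ))]; exact this
        exact_mod_cast mul_right_cancel₀ h0 h2
      rw [hμν, mul_comm]
  have key : S * diagonal (fun i => (g (μ i) : ℂ)) * Sᴴ = diagonal (fun i => (g (ν i) : ℂ)) := by
    rw [hSg, mul_assoc, hSS, mul_one]
  calc matFun g M = W * diagonal (fun i => (g (ν i) : ℂ)) * Wᴴ := hmf
  _ = W * (S * diagonal (fun i => (g (μ i) : ℂ)) * Sᴴ) * Wᴴ := by rw [key]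
  _ = (W * S) * diagonal (fun i => (g (μ i) : ℂ)) * (Sᴴ * Wᴴ) := by noncomm_ring
  _ = V * diagonal (fun i => (g (μ i) : ℂ)) * Vᴴ := by rw [hWS, ← conjTranspose_mul, hWS]

lemma posDef_conj {A B : Matrix ι ι ℂ} (hA : A.PosDef) (hB : B * Bᴴ = 1) :
    (B * A * Bᴴ).PosDef := by
  refine .of_dotProduct_mulVec_pos (hA.posSemidef.mul_mul_conjTranspose_same B).1 fun x hx => ?_
  have hx' : Bᴴ *ᵥ x ≠ 0 := by
    intro hc
    apply hx
    calc x = (B * Bᴴ) *ᵥ x := by rw [hB, one_mulVec]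
    _ = B *ᵥ (Bᴴ *ᵥ x) := (mulVec_mulVec _ _ _).symm
    _ = 0 := by rw [hc, mulVec_zero]
  simpa only [star_mulVec, dotProduct_mulVec, vecMul_vecMul, conjTranspose_conjTranspose] using hA.dotProduct_mulVec_pos hx'

structure UD (M : Matrix ι ι ℂ) where
  V : Matrix ι ι ℂ
  μ : ι → ℝ
  hV : Vᴴ * V = 1
  hMV : M * V = V * diagonal (fun i => (μ i : ℂ))

namespace UD
variable {M : Matrix ι ι ℂ} (h : UD M)

lemma hVV : h.V * h.Vᴴ = 1 := mul_eq_one_comm.mp h.hV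

/-- matrix with the same eigenvectors and modified eigenvalues -/
noncomputable def md (w : ι → ℝ) : Matrix ι ι ℂ := h.V * diagonal (fun i => (w i : ℂ)) * h.Vᴴ

lemma matFun_md (g : ℝ → ℝ) : matFun g M = h.md (fun i => g (h.μ i)) :=
  matFun_eq g h.V h.μ h.hV h.hMV

lemma rep : M = h.md h.μ := by
  calc M = (M * h.V) * h.Vᴴ := by rw [mul_assoc, h.hVV, mul_one]
  _ = _ := by rw [h.hMV]; rfl

lemma md_mul (w w' : ι → ℝ) : h.md w * h.md w' = h.md (fun i => w i * w' i) := by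
  unfold md
  calc h.V * diagonal (fun i => (w i : ℂ)) * h.Vᴴ * (h.V * diagonal (fun i => (w' i : ℂ)) * h.Vᴴ)
      = h.V * (diagonal (fun i => (w i : ℂ)) * (h.Vᴴ * h.V) * diagonal (fun i => (w' i : ℂ))) * h.Vᴴ := by
        noncomm_ring
  _ = _ := by rw [h.hV, mul_one, diagonal_mul_diagonal]; push_cast; rfl

noncomputable def md_ud (w : ι → ℝ) : UD (h.md w) := ⟨h.V, w, h.hV, by
  unfold md
  rw [mul_assoc, h.hV, mul_one]⟩

lemma md_add (w w' : ι → ℝ) : h.md w + h.md w' = h.md (fun i => w i + w' i) := by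
  unfold md
  rw [← add_mul, ← mul_add, diagonal_add]
  push_cast
  rfl

lemma md_sub (w w' : ι → ℝ) : h.md w - h.md w' = h.md (fun i => w i - w' i) := by
  unfold md
  rw [← sub_mul, ← mul_sub, diagonal_sub]
  push_cast
  rfl

lemma md_smul (r : ℝ) (w : ι → ℝ) : r • h.md w = h.md (fun i => r * w i) := by
  have hd : (r • fun i => ((w i : ℝ) : ℂ)) = fun i => (((r * w i : ℝ)) : ℂ) := by
    funext i
    rw [Pi.smul_apply, Complex.real_smul]
    push_cast
    rfl
  unfold md
  rw [← Matrix.smul_mul, ← Matrix.mul_smul, ← diagonal_smul, hd]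

lemma md_one : h.md (fun _ => 1) = 1 := by
  unfold md
  rw [show (fun i : ι => ((1 : ℝ) : ℂ)) = fun _ => (1 : ℂ) by push_cast; rfl, diagonal_one,
    mul_one, h.hVV]

lemma md_herm (w : ι → ℝ) : (h.md w).IsHermitian := by
  unfold md
  unfold Matrix.IsHermitian
  rw [conjTranspose_mul, conjTranspose_mul, conjTranspose_conjTranspose, diagonal_conjTranspose]
  rw [show (star fun i => ((w i : ℝ) : ℂ)) = fun i => ((w i : ℝ) : ℂ) by
    funext i; simp [Complex.conj_ofReal]]
  rw [mul_assoc]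

lemma md_psd {w : ι → ℝ} (hw : ∀ i, 0 ≤ w i) : (h.md w).PosSemidef := by
  refine Matrix.PosSemidef.mul_mul_conjTranspose_same (Matrix.PosSemidef.diagonal ?_) h.V
  intro i
  rw [Pi.zero_apply, Complex.zero_le_real]
  exact hw i

lemma md_pd {w : ι → ℝ} (hw : ∀ i, 0 < w i) : (h.md w).PosDef := by
  refine posDef_conj ?_ h.hVV
  rw [Matrix.posDef_diagonal_iff]
  exact fun i => by rw [Complex.zero_lt_real]; exact hw i

lemma col_mulVec (i : ι) : M *ᵥ (fun a => h.V a i) = ((h.μ i : ℂ)) • (fun a => h.V a i) := by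
  funext b
  have h1 := congrFun (congrFun h.hMV b) i
  rw [Matrix.mul_apply, Matrix.mul_diagonal] at h1
  calc (M *ᵥ fun a => h.V a i) b = ∑ j, M b j * h.V j i := by
        rw [Matrix.mulVec, dotProduct]
  _ = h.V b i * (h.μ i : ℂ) := h1
  _ = _ := by simp [mul_comm]

lemma col_dot (i : ι) : star (fun a => h.V a i) ⬝ᵥ (fun a => h.V a i) = 1 := by
  have h1 := congrFun (congrFun h.hV i) i
  rw [Matrix.mul_apply, Matrix.one_apply_eq] at h1
  calc star (fun a => h.V a i) ⬝ᵥ (fun a => h.V a i)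
      = ∑ a, (h.V)ᴴ i a * h.V a i := by
        simp [dotProduct, conjTranspose_apply]
  _ = 1 := h1

lemma col_ne_zero (i : ι) : (fun a => h.V a i) ≠ 0 := by
  intro hc
  have := h.col_dot i
  rw [hc] at this
  simp at this

lemma quad_col (i : ι) : star (fun a => h.V a i) ⬝ᵥ (M *ᵥ (fun a => h.V a i)) = ((h.μ i : ℂ)) := by
  rw [h.col_mulVec i, dotProduct_smul, smul_eq_mul, h.col_dot i, mul_one]

lemma mu_nonneg (hM : M.PosSemidef) (i : ι) : 0 ≤ h.μ i := by
  have := hM.dotProduct_mulVec_nonneg (fun a => h.V a i)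
  rw [h.quad_col i, Complex.zero_le_real] at this
  exact this

lemma mu_pos (hM : M.PosDef) (i : ι) : 0 < h.μ i := by
  have := hM.dotProduct_mulVec_pos (h.col_ne_zero i)
  rw [h.quad_col i, Complex.zero_lt_real] at this
  exact this

end UD

noncomputable def UD.of {M : Matrix ι ι ℂ} (hM : M.IsHermitian) : UD M := by
  refine ⟨(hM.eigenvectorUnitary : Matrix ι ι ℂ), hM.eigenvalues, ?_, ?_⟩
  · simpa [Matrix.star_eq_conjTranspose] using Unitary.coe_star_mul_self hM.eigenvectorUnitary
  · have hMW : M = (hM.eigenvectorUnitary : Matrix ι ι ℂ)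
        * diagonal (fun i => (hM.eigenvalues i : ℂ))
        * (hM.eigenvectorUnitary : Matrix ι ι ℂ)ᴴ := by
      simpa [Function.comp_def, Matrix.star_eq_conjTranspose] using hM.spectral_theorem
    have hW : (hM.eigenvectorUnitary : Matrix ι ι ℂ)ᴴ * (hM.eigenvectorUnitary : Matrix ι ι ℂ) = 1 := by
      simpa [Matrix.star_eq_conjTranspose] using Unitary.coe_star_mul_self hM.eigenvectorUnitary
    have h2 := congrArg (fun X => X * (hM.eigenvectorUnitary : Matrix ι ι ℂ)) hMW
    rw [mul_assoc, hW, mul_one] at h2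
    exact h2

noncomputable def UD.build (V : Matrix ι ι ℂ) (μ : ι → ℝ) (hV : Vᴴ * V = 1) :
    UD (V * diagonal (fun i => (μ i : ℂ)) * Vᴴ) :=
  ⟨V, μ, hV, by rw [mul_assoc (V * diagonal fun i => (μ i : ℂ)), hV, mul_one]⟩

noncomputable def UD.submatrix {κ : Type} [Fintype κ] [DecidableEq κ] {M : Matrix ι ι ℂ}
    (h : UD M) (e : κ ≃ ι) : UD (M.submatrix e e) := by
  refine ⟨h.V.submatrix e e, h.μ ∘ e, ?_, ?_⟩
  · rw [conjTranspose_submatrix, submatrix_mul_equiv, h.hV, submatrix_one_equiv]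
  · rw [submatrix_mul_equiv, h.hMV, ← submatrix_mul_equiv (e₂ := e)]
    congr 1
    rw [submatrix_diagonal_equiv]
    rfl

lemma UD.submatrix_md {κ : Type} [Fintype κ] [DecidableEq κ] {M : Matrix ι ι ℂ}
    (h : UD M) (e : κ ≃ ι) (w : ι → ℝ) :
    (h.submatrix e).md (w ∘ e) = (h.md w).submatrix e e := by
  dsimp only [md, UD.submatrix]
  rw [conjTranspose_submatrix]
  rw [show (fun i => ((w ∘ ⇑e) i : ℂ)) = ((fun i => ((w i) : ℂ)) ∘ ⇑e) from rfl]
  rw [← submatrix_diagonal_equiv, submatrix_mul_equiv, submatrix_mul_equiv]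

lemma matFun_submatrix {κ : Type} [Fintype κ] [DecidableEq κ] {M : Matrix ι ι ℂ}
    (hM : M.IsHermitian) (e : κ ≃ ι) (g : ℝ → ℝ) :
    matFun g (M.submatrix e e) = (matFun g M).submatrix e e := by
  have h := UD.of hM
  rw [(h.submatrix e).matFun_md g, h.matFun_md g, ← h.submatrix_md e]
  rfl

lemma quad_submatrix {κ : Type} [Fintype κ] [DecidableEq κ] (M : Matrix ι ι ℂ) (e : κ ≃ ι)
    (x : κ → ℂ) :
    star x ⬝ᵥ (M.submatrix e e *ᵥ x) = star (fun i => x (e.symm i)) ⬝ᵥ (M *ᵥ fun i => x (e.symm i)) := by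
  rw [dotProduct, dotProduct]
  rw [← Equiv.sum_comp e (fun i => (star fun i => x (e.symm i)) i * (M *ᵥ fun i => x (e.symm i)) i)]
  refine Finset.sum_congr rfl fun a _ => ?_
  simp only [Pi.star_apply, Equiv.symm_apply_apply, Matrix.mulVec, dotProduct,
    submatrix_apply]
  congr 1
  rw [← Equiv.sum_comp e (fun j => M (e a) j * x (e.symm j))]
  exact Finset.sum_congr rfl fun b _ => by rw [Equiv.symm_apply_apply]

lemma sub_submatrix {κ : Type} [Fintype κ] [DecidableEq κ] (A B : Matrix ι ι ℂ) (e : κ ≃ ι) :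
    A.submatrix e e - B.submatrix e e = (A - B).submatrix e e := by
  ext i j
  simp [submatrix_apply, Matrix.sub_apply]

lemma posDef_submatrix_equiv {κ : Type} [Fintype κ] [DecidableEq κ] {M : Matrix ι ι ℂ}
    (hM : M.PosDef) (e : κ ≃ ι) : (M.submatrix e e).PosDef := by
  refine .of_dotProduct_mulVec_pos ?_ fun x hx => ?_
  · have := hM.1
    unfold Matrix.IsHermitian at this ⊢
    rw [conjTranspose_submatrix, this]
  · rw [quad_submatrix]
    refine hM.dotProduct_mulVec_pos fun hc => hx ?_
    funext a
    have := congrFun hc (e a)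
    simpa using this

/-- transport of operator monotonicity to arbitrary index types -/
lemma mono {f : ℝ → ℝ} (hf : OperatorMonotone f) {A B : Matrix ι ι ℂ}
    (hA : A.PosDef) (hB : B.PosDef) (hAB : (B - A).PosSemidef) :
    (matFun f B - matFun f A).PosSemidef := by
  have e : Fin (Fintype.card ι) ≃ ι := (Fintype.equivFin ι).symm
  have h1 := hf (Fintype.card ι) (A.submatrix e e) (B.submatrix e e)
    (posDef_submatrix_equiv hA e) (posDef_submatrix_equiv hB e)
    (by rw [sub_submatrix]; exact ((B - A)).posSemidef_submatrix_equiv e |>.mpr hAB)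
  rw [matFun_submatrix hA.1 e, matFun_submatrix hB.1 e, sub_submatrix] at h1
  exact (Matrix.posSemidef_submatrix_equiv e).mp h1

lemma psd_diag {M : Matrix ι ι ℂ} (hM : M.PosSemidef) (i : ι) : 0 ≤ M i i := by
  have := hM.dotProduct_mulVec_nonneg (Pi.single i 1)
  simpa [dotProduct, Matrix.mulVec, Pi.single_apply] using this

lemma scalar_mono {f : ℝ → ℝ} (hf : OperatorMonotone f) {a b : ℝ} (ha : 0 < a) (hab : a ≤ b) :
    f a ≤ f b := by
  have hb : 0 < b := lt_of_lt_of_le ha hab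
  set A : Matrix (Fin 1) (Fin 1) ℂ := diagonal (fun _ => ((a : ℝ) : ℂ)) with hAdef
  set B : Matrix (Fin 1) (Fin 1) ℂ := diagonal (fun _ => ((b : ℝ) : ℂ)) with hBdef
  have hApd : A.PosDef := by
    rw [hAdef, Matrix.posDef_diagonal_iff]
    exact fun _ => by rw [Complex.zero_lt_real]; exact ha
  have hBpd : B.PosDef := by
    rw [hBdef, Matrix.posDef_diagonal_iff]
    exact fun _ => by rw [Complex.zero_lt_real]; exact hb
  have hBA : (B - A).PosSemidef := by
    have : B - A = diagonal (fun _ : Fin 1 => (((b - a : ℝ)) : ℂ)) := by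
      rw [hAdef, hBdef, diagonal_sub]
      push_cast
      rfl
    rw [this]
    refine Matrix.PosSemidef.diagonal fun i => ?_
    rw [Pi.zero_apply, Complex.zero_le_real]
    linarith
  have h2 := hf 1 A B hApd hBpd hBA
  have h3 := psd_diag h2 0
  have hmfA : matFun f A = diagonal (fun _ : Fin 1 => ((f a : ℝ) : ℂ)) := by
    have h4 := matFun_eq (M := A) f (1 : Matrix (Fin 1) (Fin 1) ℂ) (fun _ => a) (by simp)
      (by simp [hAdef])
    simpa using h4
  have hmfB : matFun f B = diagonal (fun _ : Fin 1 => ((f b : ℝ) : ℂ)) := by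
    have h4 := matFun_eq (M := B) f (1 : Matrix (Fin 1) (Fin 1) ℂ) (fun _ => b) (by simp)
      (by simp [hBdef])
    simpa using h4
  rw [Matrix.sub_apply, hmfA, hmfB] at h3
  simp only [Matrix.diagonal_apply_eq] at h3
  rw [← Complex.ofReal_sub, Complex.zero_le_real] at h3
  linarith

lemma diag2 (x y : ℝ) : diagonal (fun i => ((![x, y] i : ℝ) : ℂ)) =
    !![((x : ℝ) : ℂ), 0; 0, ((y : ℝ) : ℂ)] := by
  ext i j
  fin_cases i <;> fin_cases j <;> simp [Matrix.diagonal_apply]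

lemma rotA (c s p q : ℝ) :
    !![((c : ℝ) : ℂ), ((-s : ℝ) : ℂ); ((s : ℝ) : ℂ), ((c : ℝ) : ℂ)] *
      Matrix.diagonal (fun i => ((![p, q] i : ℝ) : ℂ)) *
      (!![((c : ℝ) : ℂ), ((-s : ℝ) : ℂ); ((s : ℝ) : ℂ), ((c : ℝ) : ℂ)])ᴴ =
    !![((p * c^2 + q * s^2 : ℝ) : ℂ), ((c * s * (p - q) : ℝ) : ℂ);
      ((c * s * (p - q) : ℝ) : ℂ), ((p * s^2 + q * c^2 : ℝ) : ℂ)] := by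
  rw [diag2]
  ext i j
  fin_cases i <;> fin_cases j <;>
    simp [Matrix.mul_apply, Fin.sum_univ_two, Matrix.conjTranspose_apply, Complex.conj_ofReal] <;>
    push_cast <;> ring

lemma upperX (a b : ℝ) :
    (!![((a : ℝ) : ℂ), ((b : ℝ) : ℂ); 0, 1])ᴴ * !![((a : ℝ) : ℂ), ((b : ℝ) : ℂ); 0, 1] =
    !![((a * a : ℝ) : ℂ), ((a * b : ℝ) : ℂ); ((a * b : ℝ) : ℂ), ((b * b + 1 : ℝ) : ℂ)] := by
  ext i j
  fin_cases i <;> fin_cases j <;>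
    simp [Matrix.mul_apply, Fin.sum_univ_two, Matrix.conjTranspose_apply, Complex.conj_ofReal] <;>
    push_cast <;> ring

lemma sub2 (a b c d a' b' c' d' : ℂ) :
    !![a, b; c, d] - !![a', b'; c', d'] = !![a - a', b - b'; c - c', d - d'] := by
  ext i j
  fin_cases i <;> fin_cases j <;> simp

set_option maxHeartbeats 2000000 in
lemma rcont {f : ℝ → ℝ} (hf : OperatorMonotone f)
    {x₀ : ℝ} (hx₀ : 0 < x₀) {δ : ℝ} (hδ : 0 < δ) :
    ∃ ε > 0, f (x₀ + ε) < f x₀ + δ := by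
  by_contra hcon
  push_neg at hcon
  set p := x₀ / 2 with hpdef
  have hp : 0 < p := by positivity
  set F := f x₀ - f p with hFdef
  have hF0 : 0 ≤ F := sub_nonneg.mpr (scalar_mono hf hp (by rw [hpdef]; linarith))
  set γ := min (1/2) (δ / (2 * (F + 1))) with hγdef
  have hγpos : 0 < γ := lt_min (by norm_num) (by positivity)
  have hγhalf : γ ≤ 1/2 := min_le_left _ _
  have hγδ : γ * (2 * (F + 1)) ≤ δ := by
    have h2F : (0:ℝ) < 2 * (F + 1) := by linarith
    calc γ * (2 * (F + 1)) ≤ (δ / (2 * (F + 1))) * (2 * (F + 1)) := by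
          exact mul_le_mul_of_nonneg_right (min_le_right _ _) h2F.le
    _ = δ := by field_simp
  set c := Real.sqrt γ with hcdef
  set s := Real.sqrt (1 - γ) with hsdef
  have hc2 : c^2 = γ := Real.sq_sqrt (le_of_lt hγpos)
  have hs2 : s^2 = 1 - γ := Real.sq_sqrt (by linarith)
  set ε := γ * x₀ / 4 with hεdef
  have hε : 0 < ε := by positivity
  set q := x₀ + ε with hqdef
  have hq : 0 < q := by positivity
  have hfq : f x₀ + δ ≤ f q := hcon ε hε
  -- the rotation matrix
  set V : Matrix (Fin 2) (Fin 2) ℂ :=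
    !![((c : ℝ) : ℂ), ((-s : ℝ) : ℂ); ((s : ℝ) : ℂ), ((c : ℝ) : ℂ)] with hVdef
  have hV : Vᴴ * V = 1 := by
    ext i j
    fin_cases i <;> fin_cases j <;>
      simp [hVdef, Matrix.mul_apply, Fin.sum_univ_two, Matrix.conjTranspose_apply,
        Complex.conj_ofReal, Matrix.one_apply] <;>
      push_cast <;> norm_cast <;> nlinarith [hc2, hs2]
  set A : Matrix (Fin 2) (Fin 2) ℂ := V * diagonal (fun i => ((![p, q] i : ℝ) : ℂ)) * Vᴴ
    with hAdef
  have hApd : A.PosDef := (UD.build V ![p, q] hV).md_pd (w := ![p, q]) (by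
    intro i
    fin_cases i
    · exact hp
    · exact hq)
  have hAeq : A = !![((p * c^2 + q * s^2 : ℝ) : ℂ), ((c * s * (p - q) : ℝ) : ℂ);
      ((c * s * (p - q) : ℝ) : ℂ), ((p * s^2 + q * c^2 : ℝ) : ℂ)] := by
    rw [hAdef, hVdef]
    exact rotA c s p q
  set α : ℝ := x₀ - (p * c^2 + q * s^2) with hαdef
  have hαval : α = x₀ * γ * (1 + γ) / 4 := by
    rw [hαdef, hc2, hs2, hqdef, hεdef, hpdef]
    ring
  have hαpos : 0 < α := by
    rw [hαval]
    have h1γ : 0 < 1 + γ := by linarith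
    positivity
  set β : ℝ := c * s * (q - p) with hβdef
  set a11 : ℝ := p * s^2 + q * c^2 with ha11def
  have ha11pos : 0 < a11 := by
    rw [ha11def, hc2, hs2]
    nlinarith [hp, hq, hγpos, hγhalf]
  set L : ℝ := a11 + β^2 / α + 1 with hLdef
  have hLpos : 0 < L := by
    have hba : 0 ≤ β^2 / α := by positivity
    rw [hLdef]; linarith
  set B : Matrix (Fin 2) (Fin 2) ℂ := !![((x₀ : ℝ) : ℂ), 0; 0, ((L : ℝ) : ℂ)] with hBdef
  have hBpd : B.PosDef := by
    rw [hBdef, ← diag2, Matrix.posDef_diagonal_iff]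
    intro i
    fin_cases i <;> rw [Complex.zero_lt_real]
    · exact hx₀
    · exact hLpos
  have hsqα : Real.sqrt α * Real.sqrt α = α := Real.mul_self_sqrt hαpos.le
  have hsqαne : Real.sqrt α ≠ 0 := by
    intro hc0
    rw [hc0, mul_zero] at hsqα
    exact absurd hsqα.symm (ne_of_gt hαpos)
  have hBA : (B - A).PosSemidef := by
    have e1 : Real.sqrt α * Real.sqrt α = α := hsqα
    have e2 : Real.sqrt α * (β / Real.sqrt α) = β := by field_simp
    have e3 : (β / Real.sqrt α) * (β / Real.sqrt α) + 1 = L - a11 := by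
      rw [hLdef]
      field_simp
      rw [Real.sq_sqrt hαpos.le]
      ring
    have E00 : ((x₀ : ℝ) : ℂ) - ((p * c^2 + q * s^2 : ℝ) : ℂ) = ((α : ℝ) : ℂ) := by
      rw [hαdef]; push_cast; ring
    have E01 : (0 : ℂ) - ((c * s * (p - q) : ℝ) : ℂ) = ((β : ℝ) : ℂ) := by
      rw [hβdef]; push_cast; ring
    have E11 : ((L : ℝ) : ℂ) - ((p * s^2 + q * c^2 : ℝ) : ℂ) = ((L - a11 : ℝ) : ℂ) := by
      rw [ha11def]; push_cast; ring
    have heq : B - A = (!![((Real.sqrt α : ℝ) : ℂ), ((β / Real.sqrt α : ℝ) : ℂ); 0, 1])ᴴ *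
        !![((Real.sqrt α : ℝ) : ℂ), ((β / Real.sqrt α : ℝ) : ℂ); 0, 1] := by
      calc B - A = !![((α : ℝ) : ℂ), ((β : ℝ) : ℂ); ((β : ℝ) : ℂ), ((L - a11 : ℝ) : ℂ)] := by
            rw [hAeq, hBdef, sub2, E00, E01, E11]
      _ = _ := by rw [upperX, e1, e2, e3]
    rw [heq]
    exact Matrix.posSemidef_conjTranspose_mul_self _
  have hmono := mono hf hApd hBpd hBA
  have h3 := psd_diag hmono 0
  have hfA : matFun f A = !![((f p * c^2 + f q * s^2 : ℝ) : ℂ), ((c * s * (f p - f q) : ℝ) : ℂ);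
      ((c * s * (f p - f q) : ℝ) : ℂ), ((f p * s^2 + f q * c^2 : ℝ) : ℂ)] := by
    have hMV : A * V = V * diagonal (fun i => ((![p, q] i : ℝ) : ℂ)) := by
      rw [hAdef, mul_assoc (V * diagonal (fun i => ((![p, q] i : ℝ) : ℂ))), hV, mul_one]
    have h4 := matFun_eq (M := A) f V ![p, q] hV hMV
    have h5 : (fun i => ((f (![p, q] i) : ℝ) : ℂ)) = fun i => ((![f p, f q] i : ℝ) : ℂ) := by
      funext i
      fin_cases i <;> simp
    rw [h4, h5, hVdef]
    exact rotA c s (f p) (f q)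
  have hfB : matFun f B = !![((f x₀ : ℝ) : ℂ), 0; 0, ((f L : ℝ) : ℂ)] := by
    have hMV : B * 1 = 1 * diagonal (fun i => ((![x₀, L] i : ℝ) : ℂ)) := by
      rw [mul_one, one_mul, diag2, hBdef]
    have h4 := matFun_eq (M := B) f 1 ![x₀, L] (by simp) hMV
    have h5 : (fun i => ((f (![x₀, L] i) : ℝ) : ℂ)) = fun i => ((![f x₀, f L] i : ℝ) : ℂ) := by
      funext i
      fin_cases i <;> simp
    rw [h4, h5, diag2]
    simp
  rw [Matrix.sub_apply, hfA, hfB] at h3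
  simp only [Matrix.cons_val', Matrix.cons_val_zero, Matrix.empty_val',
    Matrix.cons_val_fin_one, Matrix.of_apply] at h3
  rw [show ((f x₀ : ℝ) : ℂ) - ((f p * c^2 + f q * s^2 : ℝ) : ℂ)
      = ((f x₀ - (f p * c^2 + f q * s^2) : ℝ) : ℂ) by push_cast; ring,
    Complex.zero_le_real] at h3
  -- final contradiction
  rw [hc2, hs2] at h3
  have hfp : f p = f x₀ - F := by rw [hFdef]; ring
  rw [hfp] at h3
  nlinarith [h3, hfq, hγδ, hγpos, hγhalf, hF0, hδ, mul_nonneg hF0 hγpos.le]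

lemma UD.md_congr {M : Matrix ι ι ℂ} (h : UD M) {w w' : ι → ℝ} (he : ∀ i, w i = w' i) :
    h.md w = h.md w' := by
  have : w = w' := funext he
  rw [this]

lemma UD.md_mul_self {M : Matrix ι ι ℂ} (h : UD M) (w : ι → ℝ) :
    h.md w * M = h.md (fun i => w i * h.μ i) := by
  have e := congrArg (fun X => h.md w * X) h.rep
  rw [e, h.md_mul]

lemma UD.self_mul_md {M : Matrix ι ι ℂ} (h : UD M) (w : ι → ℝ) :
    M * h.md w = h.md (fun i => h.μ i * w i) := by
  have e := congrArg (fun X => X * h.md w) h.rep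
  rw [e, h.md_mul]

lemma UD.inv_md {M : Matrix ι ι ℂ} (h : UD M) (hw : ∀ i, h.μ i ≠ 0) :
    M⁻¹ = h.md (fun i => (h.μ i)⁻¹) := by
  apply Matrix.inv_eq_left_inv
  rw [h.md_mul_self, h.md_congr (w' := fun _ => 1) (fun i => inv_mul_cancel₀ (hw i)), h.md_one]

lemma posDef_conj'' {A B C : Matrix ι ι ℂ} (hA : A.PosDef) (hBC : C * Bᴴ = 1) :
    (B * A * Bᴴ).PosDef := by
  refine .of_dotProduct_mulVec_pos (hA.posSemidef.mul_mul_conjTranspose_same B).1 fun x hx => ?_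
  have hx' : Bᴴ *ᵥ x ≠ 0 := by
    intro hc
    apply hx
    calc x = (C * Bᴴ) *ᵥ x := by rw [hBC, one_mulVec]
    _ = C *ᵥ (Bᴴ *ᵥ x) := (mulVec_mulVec _ _ _).symm
    _ = 0 := by rw [hc, mulVec_zero]
  simpa only [star_mulVec, dotProduct_mulVec, vecMul_vecMul, conjTranspose_conjTranspose] using
    hA.dotProduct_mulVec_pos hx'

lemma psd_smul {r : ℝ} (hr : 0 ≤ r) {M : Matrix ι ι ℂ} (hM : M.PosSemidef) :
    (r • M).PosSemidef := by
  have h := UD.of hM.1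
  rw [h.rep, h.md_smul]
  exact h.md_psd fun i => mul_nonneg hr (h.mu_nonneg hM i)

lemma pd_smul {r : ℝ} (hr : 0 < r) {M : Matrix ι ι ℂ} (hM : M.PosDef) :
    (r • M).PosDef := by
  have h := UD.of hM.1
  rw [h.rep, h.md_smul]
  exact h.md_pd fun i => mul_pos hr (h.mu_pos hM i)

lemma pd_convex {A B : Matrix ι ι ℂ} (hA : A.PosDef) (hB : B.PosDef) {t : ℝ}
    (ht0 : 0 ≤ t) (ht1 : t ≤ 1) : (t • A + (1 - t) • B).PosDef := by
  rcases eq_or_lt_of_le ht0 with h0 | h0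
  · rw [← h0]
    simpa using hB
  · exact (pd_smul h0 hA).add_posSemidef (psd_smul (by linarith) hB.posSemidef)

/-- antitonicity of the matrix inverse -/
lemma inv_antitone {A B : Matrix ι ι ℂ} (hA : A.PosDef) (hB : B.PosDef)
    (hAB : (B - A).PosSemidef) : (A⁻¹ - B⁻¹).PosSemidef := by
  have h := UD.of hA.1
  have hμ := h.mu_pos hA
  have hsq : ∀ i, Real.sqrt (h.μ i) ≠ 0 := fun i =>
    ne_of_gt (Real.sqrt_pos.mpr (hμ i))
  set W := h.md (fun i => (Real.sqrt (h.μ i))⁻¹) with hWdef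
  set P := h.md (fun i => Real.sqrt (h.μ i)) with hPdef
  have hWP : W * P = 1 := by
    rw [hWdef, hPdef, h.md_mul,
      h.md_congr (w' := fun _ => 1) (fun i => inv_mul_cancel₀ (hsq i)), h.md_one]
  have hPW : P * W = 1 := by
    rw [hWdef, hPdef, h.md_mul,
      h.md_congr (w' := fun _ => 1) (fun i => mul_inv_cancel₀ (hsq i)), h.md_one]
  have hWherm : Wᴴ = W := h.md_herm _
  have hscal : ∀ i, (Real.sqrt (h.μ i))⁻¹ * h.μ i * (Real.sqrt (h.μ i))⁻¹ = 1 := by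
    intro i
    rw [← Real.mul_self_sqrt (hμ i).le]
    field_simp
    rw [Real.sqrt_sq (Real.sqrt_nonneg _)]
    exact div_self (pow_ne_zero 2 (hsq i))
  have hWAW : W * A * W = 1 := by
    rw [hWdef, h.md_mul_self, h.md_mul,
      h.md_congr (w' := fun _ => 1) (fun i => hscal i), h.md_one]
  have hWW : W * W = h.md (fun i => (h.μ i)⁻¹) := by
    rw [hWdef, h.md_mul]
    refine h.md_congr fun i => ?_
    rw [← mul_inv]
    rw [Real.mul_self_sqrt (hμ i).le]
  have hAinv : A⁻¹ = W * W := by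
    rw [hWW]
    exact h.inv_md fun i => ne_of_gt (hμ i)
  set K := W * B * W with hKdef
  have hKpd : K.PosDef := by
    have := posDef_conj'' (B := W) (C := P) hB (by rw [hWherm]; exact hPW)
    rw [hWherm] at this
    exact this
  have hK1 : (K - 1).PosSemidef := by
    have heq : K - 1 = W * (B - A) * Wᴴ := by
      rw [hWherm, hKdef, ← hWAW]
      noncomm_ring
    rw [heq]
    exact hAB.mul_mul_conjTranspose_same W
  have k := UD.of hKpd.1
  have hκpos := k.mu_pos hKpd
  have hκ1 : ∀ i, 1 ≤ k.μ i := by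
    intro i
    have heq : K - 1 = k.md (fun i => k.μ i - 1) := by
      have e := congrArg (fun X => X - (1 : Matrix ι ι ℂ)) k.rep
      rw [e, ← k.md_sub, k.md_one]
    rw [heq] at hK1
    have h9 := (k.md_ud (fun i => k.μ i - 1)).mu_nonneg hK1 i
    have h10 : (0:ℝ) ≤ k.μ i - 1 := h9
    linarith
  have hKinv : K⁻¹ = k.md (fun i => (k.μ i)⁻¹) := k.inv_md fun i => ne_of_gt (hκpos i)
  have hWB : W * B = K * P := by
    rw [hKdef, mul_assoc, hWP, mul_one]
  have hKinvK : K⁻¹ * K = 1 := by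
    rw [hKinv, k.md_mul_self,
      k.md_congr (w' := fun _ => 1) (fun i => inv_mul_cancel₀ (ne_of_gt (hκpos i))), k.md_one]
  have hBinv : B⁻¹ = W * K⁻¹ * W := by
    apply Matrix.inv_eq_left_inv
    calc W * K⁻¹ * W * B = W * K⁻¹ * (K * P) := by rw [mul_assoc, hWB, ← mul_assoc, mul_assoc]
    _ = W * (K⁻¹ * K) * P := by noncomm_ring
    _ = 1 := by rw [hKinvK, mul_one, hWP]
  have h1K : (1 - K⁻¹).PosSemidef := by
    rw [hKinv, ← k.md_one, k.md_sub]
    refine k.md_psd fun i => ?_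
    rw [sub_nonneg]
    exact inv_le_one_of_one_le₀ (hκ1 i)
  have hfinal : A⁻¹ - B⁻¹ = W * (1 - K⁻¹) * Wᴴ := by
    rw [hAinv, hBinv, hWherm]
    noncomm_ring
  rw [hfinal]
  exact h1K.mul_mul_conjTranspose_same W

lemma matFun_pd {f : ℝ → ℝ} (hf_pos : ∀ t > 0, 0 < f t) {A : Matrix ι ι ℂ} (hA : A.PosDef) :
    (matFun f A).PosDef := by
  have h := UD.of hA.1
  rw [h.matFun_md f]
  exact h.md_pd fun i => hf_pos _ (h.mu_pos hA i)

lemma matFun_one_div {f : ℝ → ℝ} (hf_pos : ∀ t > 0, 0 < f t) {A : Matrix ι ι ℂ}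
    (hA : A.PosDef) : matFun (fun t => 1 / f t) A = (matFun f A)⁻¹ := by
  have h := UD.of hA.1
  have hμ := h.mu_pos hA
  rw [h.matFun_md f, h.matFun_md (fun t => 1 / f t)]
  refine Eq.symm (Matrix.inv_eq_left_inv ?_)
  rw [h.md_mul,
    h.md_congr (w' := fun _ => 1) (fun i => by
      have hfi := hf_pos (h.μ i) (hμ i)
      field_simp),
    h.md_one]

/-- convexity of the matrix inverse -/
lemma inv_convex {A B : Matrix ι ι ℂ} (hA : A.PosDef) (hB : B.PosDef) {t : ℝ}
    (ht0 : 0 ≤ t) (ht1 : t ≤ 1) :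
    (t • A⁻¹ + (1 - t) • B⁻¹ - (t • A + (1 - t) • B)⁻¹).PosSemidef := by
  have h := UD.of hA.1
  have hμ := h.mu_pos hA
  have hsq : ∀ i, Real.sqrt (h.μ i) ≠ 0 := fun i =>
    ne_of_gt (Real.sqrt_pos.mpr (hμ i))
  set W := h.md (fun i => (Real.sqrt (h.μ i))⁻¹) with hWdef
  set P := h.md (fun i => Real.sqrt (h.μ i)) with hPdef
  have hWP : W * P = 1 := by
    rw [hWdef, hPdef, h.md_mul,
      h.md_congr (w' := fun _ => 1) (fun i => inv_mul_cancel₀ (hsq i)), h.md_one]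
  have hPW : P * W = 1 := by
    rw [hWdef, hPdef, h.md_mul,
      h.md_congr (w' := fun _ => 1) (fun i => mul_inv_cancel₀ (hsq i)), h.md_one]
  have hWherm : Wᴴ = W := h.md_herm _
  have hscal : ∀ i, (Real.sqrt (h.μ i))⁻¹ * h.μ i * (Real.sqrt (h.μ i))⁻¹ = 1 := by
    intro i
    rw [← Real.mul_self_sqrt (hμ i).le]
    field_simp
    rw [Real.sqrt_sq (Real.sqrt_nonneg _)]
    exact div_self (pow_ne_zero 2 (hsq i))
  have hWAW : W * A * W = 1 := by
    rw [hWdef, h.md_mul_self, h.md_mul,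
      h.md_congr (w' := fun _ => 1) (fun i => hscal i), h.md_one]
  have hWW : W * W = h.md (fun i => (h.μ i)⁻¹) := by
    rw [hWdef, h.md_mul]
    refine h.md_congr fun i => ?_
    rw [← mul_inv, Real.mul_self_sqrt (hμ i).le]
  have hAinv : A⁻¹ = W * W := by
    rw [hWW]
    exact h.inv_md fun i => ne_of_gt (hμ i)
  set C0 := W * B * W with hC0def
  have hC0pd : C0.PosDef := by
    have := posDef_conj'' (B := W) (C := P) hB (by rw [hWherm]; exact hPW)
    rw [hWherm] at this
    exact this
  have k := UD.of hC0pd.1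
  have hγpos := k.mu_pos hC0pd
  set M := t • A + (1 - t) • B with hMdef
  have hMpd : M.PosDef := pd_convex hA hB ht0 ht1
  have hu : ∀ i, 0 < t + (1 - t) * k.μ i := by
    intro i
    rcases eq_or_lt_of_le ht1 with h1 | h1
    · rw [h1]; norm_num
    · have := mul_pos (by linarith : (0:ℝ) < 1 - t) (hγpos i)
      linarith
  have hWM : W * M * W = t • (1 : Matrix ι ι ℂ) + (1 - t) • C0 := by
    rw [hMdef, Matrix.mul_add, Matrix.add_mul, Matrix.mul_smul, Matrix.mul_smul,
      Matrix.smul_mul, Matrix.smul_mul, hWAW]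
  have hNrep : t • (1 : Matrix ι ι ℂ) + (1 - t) • C0 = k.md (fun i => t + (1 - t) * k.μ i) := by
    have e := congrArg (fun X => t • (1 : Matrix ι ι ℂ) + (1 - t) • X) k.rep
    rw [e, ← k.md_one, k.md_smul, k.md_smul, k.md_add]
    exact k.md_congr fun i => by rw [mul_one]
  have hMrep : W * M * W = k.md (fun i => t + (1 - t) * k.μ i) := hWM.trans hNrep
  have hWMe : W * M = k.md (fun i => t + (1 - t) * k.μ i) * P := by
    calc W * M = W * M * (W * P) := by rw [hWP, mul_one]
    _ = (W * M * W) * P := by noncomm_ring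
    _ = _ := by rw [hMrep]
  have hMinv : M⁻¹ = W * (k.md fun i => (t + (1 - t) * k.μ i)⁻¹) * W := by
    refine Matrix.inv_eq_left_inv ?_
    calc W * (k.md fun i => (t + (1 - t) * k.μ i)⁻¹) * W * M
        = W * ((k.md fun i => (t + (1 - t) * k.μ i)⁻¹) * (W * M)) := by noncomm_ring
    _ = W * ((k.md fun i => (t + (1 - t) * k.μ i)⁻¹) * (k.md (fun i => t + (1 - t) * k.μ i) * P)) := by
        rw [hWMe]
    _ = W * (((k.md fun i => (t + (1 - t) * k.μ i)⁻¹) * k.md (fun i => t + (1 - t) * k.μ i)) * P) := by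
        noncomm_ring
    _ = 1 := by
        rw [k.md_mul, k.md_congr (w' := fun _ => 1) (fun i => inv_mul_cancel₀ (ne_of_gt (hu i))),
          k.md_one, one_mul, hWP]
  have hWB : W * B = C0 * P := by
    rw [hC0def, mul_assoc, hWP, mul_one]
  have hBinv : B⁻¹ = W * (k.md fun i => (k.μ i)⁻¹) * W := by
    refine Matrix.inv_eq_left_inv ?_
    calc W * (k.md fun i => (k.μ i)⁻¹) * W * B
        = W * ((k.md fun i => (k.μ i)⁻¹) * (W * B)) := by noncomm_ring
    _ = W * ((k.md fun i => (k.μ i)⁻¹) * (C0 * P)) := by rw [hWB]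
    _ = W * (((k.md fun i => (k.μ i)⁻¹) * C0) * P) := by noncomm_ring
    _ = 1 := by
        rw [k.md_mul_self,
          k.md_congr (w' := fun _ => 1) (fun i => inv_mul_cancel₀ (ne_of_gt (hγpos i))),
          k.md_one, one_mul, hWP]
  have hAinv' : A⁻¹ = W * (1 : Matrix ι ι ℂ) * W := by
    rw [mul_one]
    exact hAinv
  have hfinal : t • A⁻¹ + (1 - t) • B⁻¹ - M⁻¹
      = W * (k.md fun i => t + (1 - t) * (k.μ i)⁻¹ - (t + (1 - t) * k.μ i)⁻¹) * Wᴴ := by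
    rw [hWherm, hAinv', hBinv, hMinv]
    have hinner : (k.md fun i => t + (1 - t) * (k.μ i)⁻¹ - (t + (1 - t) * k.μ i)⁻¹)
        = t • (1 : Matrix ι ι ℂ) + (1 - t) • (k.md fun i => (k.μ i)⁻¹)
          - (k.md fun i => (t + (1 - t) * k.μ i)⁻¹) := by
      rw [← k.md_one, k.md_smul, k.md_smul, k.md_add, k.md_sub]
      exact k.md_congr fun i => by rw [mul_one]
    rw [hinner, Matrix.mul_sub, Matrix.sub_mul, Matrix.mul_add, Matrix.add_mul,
      Matrix.mul_smul, Matrix.mul_smul, Matrix.smul_mul, Matrix.smul_mul]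
  rw [hfinal]
  refine Matrix.PosSemidef.mul_mul_conjTranspose_same ?_ W
  refine k.md_psd fun i => ?_
  have hx := hγpos i
  have hui := hu i
  have hident : t + (1 - t) * (k.μ i)⁻¹ - (t + (1 - t) * k.μ i)⁻¹
      = (t * (1 - t) * (k.μ i - 1)^2) / (k.μ i * (t + (1 - t) * k.μ i)) := by
    field_simp
    ring
  rw [hident]
  apply div_nonneg
  · exact mul_nonneg (mul_nonneg ht0 (by linarith)) (sq_nonneg _)
  · exact (mul_pos hx hui).le

section blocks
variable {κ : Type} [Fintype κ] [DecidableEq κ]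

lemma rsmul (r : ℝ) (M : Matrix ι κ ℂ) : r • M = ((r : ℝ) : ℂ) • M := by
  ext i j
  simp [Matrix.smul_apply, Complex.real_smul, smul_eq_mul]

lemma herm_smul (r : ℝ) {M : Matrix ι ι ℂ} (hM : M.IsHermitian) : (r • M).IsHermitian := by
  rw [rsmul]
  unfold Matrix.IsHermitian at hM ⊢
  rw [Matrix.conjTranspose_smul, hM, Complex.star_def, Complex.conj_ofReal]

lemma castfun (w : ι → ℝ) (w' : κ → ℝ) :
    (fun i => ((Sum.elim w w' i : ℝ) : ℂ)) =
      Sum.elim (fun i => ((w i : ℝ) : ℂ)) (fun i => ((w' i : ℝ) : ℂ)) := by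
  funext i
  cases i <;> rfl

noncomputable def UD.blocks {A : Matrix ι ι ℂ} {B : Matrix κ κ ℂ} (a : UD A) (b : UD B) :
    UD (fromBlocks A 0 0 B) :=
  ⟨fromBlocks a.V 0 0 b.V, Sum.elim a.μ b.μ, by
    rw [fromBlocks_conjTranspose, fromBlocks_multiply]
    simp only [conjTranspose_zero, Matrix.mul_zero, Matrix.zero_mul, add_zero, zero_add,
      a.hV, b.hV]
    exact fromBlocks_one, by
    rw [castfun, ← fromBlocks_diagonal, fromBlocks_multiply, fromBlocks_multiply]
    simp only [Matrix.mul_zero, Matrix.zero_mul, add_zero, zero_add, a.hMV, b.hMV]⟩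

lemma UD.blocks_md {A : Matrix ι ι ℂ} {B : Matrix κ κ ℂ} (a : UD A) (b : UD B)
    (w₁ : ι → ℝ) (w₂ : κ → ℝ) :
    (a.blocks b).md (Sum.elim w₁ w₂) = fromBlocks (a.md w₁) 0 0 (b.md w₂) := by
  dsimp only [UD.md, UD.blocks]
  rw [castfun, ← fromBlocks_diagonal, fromBlocks_conjTranspose, fromBlocks_multiply,
    fromBlocks_multiply]
  simp only [conjTranspose_zero, Matrix.mul_zero, Matrix.zero_mul, add_zero, zero_add]

lemma matFun_blocks {A : Matrix ι ι ℂ} {B : Matrix κ κ ℂ} (hA : A.IsHermitian)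
    (hB : B.IsHermitian) (g : ℝ → ℝ) :
    matFun g (fromBlocks A 0 0 B) = fromBlocks (matFun g A) 0 0 (matFun g B) := by
  have a := UD.of hA
  have b := UD.of hB
  rw [(a.blocks b).matFun_md g, a.matFun_md g, b.matFun_md g]
  rw [show (fun i => g ((a.blocks b).μ i)) = Sum.elim (fun i => g (a.μ i)) (fun i => g (b.μ i))
    from funext fun i => by cases i <;> rfl]
  exact a.blocks_md b _ _

noncomputable def UD.conj {M : Matrix ι ι ℂ} (h : UD M) {U : Matrix ι ι ℂ} (hU : Uᴴ * U = 1) :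
    UD (Uᴴ * M * U) :=
  ⟨Uᴴ * h.V, h.μ, by
    rw [conjTranspose_mul, conjTranspose_conjTranspose, mul_assoc, ← mul_assoc U,
      mul_eq_one_comm.mp hU, one_mul, h.hV], by
    calc Uᴴ * M * U * (Uᴴ * h.V) = Uᴴ * M * (U * Uᴴ) * h.V := by noncomm_ring
    _ = Uᴴ * (M * h.V) := by rw [mul_eq_one_comm.mp hU, mul_one, mul_assoc]
    _ = Uᴴ * h.V * diagonal (fun i => ((h.μ i : ℝ) : ℂ)) := by rw [h.hMV, mul_assoc]⟩

lemma UD.conj_md {M : Matrix ι ι ℂ} (h : UD M) {U : Matrix ι ι ℂ} (hU : Uᴴ * U = 1)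
    (w : ι → ℝ) : (h.conj hU).md w = Uᴴ * h.md w * U := by
  dsimp only [UD.md, UD.conj]
  rw [conjTranspose_mul, conjTranspose_conjTranspose]
  noncomm_ring

lemma star_sum_elim (u : ι → ℂ) (v : κ → ℂ) :
    star (Sum.elim u v) = Sum.elim (star u) (star v) := by
  funext i
  cases i <;> rfl

lemma dot_sum_elim (u p : ι → ℂ) (v q : κ → ℂ) :
    Sum.elim u v ⬝ᵥ Sum.elim p q = u ⬝ᵥ p + v ⬝ᵥ q := by
  simp [dotProduct, Fintype.sum_sum_type]

lemma pd_fromBlocks_diag {A : Matrix ι ι ℂ} {B : Matrix κ κ ℂ} (hA : A.PosDef) (hB : B.PosDef) :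
    (fromBlocks A 0 0 B).PosDef := by
  refine .of_dotProduct_mulVec_pos ?_ ?_
  · have e1 := hA.1
    have e2 := hB.1
    unfold Matrix.IsHermitian at e1 e2 ⊢
    simp only [fromBlocks_conjTranspose, conjTranspose_zero, e1, e2]
  · intro x hx
    have hxe : x = Sum.elim (x ∘ Sum.inl) (x ∘ Sum.inr) := (Sum.elim_comp_inl_inr x).symm
    rw [hxe, fromBlocks_mulVec, star_sum_elim, dot_sum_elim]
    simp only [Sum.elim_comp_inl, Sum.elim_comp_inr, Matrix.zero_mulVec, add_zero, zero_add]
    have hor : (x ∘ Sum.inl) ≠ 0 ∨ (x ∘ Sum.inr) ≠ 0 := by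
      by_contra hc
      push_neg at hc
      apply hx
      rw [hxe, hc.1, hc.2]
      funext i
      cases i <;> rfl
    rcases hor with hu | hv
    · exact add_pos_of_pos_of_nonneg (hA.dotProduct_mulVec_pos hu) (hB.posSemidef.dotProduct_mulVec_nonneg _)
    · exact add_pos_of_nonneg_of_pos (hA.posSemidef.dotProduct_mulVec_nonneg _) (hB.dotProduct_mulVec_pos hv)

end blocks

lemma smul_one_diag (r : ℝ) : (r : ℝ) • (1 : Matrix ι ι ℂ) = diagonal (fun _ => ((r : ℝ) : ℂ)) := by
  ext i j
  rcases eq_or_ne i j with h | h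
  · subst h
    simp [Matrix.smul_apply, Matrix.one_apply_eq, Matrix.diagonal_apply_eq, Complex.real_smul]
  · simp [Matrix.smul_apply, Matrix.one_apply_ne h, Matrix.diagonal_apply_ne _ h]

noncomputable def UD.shift {M : Matrix ι ι ℂ} (h : UD M) (r : ℝ) : UD (M + r • 1) :=
  ⟨h.V, fun i => h.μ i + r, h.hV, by
    rw [Matrix.add_mul, h.hMV, smul_one_diag]
    have hcomm : diagonal (fun _ : ι => ((r : ℝ) : ℂ)) * h.V
        = h.V * diagonal (fun _ : ι => ((r : ℝ) : ℂ)) := by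
      ext i j
      rw [Matrix.diagonal_mul, Matrix.mul_diagonal, mul_comm]
    rw [hcomm, ← Matrix.mul_add, diagonal_add]
    congr 1
    funext i
    push_cast
    rfl⟩

lemma md_quad {M : Matrix ι ι ℂ} (h : UD M) (w : ι → ℝ) (x : ι → ℂ) :
    star x ⬝ᵥ (h.md w *ᵥ x) =
      ((∑ i, w i * Complex.normSq ((h.Vᴴ *ᵥ x) i) : ℝ) : ℂ) := by
  have h1 : star x ⬝ᵥ (h.md w *ᵥ x)
      = star (h.Vᴴ *ᵥ x) ⬝ᵥ (diagonal (fun i => ((w i : ℝ) : ℂ)) *ᵥ (h.Vᴴ *ᵥ x)) := by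
    unfold UD.md
    simp only [star_mulVec, dotProduct_mulVec, vecMul_vecMul,
      conjTranspose_conjTranspose]
  rw [h1, Complex.ofReal_sum]
  simp only [dotProduct, Matrix.mulVec_diagonal, Pi.star_apply, RCLike.star_def]
  refine Finset.sum_congr rfl fun i _ => ?_
  calc (starRingEnd ℂ) ((h.Vᴴ *ᵥ x) i) * ((w i : ℂ) * (h.Vᴴ *ᵥ x) i)
      = (w i : ℂ) * ((h.Vᴴ *ᵥ x) i * (starRingEnd ℂ) ((h.Vᴴ *ᵥ x) i)) := by ring
  _ = _ := by rw [Complex.mul_conj]; push_cast; rfl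

lemma psd_block11 {M : Matrix (ι ⊕ ι) (ι ⊕ ι) ℂ} (hM : M.PosSemidef) :
    (M.toBlocks₁₁).PosSemidef := hM.submatrix Sum.inl

lemma sub_toBlocks₁₁ (X Y : Matrix (ι ⊕ ι) (ι ⊕ ι) ℂ) :
    (X - Y).toBlocks₁₁ = X.toBlocks₁₁ - Y.toBlocks₁₁ := rfl

lemma fromBlocks_sub (a b c d a' b' c' d' : Matrix ι ι ℂ) :
    (fromBlocks a b c d : Matrix (ι ⊕ ι) (ι ⊕ ι) ℂ) - fromBlocks a' b' c' d'
      = fromBlocks (a - a') (b - b') (c - c') (d - d') := by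
  ext i j
  rcases i with i | i <;> rcases j with j | j <;> simp [fromBlocks, Matrix.sub_apply]

/-- conjugation of a block-diagonal matrix by the rotation unitary -/
lemma conjU (c s : ℝ) (X Z : Matrix ι ι ℂ) :
    (fromBlocks (((c : ℝ) : ℂ) • 1) (((s : ℝ) : ℂ) • 1) (-(((s : ℝ) : ℂ) • 1)) (((c : ℝ) : ℂ) • 1)
        : Matrix (ι ⊕ ι) (ι ⊕ ι) ℂ) *
      fromBlocks X 0 0 Z *
      fromBlocks (((c : ℝ) : ℂ) • 1) (-(((s : ℝ) : ℂ) • 1)) (((s : ℝ) : ℂ) • 1) (((c : ℝ) : ℂ) • 1)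
    = fromBlocks (((c * c : ℝ) : ℂ) • X + ((s * s : ℝ) : ℂ) • Z)
        (((c * s : ℝ) : ℂ) • (Z - X)) (((c * s : ℝ) : ℂ) • (Z - X))
        (((s * s : ℝ) : ℂ) • X + ((c * c : ℝ) : ℂ) • Z) := by
  rw [fromBlocks_multiply, fromBlocks_multiply]
  refine fromBlocks_inj.mpr ⟨?_, ?_, ?_, ?_⟩ <;>
    simp only [toBlocks_fromBlocks₁₁, toBlocks_fromBlocks₁₂, toBlocks_fromBlocks₂₁,
      toBlocks_fromBlocks₂₂, Matrix.smul_mul, Matrix.mul_smul, Matrix.one_mul, Matrix.mul_one,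
      Matrix.mul_zero, Matrix.zero_mul, add_zero, zero_add, smul_smul, Matrix.neg_mul,
      Matrix.mul_neg, smul_neg, neg_smul, neg_neg] <;>
    push_cast <;>
    module

lemma tendsto_right {f : ℝ → ℝ} (hf : OperatorMonotone f) {x₀ : ℝ} (hx₀ : 0 < x₀) :
    Filter.Tendsto (fun n : ℕ => f (x₀ + 1 / ((n : ℝ) + 1)) - f x₀) Filter.atTop (nhds 0) := by
  rw [Metric.tendsto_atTop]
  intro δ hδ
  obtain ⟨ε, hε, hfε⟩ := rcont hf hx₀ hδ
  obtain ⟨N, hN⟩ := exists_nat_gt (1 / ε)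
  refine ⟨N, fun n hn => ?_⟩
  have h1 : (0 : ℝ) < (n : ℝ) + 1 := by positivity
  have hNn : (1 : ℝ) / ε < (n : ℝ) + 1 := by
    have : (N : ℝ) ≤ (n : ℝ) := by exact_mod_cast hn
    linarith
  have h2 : 1 / ((n : ℝ) + 1) ≤ ε := by
    have h4 : (1 : ℝ) < ((n : ℝ) + 1) * ε := (div_lt_iff₀ hε).mp hNn
    rw [div_le_iff₀ h1]
    linarith
  have h3 : (0 : ℝ) < 1 / ((n : ℝ) + 1) := by positivity
  have hmono1 : f (x₀ + 1 / ((n : ℝ) + 1)) ≤ f (x₀ + ε) :=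
    scalar_mono hf (by linarith) (by linarith)
  have hmono2 : f x₀ ≤ f (x₀ + 1 / ((n : ℝ) + 1)) := scalar_mono hf hx₀ (by linarith)
  rw [Real.dist_eq, sub_zero, abs_lt]
  constructor <;> linarith

lemma matFun_herm {M : Matrix ι ι ℂ} (hM : M.IsHermitian) (g : ℝ → ℝ) :
    (matFun g M).IsHermitian := by
  rw [(UD.of hM).matFun_md g]
  exact (UD.of hM).md_herm _

lemma UD.shift_md {M : Matrix ι ι ℂ} (h : UD M) (r : ℝ) (w : ι → ℝ) :
    (h.shift r).md w = h.md w := rfl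

lemma key_concavity {f : ℝ → ℝ} (hf_pos : ∀ x > 0, 0 < f x) (hf : OperatorMonotone f)
    {A B : Matrix ι ι ℂ} (hA : A.PosDef) (hB : B.PosDef) {t : ℝ} (ht0 : 0 ≤ t) (ht1 : t ≤ 1) :
    (matFun f (t • A + (1 - t) • B) - (t • matFun f A + (1 - t) • matFun f B)).PosSemidef := by
  set c := Real.sqrt t with hcdef
  set s := Real.sqrt (1 - t) with hsdef
  have hcc : c * c = t := Real.mul_self_sqrt ht0
  have hss : s * s = 1 - t := Real.mul_self_sqrt (by linarith)
  set C := t • A + (1 - t) • B with hCdef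
  have hCpd : C.PosDef := pd_convex hA hB ht0 ht1
  set FA := matFun f A with hFAdef
  set FB := matFun f B with hFBdef
  have hFApd : FA.PosDef := matFun_pd hf_pos hA
  have hFBpd : FB.PosDef := matFun_pd hf_pos hB
  set G := t • FA + (1 - t) • FB with hGdef
  set T : Matrix (ι ⊕ ι) (ι ⊕ ι) ℂ := fromBlocks A 0 0 B with hTdef
  have hTpd : T.PosDef := pd_fromBlocks_diag hA hB
  set U : Matrix (ι ⊕ ι) (ι ⊕ ι) ℂ :=
    fromBlocks (((c : ℝ) : ℂ) • 1) (-(((s : ℝ) : ℂ) • 1)) (((s : ℝ) : ℂ) • 1) (((c : ℝ) : ℂ) • 1)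
    with hUdef
  have hUconj : Uᴴ = fromBlocks (((c : ℝ) : ℂ) • 1) (((s : ℝ) : ℂ) • 1) (-(((s : ℝ) : ℂ) • 1))
      (((c : ℝ) : ℂ) • 1) := by
    rw [hUdef]
    simp only [fromBlocks_conjTranspose, Matrix.conjTranspose_smul, Matrix.conjTranspose_neg,
      Matrix.conjTranspose_one, Complex.star_def, Complex.conj_ofReal]
  have honel : ((c * c : ℝ) : ℂ) • (1 : Matrix ι ι ℂ) + ((s * s : ℝ) : ℂ) • 1 = 1 := by
    rw [← add_smul, show ((c * c : ℝ) : ℂ) + ((s * s : ℝ) : ℂ) = 1 by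
      rw [hcc, hss]; push_cast; ring, one_smul]
  have honer : ((s * s : ℝ) : ℂ) • (1 : Matrix ι ι ℂ) + ((c * c : ℝ) : ℂ) • 1 = 1 := by
    rw [← add_smul, show ((s * s : ℝ) : ℂ) + ((c * c : ℝ) : ℂ) = 1 by
      rw [hcc, hss]; push_cast; ring, one_smul]
  have hU : Uᴴ * U = 1 := by
    have h0 := conjU (ι := ι) c s (1 : Matrix ι ι ℂ) 1
    rw [fromBlocks_one, mul_one, sub_self, smul_zero, honel, honer, fromBlocks_one,
      ← hUdef, ← hUconj] at h0
    exact h0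
  set R := (c * s) • (B - A) with hRdef
  set S2 := (1 - t) • A + t • B with hS2def
  have hY0 : Uᴴ * T * U = fromBlocks C R R S2 := by
    have h0 := conjU (ι := ι) c s A B
    rw [← hUdef, ← hUconj] at h0
    simp only [← rsmul] at h0
    rw [hcc, hss] at h0
    exact h0
  have udT : UD T := (UD.of hA.1).blocks (UD.of hB.1)
  have hYpd : (Uᴴ * T * U).PosDef := by
    have h0 := posDef_conj'' (A := T) (B := Uᴴ) (C := Uᴴ) hTpd
      (by rw [conjTranspose_conjTranspose]; exact hU)
    rw [conjTranspose_conjTranspose] at h0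
    exact h0
  have hmfT : matFun f T = fromBlocks FA 0 0 FB := matFun_blocks hA.1 hB.1 f
  have hmfY : matFun f (Uᴴ * T * U) = Uᴴ * matFun f T * U := by
    rw [(udT.conj hU).matFun_md f, udT.conj_md hU]
    dsimp only [UD.conj]
    congr 1
    rw [udT.matFun_md f]
  set RF := (c * s) • (FB - FA) with hRFdef
  set SF := (1 - t) • FA + t • FB with hSFdef
  have hGblock : matFun f (Uᴴ * T * U) = fromBlocks G RF RF SF := by
    rw [hmfY, hmfT]
    have h0 := conjU (ι := ι) c s FA FB
    rw [← hUdef, ← hUconj] at h0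
    simp only [← rsmul] at h0
    rw [hcc, hss] at h0
    exact h0
  -- perturbation bound for the off-diagonal block
  have hRherm : R.IsHermitian := herm_smul _ (hB.1.sub hA.1)
  have hR' : Rᴴ = R := hRherm
  set D0 := R * R with hD0def
  have hD0psd : D0.PosSemidef := by
    have h0 := Matrix.posSemidef_self_mul_conjTranspose R
    rw [hRherm] at h0
    exact h0
  have d : UD D0 := UD.of hD0psd.1
  set τ := ∑ i, d.μ i with hτdef
  have hbound : ((τ + 1) • (1 : Matrix ι ι ℂ) - D0).PosSemidef := by
    have e := congrArg (fun X => (τ + 1) • (1 : Matrix ι ι ℂ) - X) d.rep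
    rw [e, ← d.md_one, d.md_smul, d.md_sub]
    refine d.md_psd fun i => ?_
    have h1 : d.μ i ≤ τ :=
      Finset.single_le_sum (f := d.μ) (fun j _ => d.mu_nonneg hD0psd j) (Finset.mem_univ i)
    simp only [mul_one]
    linarith
  have hS2pd : S2.PosDef := by
    have h0 := pd_convex hA hB (t := 1 - t) (by linarith) (by linarith)
    rw [show (1 - (1 - t)) = t by ring] at h0
    exact h0
  have udC : UD C := UD.of hCpd.1
  have hμC := udC.mu_pos hCpd
  -- the key inequality for every n
  have hGle : ∀ n : ℕ, (matFun f (C + (1 / ((n : ℝ) + 1)) • 1) - G).PosSemidef := by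
    intro n
    set η : ℝ := 1 / ((n : ℝ) + 1) with hηdef
    have hηpos : 0 < η := by rw [hηdef]; positivity
    set lam : ℝ := ((n : ℝ) + 1) * (τ + 1) with hlamdef
    have hτ0 : 0 ≤ τ := Finset.sum_nonneg fun i _ => d.mu_nonneg hD0psd i
    have hlampos : 0 < lam := by rw [hlamdef]; positivity
    set Z1 := C + lam⁻¹ • D0 with hZ1def
    have hZ1pd : Z1.PosDef := hCpd.add_posSemidef (psd_smul (by positivity) hD0psd)
    have h22pd : (S2 + lam • 1).PosDef :=
      hS2pd.add_posSemidef (psd_smul hlampos.le Matrix.PosSemidef.one)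
    have hZbpd : (fromBlocks Z1 0 0 (S2 + lam • 1)).PosDef := pd_fromBlocks_diag hZ1pd h22pd
    -- certificate
    set ρ := Real.sqrt lam with hρdef
    have hρρ : ρ * ρ = lam := Real.mul_self_sqrt hlampos.le
    have hρpos : 0 < ρ := Real.sqrt_pos.mpr hlampos
    set N : Matrix (ι ⊕ ι) (ι ⊕ ι) ℂ :=
      fromBlocks (((ρ⁻¹ : ℝ) : ℂ) • R) (-(((ρ : ℝ) : ℂ) • 1)) 0 0 with hNdef
    have hcert : fromBlocks Z1 0 0 (S2 + lam • 1) - Uᴴ * T * U = Nᴴ * N := by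
      rw [hY0, hNdef, fromBlocks_conjTranspose, fromBlocks_multiply, fromBlocks_sub]
      refine fromBlocks_inj.mpr ⟨?_, ?_, ?_, ?_⟩ <;>
        simp only [Matrix.conjTranspose_smul, Matrix.conjTranspose_neg, Matrix.conjTranspose_one,
          conjTranspose_zero, Complex.star_def, Complex.conj_ofReal, hR', Matrix.mul_zero,
          Matrix.zero_mul, add_zero, zero_add, Matrix.smul_mul, Matrix.mul_smul, smul_smul,
          Matrix.neg_mul, Matrix.mul_neg, smul_neg, neg_neg, Matrix.mul_one, Matrix.one_mul]
      · -- Z1 - C = (ρ⁻¹ρ⁻¹) • (R * R)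
        rw [hZ1def, add_sub_cancel_left, show ((ρ⁻¹ : ℝ) : ℂ) * ((ρ⁻¹ : ℝ) : ℂ)
            = ((lam⁻¹ : ℝ) : ℂ) by rw [← hρρ]; push_cast; rw [mul_inv], ← hD0def, ← rsmul]
      · rw [zero_sub, show ((ρ : ℝ) : ℂ) * ((ρ⁻¹ : ℝ) : ℂ) = 1 by
          push_cast; rw [mul_inv_cancel₀]; exact_mod_cast ne_of_gt hρpos, one_smul]
      · rw [zero_sub, show ((ρ⁻¹ : ℝ) : ℂ) * ((ρ : ℝ) : ℂ) = 1 by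
          push_cast; rw [inv_mul_cancel₀]; exact_mod_cast ne_of_gt hρpos, one_smul]
      · rw [add_sub_cancel_left, show ((ρ : ℝ) : ℂ) * ((ρ : ℝ) : ℂ) = ((lam : ℝ) : ℂ) by
          rw [← hρρ]; push_cast; ring, ← rsmul]
    have hface := mono hf hYpd hZbpd (by rw [hcert]; exact Matrix.posSemidef_conjTranspose_mul_self N)
    have hmfZb : matFun f (fromBlocks Z1 0 0 (S2 + lam • 1))
        = fromBlocks (matFun f Z1) 0 0 (matFun f (S2 + lam • 1)) :=
      matFun_blocks hZ1pd.1 h22pd.1 f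
    have hstep1 : (matFun f Z1 - G).PosSemidef := by
      have hb := psd_block11 hface
      rw [sub_toBlocks₁₁, hmfZb, hGblock, toBlocks_fromBlocks₁₁, toBlocks_fromBlocks₁₁] at hb
      exact hb
    have hηlam : lam⁻¹ * (τ + 1) = η := by
      rw [hlamdef, hηdef]
      field_simp
    have hCn1pd : (C + η • 1).PosDef :=
      hCpd.add_posSemidef (psd_smul hηpos.le Matrix.PosSemidef.one)
    have hdiff : (C + η • 1) - Z1 = lam⁻¹ • ((τ + 1) • (1 : Matrix ι ι ℂ) - D0) := by
      rw [hZ1def, smul_sub, smul_smul, hηlam]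
      module
    have hstep2 := mono hf hZ1pd hCn1pd (by rw [hdiff]; exact psd_smul (by positivity) hbound)
    have hsum := hstep2.add hstep1
    rw [sub_add_sub_cancel] at hsum
    exact hsum
  -- pass to the limit
  refine .of_dotProduct_mulVec_nonneg ?_ ?_
  · refine Matrix.IsHermitian.sub (matFun_herm hCpd.1 f) ?_
    exact (herm_smul t (matFun_herm hA.1 f)).add (herm_smul (1 - t) (matFun_herm hB.1 f))
  · intro x
    set y := udC.Vᴴ *ᵥ x with hydef
    have hmfC : matFun f C = udC.md (fun i => f (udC.μ i)) := udC.matFun_md f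
    have key : ∀ n : ℕ, 0 ≤ star x ⬝ᵥ ((matFun f C - G) *ᵥ x) +
        ((∑ i, (f (udC.μ i + 1 / ((n : ℝ) + 1)) - f (udC.μ i)) * Complex.normSq (y i) : ℝ) : ℂ) := by
      intro n
      have hn := (hGle n).dotProduct_mulVec_nonneg x
      have e1 : matFun f (C + (1 / ((n : ℝ) + 1)) • 1)
          = udC.md (fun i => f (udC.μ i + 1 / ((n : ℝ) + 1))) := by
        rw [(udC.shift (1 / ((n : ℝ) + 1))).matFun_md f, UD.shift_md]
        exact udC.md_congr fun i => rfl
      have hsplit : matFun f (C + (1 / ((n : ℝ) + 1)) • 1) - G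
          = (matFun f C - G) + udC.md (fun i => f (udC.μ i + 1 / ((n : ℝ) + 1)) - f (udC.μ i)) := by
        rw [e1, hmfC]
        rw [show udC.md (fun i => f (udC.μ i + 1 / ((n : ℝ) + 1)))
            = udC.md (fun i => f (udC.μ i)) + udC.md (fun i =>
              f (udC.μ i + 1 / ((n : ℝ) + 1)) - f (udC.μ i)) by
          rw [udC.md_add]
          exact udC.md_congr fun i => by ring]
        abel
      rw [hsplit, Matrix.add_mulVec, dotProduct_add, md_quad] at hn
      exact hn
    set z := star x ⬝ᵥ ((matFun f C - G) *ᵥ x) with hzdef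
    have him : z.im = 0 := by
      have h0 := (Complex.le_def.mp (key 0)).2
      simpa using h0.symm
    have hre : 0 ≤ z.re := by
      have htend : Filter.Tendsto (fun n : ℕ => ∑ i, (f (udC.μ i + 1 / ((n : ℝ) + 1))
          - f (udC.μ i)) * Complex.normSq (y i)) Filter.atTop (nhds 0) := by
        have h0 := tendsto_finset_sum (Finset.univ : Finset ι) (fun i _ =>
          (tendsto_right hf (hμC i)).mul_const (Complex.normSq (y i)))
        simpa using h0
      have hge : ∀ n : ℕ, -(∑ i, (f (udC.μ i + 1 / ((n : ℝ) + 1)) - f (udC.μ i))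
          * Complex.normSq (y i)) ≤ z.re := by
        intro n
        have h0 := (Complex.le_def.mp (key n)).1
        simp only [Complex.zero_re, Complex.add_re, Complex.ofReal_re] at h0
        linarith
      have h1 := le_of_tendsto htend.neg (Filter.Eventually.of_forall hge)
      simpa using h1
    exact Complex.le_def.mpr ⟨by simpa using hre, by simp [him]⟩

end OC

/-- If `f : (0,∞) → (0,∞)` is operator monotone, then `h₃(t) = 1/f(t)` is
operator convex on `(0,∞)`. -/
theorem operatorConvex_one_div_of_operatorMonotone (f : ℝ → ℝ)
    (hf_pos : ∀ t > 0, 0 < f t) (hf_mono : OperatorMonotone f) :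
    OperatorConvex (fun t => 1 / f t) := by
  intro k A B hA hB t ht0 ht1
  have hCpd : (t • A + (1 - t) • B).PosDef := OC.pd_convex hA hB ht0 ht1
  have hFA : (matFun f A).PosDef := OC.matFun_pd hf_pos hA
  have hFB : (matFun f B).PosDef := OC.matFun_pd hf_pos hB
  have hFC : (matFun f (t • A + (1 - t) • B)).PosDef := OC.matFun_pd hf_pos hCpd
  have hG : (t • matFun f A + (1 - t) • matFun f B).PosDef := OC.pd_convex hFA hFB ht0 ht1
  have hconc := OC.key_concavity hf_pos hf_mono hA hB ht0 ht1
  have h1 : matFun (fun t => 1 / f t) (t • A + (1 - t) • B)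
      = (matFun f (t • A + (1 - t) • B))⁻¹ := OC.matFun_one_div hf_pos hCpd
  have h2 : matFun (fun t => 1 / f t) A = (matFun f A)⁻¹ := OC.matFun_one_div hf_pos hA
  have h3 : matFun (fun t => 1 / f t) B = (matFun f B)⁻¹ := OC.matFun_one_div hf_pos hB
  have hanti := OC.inv_antitone hG hFC hconc
  have hconv := OC.inv_convex hFA hFB ht0 ht1
  have hsum := hconv.add hanti
  rw [sub_add_sub_cancel] at hsum
  rw [h1, h2, h3]
  exact hsum
end

section
/- Let 0 < p < 1 and let A be a fixed n×n complex Hermitian matrix. Then the Wigner-Yanase-Dyson skew information ρ ↦ −(1/2)·Tr([ρ^p, A]·[ρ^{1−p}, A]) is convex on the set of n×n positive semidefinite density matrices: for positive semidefinite density matrices ρ, σ and λ ∈ [0,1], −(1/2)·Tr([(λρ+(1−λ)σ)^p, A]·[(λρ+(1−λ)σ)^{1−p}, A]) ≤ −(λ/2)·Tr([ρ^p, A]·[ρ^{1−p}, A]) − ((1−λ)/2)·Tr([σ^p, A]·[σ^{1−p}, A]). -/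
open Matrix Kronecker ComplexOrder

/-- The Wigner-Yanase-Dyson skew information `−(1/2)·Tr([ρᵖ,A]·[ρ^{1−p},A])`,
with the matrix powers defined through the functional calculus. -/
noncomputable def wyd {k : ℕ} (p : ℝ) (ρ A : Matrix (Fin k) (Fin k) ℂ) : ℂ :=
  -(1 / 2) * Matrix.trace
    ((matFun (fun x => x ^ p) ρ * A - A * matFun (fun x => x ^ p) ρ) *
      (matFun (fun x => x ^ (1 - p)) ρ * A - A * matFun (fun x => x ^ (1 - p)) ρ))


open MeasureTheory Set Real

noncomputable def Ipc (p : ℝ) : ℝ := ∫ s in Ioi (0:ℝ), s ^ (p-1) / (1+s)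

lemma rpow_contOn (q : ℝ) : ContinuousOn (fun s : ℝ => s ^ q) (Ioi 0) :=
  fun x hx => (Real.continuousAt_rpow_const x q (Or.inl (ne_of_gt hx))).continuousWithinAt

lemma int_base {p : ℝ} (hp0 : 0 < p) (hp1 : p < 1) :
    IntegrableOn (fun s : ℝ => s ^ (p-1) / (1+s)) (Ioi 0) := by
  have hcont : ContinuousOn (fun s : ℝ => s ^ (p-1) / (1+s)) (Ioi 0) := by
    apply (rpow_contOn (p-1)).div (continuousOn_const.add continuousOn_id)
    intro x hx; have : (0:ℝ) < x := hx; exact (by linarith : (0:ℝ) < 1 + x).ne'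
  have h1 : IntegrableOn (fun s : ℝ => s ^ (p-1) / (1+s)) (Ioc 0 1) := by
    rw [integrableOn_Ioc_iff_integrableOn_Ioo]
    have hi : IntegrableOn (fun s : ℝ => s ^ (p-1)) (Ioo (0:ℝ) 1) :=
      (intervalIntegral.integrableOn_Ioo_rpow_iff zero_lt_one).2 (by linarith)
    refine hi.mono' ?_ ?_
    · exact (hcont.mono (Ioo_subset_Ioi_self)).aestronglyMeasurable measurableSet_Ioo
    · filter_upwards [ae_restrict_mem measurableSet_Ioo] with x hx
      have hx0 : (0:ℝ) < x := hx.1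
      rw [Real.norm_eq_abs, abs_div, abs_of_nonneg (rpow_nonneg hx0.le _),
        abs_of_pos (by linarith : (0:ℝ) < 1 + x)]
      exact div_le_self (rpow_nonneg hx0.le _) (by linarith)
  have h2 : IntegrableOn (fun s : ℝ => s ^ (p-1) / (1+s)) (Ioi 1) := by
    have hi : IntegrableOn (fun s : ℝ => s ^ (p-2)) (Ioi (1:ℝ)) :=
      integrableOn_Ioi_rpow_of_lt (by linarith) zero_lt_one
    refine hi.mono' ?_ ?_
    · exact (hcont.mono (Ioi_subset_Ioi zero_le_one)).aestronglyMeasurable measurableSet_Ioi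
    · filter_upwards [ae_restrict_mem measurableSet_Ioi] with x hx
      have hx1 : (1:ℝ) < x := hx
      have hx0 : (0:ℝ) < x := by linarith
      rw [Real.norm_eq_abs, abs_div, abs_of_nonneg (rpow_nonneg hx0.le _),
        abs_of_pos (by linarith : (0:ℝ) < 1 + x)]
      rw [div_le_iff₀ (by linarith)]
      calc x ^ (p-1) = x ^ (p-2) * x := by
            rw [← Real.rpow_add_one hx0.ne']; ring_nf
        _ ≤ x ^ (p-2) * (1+x) := by
            have := rpow_nonneg hx0.le (p-2)
            nlinarith
  have : Ioc (0:ℝ) 1 ∪ Ioi 1 = Ioi 0 := Ioc_union_Ioi_eq_Ioi zero_le_one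
  rw [← this]
  exact h1.union h2

lemma Ipc_pos {p : ℝ} (hp0 : 0 < p) (hp1 : p < 1) : 0 < Ipc p := by
  rw [Ipc]
  rw [setIntegral_pos_iff_support_of_nonneg_ae]
  · have : (Function.support fun s : ℝ => s ^ (p-1) / (1+s)) ∩ Ioi 0 = Ioi 0 := by
      apply inter_eq_self_of_subset_right
      intro x hx
      have hx0 : (0:ℝ) < x := hx
      exact (div_pos (rpow_pos_of_pos hx0 _) (by linarith)).ne'
    rw [this]
    simp
  · filter_upwards [ae_restrict_mem measurableSet_Ioi] with x hx
    have : (0:ℝ) < x := hx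
    positivity
  · exact int_base hp0 hp1

lemma kernel_integrable' {p : ℝ} (hp0 : 0 < p) (hp1 : p < 1) {l m : ℝ}
    (hl : 0 ≤ l) (hm : 0 ≤ m) :
    IntegrableOn (fun s : ℝ => s ^ (p-1) * (l*m/(l+s*m))) (Ioi 0) := by
  rcases eq_or_lt_of_le hl with hl0 | hl0
  · simp only [← hl0, zero_mul, zero_div, mul_zero]
    exact integrableOn_zero
  rcases eq_or_lt_of_le hm with hm0 | hm0
  · simp only [← hm0, mul_zero, zero_div]
    exact integrableOn_zero
  -- positive case: compare with (l/m)^p * base((m/l) s)?? easier: direct comparison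
  have hcont : ContinuousOn (fun s : ℝ => s ^ (p-1) * (l*m/(l+s*m))) (Ioi 0) := by
    apply (rpow_contOn (p-1)).mul
    apply continuousOn_const.div (continuousOn_const.add (continuousOn_id.mul continuousOn_const))
    intro x hx; have : (0:ℝ) < x := hx; exact (by positivity : (0:ℝ) < l + x*m).ne'
  have h1 : IntegrableOn (fun s : ℝ => s ^ (p-1) * (l*m/(l+s*m))) (Ioc 0 1) := by
    rw [integrableOn_Ioc_iff_integrableOn_Ioo]
    have hi : IntegrableOn (fun s : ℝ => m * s ^ (p-1)) (Ioo (0:ℝ) 1) :=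
      ((intervalIntegral.integrableOn_Ioo_rpow_iff zero_lt_one).2 (by linarith)).smul m
    refine hi.mono' ?_ ?_
    · exact (hcont.mono Ioo_subset_Ioi_self).aestronglyMeasurable measurableSet_Ioo
    · filter_upwards [ae_restrict_mem measurableSet_Ioo] with x hx
      have hx0 : (0:ℝ) < x := hx.1
      have hden : (0:ℝ) < l + x*m := by positivity
      rw [Real.norm_eq_abs, abs_mul, abs_of_nonneg (rpow_nonneg hx0.le _),
        abs_of_nonneg (by positivity : (0:ℝ) ≤ l*m/(l+x*m))]
      rw [mul_comm m _]
      apply mul_le_mul_of_nonneg_left _ (rpow_nonneg hx0.le _)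
      rw [div_le_iff₀ hden]
      nlinarith [mul_nonneg (mul_nonneg hm hx0.le) hm]
  have h2 : IntegrableOn (fun s : ℝ => s ^ (p-1) * (l*m/(l+s*m))) (Ioi 1) := by
    have hi : IntegrableOn (fun s : ℝ => l * s ^ (p-2)) (Ioi (1:ℝ)) :=
      (integrableOn_Ioi_rpow_of_lt (by linarith) zero_lt_one).smul l
    refine hi.mono' ?_ ?_
    · exact (hcont.mono (Ioi_subset_Ioi zero_le_one)).aestronglyMeasurable measurableSet_Ioi
    · filter_upwards [ae_restrict_mem measurableSet_Ioi] with x hx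
      have hx1 : (1:ℝ) < x := hx
      have hx0 : (0:ℝ) < x := by linarith
      have hden : (0:ℝ) < l + x*m := by positivity
      rw [Real.norm_eq_abs, abs_mul, abs_of_nonneg (rpow_nonneg hx0.le _),
        abs_of_nonneg (by positivity : (0:ℝ) ≤ l*m/(l+x*m))]
      have hxp : x ^ (p-2) = x ^ (p-1) / x := by
        rw [show p-2 = (p-1)-1 by ring, Real.rpow_sub_one hx0.ne']
      have hfrac : l*m/(l+x*m) ≤ l/x := by
        rw [div_le_div_iff₀ hden hx0]
        nlinarith [mul_nonneg (mul_nonneg hm hx0.le) hm, mul_nonneg hl hm]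
      calc x ^ (p-1) * (l*m/(l+x*m)) ≤ x ^ (p-1) * (l/x) :=
            mul_le_mul_of_nonneg_left hfrac (rpow_nonneg hx0.le _)
        _ = l * x ^ (p-2) := by rw [hxp]; ring
  have : Ioc (0:ℝ) 1 ∪ Ioi 1 = Ioi 0 := Ioc_union_Ioi_eq_Ioi zero_le_one
  rw [← this]
  exact h1.union h2

lemma kernel_integral' {p : ℝ} (hp0 : 0 < p) (hp1 : p < 1) {l m : ℝ}
    (hl : 0 ≤ l) (hm : 0 ≤ m) :
    ∫ s in Ioi (0:ℝ), s ^ (p-1) * (l*m/(l+s*m)) = l ^ p * m ^ (1-p) * Ipc p := by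
  rcases eq_or_lt_of_le hl with hl0 | hl0
  · simp [← hl0, Real.zero_rpow hp0.ne']
  rcases eq_or_lt_of_le hm with hm0 | hm0
  · simp [← hm0, Real.zero_rpow (by linarith : 1-p ≠ 0)]
  set r := l/m with hr
  have hrpos : 0 < r := div_pos hl0 hm0
  clear_value r
  have step1 : ∫ s in Ioi (0:ℝ), s ^ (p-1) * (l*m/(l+s*m))
      = ∫ s in Ioi (0:ℝ), s ^ (p-1) * (l/(r+s)) := by
    apply setIntegral_congr_fun measurableSet_Ioi
    intro s _
    have hmm : l + s*m = (r+s)*m := by rw [hr, add_mul, div_mul_cancel₀ _ hm0.ne']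
    simp only
    rw [hmm, mul_div_mul_right _ _ hm0.ne']
  have step2 : ∫ x in Ioi (0:ℝ), (fun s => s ^ (p-1) * (l/(r+s))) (r*x)
      = r⁻¹ • ∫ x in Ioi (r*0), (fun s => s ^ (p-1) * (l/(r+s))) x :=
    integral_comp_mul_left_Ioi (fun s => s ^ (p-1) * (l/(r+s))) 0 hrpos
  have step3 : ∫ x in Ioi (0:ℝ), (fun s => s ^ (p-1) * (l/(r+s))) (r*x)
      = (r ^ (p-1) * (l/r)) * Ipc p := by
    rw [show Ipc p = ∫ x in Ioi (0:ℝ), x ^ (p-1)/(1+x) from rfl, ← integral_const_mul]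
    apply setIntegral_congr_fun measurableSet_Ioi
    intro x hx
    have hx0 : (0:ℝ) < x := hx
    simp only
    rw [Real.mul_rpow hrpos.le hx0.le]
    have h1 : r + r*x = r*(1+x) := by ring
    rw [h1]
    have hne : (1:ℝ)+x ≠ 0 := by positivity
    field_simp
  have step4 : ∫ s in Ioi (0:ℝ), s ^ (p-1) * (l/(r+s)) = r ^ (p-1) * l * Ipc p := by
    rw [mul_zero] at step2
    rw [step3] at step2
    have := congrArg (fun z => r * z) step2.symm
    simp only [smul_eq_mul, ← mul_assoc, mul_inv_cancel₀ hrpos.ne', one_mul] at this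
    rw [this]
    field_simp
  rw [step1, step4]
  congr 1
  have e1 : l ^ (p-1) * l = l ^ p := by
    rw [← Real.rpow_add_one hl0.ne', show (p-1)+1 = p by ring]
  have e2 : (m ^ (p-1))⁻¹ = m ^ (1-p) := by
    rw [← Real.rpow_neg hm0.le, show -(p-1) = 1-p by ring]
  rw [hr, Real.div_rpow hl0.le hm0.le]
  calc l ^ (p-1) / m ^ (p-1) * l = (l ^ (p-1) * l) * (m ^ (p-1))⁻¹ := by ring
    _ = l ^ p * m ^ (1-p) := by rw [e1, e2]

variable {n : ℕ}

lemma matFun_eq {M : Matrix (Fin n) (Fin n) ℂ} (hM : M.IsHermitian) (g : ℝ → ℝ) :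
    matFun g M = (hM.eigenvectorUnitary : Matrix (Fin n) (Fin n) ℂ) *
      Matrix.diagonal (fun i => (g (hM.eigenvalues i) : ℂ)) *
      star (hM.eigenvectorUnitary : Matrix (Fin n) (Fin n) ℂ) := by
  rw [matFun, dif_pos hM]
  ext a b
  simp only [Matrix.sum_apply, Matrix.smul_apply, Matrix.vecMulVec_apply, Pi.star_apply,
    Matrix.mul_apply, Matrix.diagonal_apply, Finset.sum_ite_eq, Finset.mem_univ, if_true,
    smul_eq_mul]
  simp only [mul_ite, mul_zero, Finset.sum_ite_eq', Finset.mem_univ, if_true,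
    Matrix.star_apply, Matrix.IsHermitian.eigenvectorUnitary_apply]
  apply Finset.sum_congr rfl; intro k _
  ring

lemma trace_diag_conj (d e : Fin n → ℝ) (M : Matrix (Fin n) (Fin n) ℂ) :
    Matrix.trace (Matrix.diagonal (fun i => (d i : ℂ)) * M *
        Matrix.diagonal (fun j => (e j : ℂ)) * Mᴴ)
      = ((∑ i, ∑ j, d i * e j * Complex.normSq (M i j) : ℝ) : ℂ) := by
  have h1 : Matrix.diagonal (fun i => (d i : ℂ)) * M * Matrix.diagonal (fun j => (e j : ℂ))
      = Matrix.of (fun i j => (d i : ℂ) * M i j * (e j : ℂ)) := by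
    ext i j
    simp [Matrix.diagonal_mul, Matrix.mul_diagonal]
  rw [h1]
  simp only [Matrix.trace, Matrix.diag, Matrix.mul_apply, Matrix.conjTranspose_apply,
    Matrix.of_apply]
  push_cast
  apply Finset.sum_congr rfl; intro i _
  apply Finset.sum_congr rfl; intro j _
  simp only [← starRingEnd_apply]
  linear_combination ((d i : ℂ) * (e j : ℂ)) * Complex.mul_conj (M i j)

example (x:ℝ) : (RCLike.ofReal x : ℂ) = (x:ℂ) := rfl

section
variable {ρ A : Matrix (Fin n) (Fin n) ℂ}

lemma star_mul_self_eq_one (hρ : ρ.IsHermitian) :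
    star (hρ.eigenvectorUnitary : Matrix (Fin n) (Fin n) ℂ) *
      (hρ.eigenvectorUnitary : Matrix (Fin n) (Fin n) ℂ) = 1 :=
  Unitary.coe_star_mul_self hρ.eigenvectorUnitary

lemma self_mul_star_eq_one (hρ : ρ.IsHermitian) :
    (hρ.eigenvectorUnitary : Matrix (Fin n) (Fin n) ℂ) *
      star (hρ.eigenvectorUnitary : Matrix (Fin n) (Fin n) ℂ) = 1 :=
  Unitary.coe_mul_star_self hρ.eigenvectorUnitary

lemma trace_conj {U Z : Matrix (Fin n) (Fin n) ℂ} (h : star U * U = 1) :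
    Matrix.trace (U * Z * star U) = Matrix.trace Z := by
  rw [Matrix.trace_mul_cycle, h, Matrix.one_mul]

lemma trace_quad_left (hρ : ρ.IsHermitian) (Y : Matrix (Fin n) (Fin n) ℂ) :
    Matrix.trace (Yᴴ * ρ * Y) = ((∑ i, ∑ j, hρ.eigenvalues i *
      Complex.normSq ((star (hρ.eigenvectorUnitary : Matrix (Fin n) (Fin n) ℂ) * Y *
        (hρ.eigenvectorUnitary : Matrix (Fin n) (Fin n) ℂ)) i j) : ℝ) : ℂ) := by
  set U : Matrix (Fin n) (Fin n) ℂ := (hρ.eigenvectorUnitary : Matrix (Fin n) (Fin n) ℂ) with hU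
  set C : Matrix (Fin n) (Fin n) ℂ := star U * Y * U with hC
  set D : Matrix (Fin n) (Fin n) ℂ := Matrix.diagonal (RCLike.ofReal ∘ hρ.eigenvalues) with hD
  have c1 : U * Uᴴ = 1 := by
    rw [← Matrix.star_eq_conjTranspose]; exact self_mul_star_eq_one hρ
  have c2 : Uᴴ * U = 1 := by
    rw [← Matrix.star_eq_conjTranspose]; exact star_mul_self_eq_one hρ
  have c1' : ∀ X : Matrix (Fin n) (Fin n) ℂ, U * (Uᴴ * X) = X := fun X => by
    rw [← Matrix.mul_assoc, c1, Matrix.one_mul]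
  have c2' : ∀ X : Matrix (Fin n) (Fin n) ℂ, Uᴴ * (U * X) = X := fun X => by
    rw [← Matrix.mul_assoc, c2, Matrix.one_mul]
  have key : Yᴴ * ρ * Y = U * (Cᴴ * D * C) * star U := by
    conv_lhs => rw [hρ.spectral_theorem]
    rw [hC]
    simp only [Matrix.conjTranspose_mul, Matrix.star_eq_conjTranspose,
      Matrix.conjTranspose_conjTranspose, Matrix.mul_assoc, ← hU, ← hD,
      c1, c2, c1', c2', Matrix.mul_one, Matrix.one_mul, Unitary.conjStarAlgAut_apply]
  rw [key, trace_conj (star_mul_self_eq_one hρ)]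
  rw [Matrix.trace_mul_cycle, Matrix.trace_mul_cycle]
  have hins : D * C * Cᴴ = Matrix.diagonal (fun i => (hρ.eigenvalues i : ℂ)) * C *
      Matrix.diagonal (fun _ : Fin n => ((1:ℝ):ℂ)) * Cᴴ := by
    rw [hD]
    norm_num
    rfl
  rw [hins, trace_diag_conj (fun i => hρ.eigenvalues i) (fun _ => (1:ℝ)) C]
  norm_num

lemma trace_quad_right (hρ : ρ.IsHermitian) (Y : Matrix (Fin n) (Fin n) ℂ) :
    Matrix.trace (Yᴴ * Y * ρ) = ((∑ i, ∑ j, hρ.eigenvalues j *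
      Complex.normSq ((star (hρ.eigenvectorUnitary : Matrix (Fin n) (Fin n) ℂ) * Y *
        (hρ.eigenvectorUnitary : Matrix (Fin n) (Fin n) ℂ)) i j) : ℝ) : ℂ) := by
  set U : Matrix (Fin n) (Fin n) ℂ := (hρ.eigenvectorUnitary : Matrix (Fin n) (Fin n) ℂ) with hU
  set C : Matrix (Fin n) (Fin n) ℂ := star U * Y * U with hC
  set D : Matrix (Fin n) (Fin n) ℂ := Matrix.diagonal (RCLike.ofReal ∘ hρ.eigenvalues) with hD
  have c1 : U * Uᴴ = 1 := by
    rw [← Matrix.star_eq_conjTranspose]; exact self_mul_star_eq_one hρ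
  have c2 : Uᴴ * U = 1 := by
    rw [← Matrix.star_eq_conjTranspose]; exact star_mul_self_eq_one hρ
  have c1' : ∀ X : Matrix (Fin n) (Fin n) ℂ, U * (Uᴴ * X) = X := fun X => by
    rw [← Matrix.mul_assoc, c1, Matrix.one_mul]
  have c2' : ∀ X : Matrix (Fin n) (Fin n) ℂ, Uᴴ * (U * X) = X := fun X => by
    rw [← Matrix.mul_assoc, c2, Matrix.one_mul]
  have key : ρ * (Yᴴ * Y) = U * (D * Cᴴ * C) * star U := by
    conv_lhs => rw [hρ.spectral_theorem]
    rw [hC]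
    simp only [Matrix.conjTranspose_mul, Matrix.star_eq_conjTranspose,
      Matrix.conjTranspose_conjTranspose, Matrix.mul_assoc, ← hU, ← hD,
      c1, c2, c1', c2', Matrix.mul_one, Matrix.one_mul, Unitary.conjStarAlgAut_apply]
  rw [Matrix.trace_mul_comm, key, trace_conj (star_mul_self_eq_one hρ)]
  have hins : D * Cᴴ * C = Matrix.diagonal (fun i => (hρ.eigenvalues i : ℂ)) * Cᴴ *
      Matrix.diagonal (fun _ : Fin n => ((1:ℝ):ℂ)) * (Cᴴ)ᴴ := by
    rw [hD]
    norm_num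
    rfl
  rw [hins, trace_diag_conj (fun i => hρ.eigenvalues i) (fun _ => (1:ℝ)) Cᴴ]
  have hcc : ∀ i j, Complex.normSq (Cᴴ i j) = Complex.normSq (C j i) := fun i j => by
    rw [Matrix.conjTranspose_apply, ← starRingEnd_apply, Complex.normSq_conj]
  simp only [hcc, one_mul, mul_one]
  norm_cast
  rw [Finset.sum_comm]

lemma trace_S (hρ : ρ.IsHermitian) (hA : A.IsHermitian) (g h : ℝ → ℝ) :
    Matrix.trace (matFun g ρ * A * matFun h ρ * A)
      = ((∑ i, ∑ j, g (hρ.eigenvalues i) * h (hρ.eigenvalues j) *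
          Complex.normSq ((star (hρ.eigenvectorUnitary : Matrix (Fin n) (Fin n) ℂ) * A *
            (hρ.eigenvectorUnitary : Matrix (Fin n) (Fin n) ℂ)) i j) : ℝ) : ℂ) := by
  set U : Matrix (Fin n) (Fin n) ℂ := (hρ.eigenvectorUnitary : Matrix (Fin n) (Fin n) ℂ) with hU
  set W : Matrix (Fin n) (Fin n) ℂ := star U * A * U with hW
  have c1 : U * Uᴴ = 1 := by
    rw [← Matrix.star_eq_conjTranspose]; exact self_mul_star_eq_one hρ
  have c2 : Uᴴ * U = 1 := by
    rw [← Matrix.star_eq_conjTranspose]; exact star_mul_self_eq_one hρ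
  have c1' : ∀ X : Matrix (Fin n) (Fin n) ℂ, U * (Uᴴ * X) = X := fun X => by
    rw [← Matrix.mul_assoc, c1, Matrix.one_mul]
  have c2' : ∀ X : Matrix (Fin n) (Fin n) ℂ, Uᴴ * (U * X) = X := fun X => by
    rw [← Matrix.mul_assoc, c2, Matrix.one_mul]
  have hWH : W.IsHermitian := by
    rw [Matrix.IsHermitian, hW]
    simp only [Matrix.conjTranspose_mul, Matrix.star_eq_conjTranspose,
      Matrix.conjTranspose_conjTranspose, hA.eq, Matrix.mul_assoc]
  set D1 : Matrix (Fin n) (Fin n) ℂ :=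
    Matrix.diagonal (fun i => ((g (hρ.eigenvalues i) : ℝ) : ℂ)) with hD1
  set D2 : Matrix (Fin n) (Fin n) ℂ :=
    Matrix.diagonal (fun i => ((h (hρ.eigenvalues i) : ℝ) : ℂ)) with hD2
  have key : matFun g ρ * A * matFun h ρ * A = U * (D1 * W * D2 * W) * star U := by
    rw [matFun_eq hρ g, matFun_eq hρ h, hW]
    simp only [Matrix.star_eq_conjTranspose, Matrix.mul_assoc, ← hU, ← hD1, ← hD2,
      c1, c2, c1', c2', Matrix.mul_one, Matrix.one_mul]
  rw [key, trace_conj (star_mul_self_eq_one hρ), hD1, hD2]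
  rw [show D1 * W * D2 * W = D1 * W * D2 * Wᴴ by rw [hWH.eq]]
  rw [hD1, hD2, trace_diag_conj (fun i => g (hρ.eigenvalues i)) (fun j => h (hρ.eigenvalues j)) W]

lemma matFun_p_mul {p : ℝ} (hρ : ρ.PosSemidef) :
    matFun (fun x => x ^ p) ρ * matFun (fun x => x ^ (1-p)) ρ = ρ := by
  set U : Matrix (Fin n) (Fin n) ℂ := (hρ.1.eigenvectorUnitary : Matrix (Fin n) (Fin n) ℂ) with hU
  rw [matFun_eq hρ.1, matFun_eq hρ.1]
  have c2 : star U * U = 1 := star_mul_self_eq_one hρ.1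
  have hdd : Matrix.diagonal (fun i => ((hρ.1.eigenvalues i ^ p : ℝ) : ℂ)) *
      Matrix.diagonal (fun i => ((hρ.1.eigenvalues i ^ (1-p) : ℝ) : ℂ))
      = Matrix.diagonal (RCLike.ofReal ∘ hρ.1.eigenvalues) := by
    rw [Matrix.diagonal_mul_diagonal]
    have : (fun i => ((hρ.1.eigenvalues i ^ p : ℝ):ℂ) * ((hρ.1.eigenvalues i ^ (1-p) : ℝ):ℂ))
        = (RCLike.ofReal ∘ hρ.1.eigenvalues) := by
      funext i
      have h0 : 0 ≤ hρ.1.eigenvalues i := hρ.eigenvalues_nonneg i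
      rw [show ((RCLike.ofReal ∘ hρ.1.eigenvalues) i : ℂ) = ((hρ.1.eigenvalues i : ℝ) : ℂ) from rfl]
      norm_cast
      rw [← Real.rpow_add' h0 (by norm_num)]
      norm_num
    rw [this]
  calc U * Matrix.diagonal (fun i => ((hρ.1.eigenvalues i ^ p : ℝ):ℂ)) * star U *
        (U * Matrix.diagonal (fun i => ((hρ.1.eigenvalues i ^ (1-p) : ℝ):ℂ)) * star U)
      = U * (Matrix.diagonal (fun i => ((hρ.1.eigenvalues i ^ p : ℝ):ℂ)) *
          Matrix.diagonal (fun i => ((hρ.1.eigenvalues i ^ (1-p) : ℝ):ℂ))) * star U := by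
        have : ∀ X : Matrix (Fin n) (Fin n) ℂ, star U * (U * X) = X := fun X => by
          rw [← Matrix.mul_assoc, c2, Matrix.one_mul]
        simp only [Matrix.mul_assoc, this]
    _ = ρ := by rw [hdd]; exact hρ.1.spectral_theorem.symm


lemma wyd_eq {p : ℝ} (hρ : ρ.PosSemidef) (hA : A.IsHermitian) :
    wyd p ρ A = Matrix.trace (ρ * A * A) -
      ((∑ i, ∑ j, hρ.1.eigenvalues i ^ p * hρ.1.eigenvalues j ^ (1-p) *
          Complex.normSq ((star (hρ.1.eigenvectorUnitary : Matrix (Fin n) (Fin n) ℂ) * A *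
            (hρ.1.eigenvectorUnitary : Matrix (Fin n) (Fin n) ℂ)) i j) : ℝ) : ℂ) := by
  set X : Matrix (Fin n) (Fin n) ℂ := matFun (fun x => x ^ p) ρ with hX
  set Y : Matrix (Fin n) (Fin n) ℂ := matFun (fun x => x ^ (1-p)) ρ with hY
  have hXY : X * Y = ρ := matFun_p_mul hρ
  have hYX : Y * X = ρ := by
    have := matFun_p_mul (p := 1-p) hρ
    rw [show (fun x : ℝ => x ^ (1-(1-p))) = (fun x : ℝ => x ^ p) by norm_num] at this
    exact this
  have expand : (X*A - A*X) * (Y*A - A*Y) = X*A*Y*A - X*A*A*Y - A*X*Y*A + A*X*A*Y := by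
    noncomm_ring
  have h1 : Matrix.trace (X*A*A*Y) = Matrix.trace (ρ*A*A) := by
    rw [Matrix.trace_mul_comm (X*A*A) Y, show Y*(X*A*A) = (Y*X)*A*A by noncomm_ring, hYX]
  have h2 : Matrix.trace (A*X*Y*A) = Matrix.trace (ρ*A*A) := by
    rw [Matrix.trace_mul_comm (A*X*Y) A, show A*(A*X*Y) = (A*A)*(X*Y) by noncomm_ring,
      Matrix.trace_mul_comm (A*A) (X*Y), show (X*Y)*(A*A) = (X*Y)*A*A by noncomm_ring, hXY]
  have h3 : Matrix.trace (A*X*A*Y) = Matrix.trace (X*A*Y*A) := by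
    rw [show A*X*A*Y = A*(X*A*Y) by noncomm_ring, Matrix.trace_mul_comm A (X*A*Y)]
  have h4 : Matrix.trace (X*A*Y*A)
      = ((∑ i, ∑ j, hρ.1.eigenvalues i ^ p * hρ.1.eigenvalues j ^ (1-p) *
          Complex.normSq ((star (hρ.1.eigenvectorUnitary : Matrix (Fin n) (Fin n) ℂ) * A *
            (hρ.1.eigenvectorUnitary : Matrix (Fin n) (Fin n) ℂ)) i j) : ℝ) : ℂ) := by
    rw [hX, hY]
    exact trace_S hρ.1 hA (fun x => x ^ p) (fun x => x ^ (1-p))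
  rw [wyd, ← hX, ← hY, expand]
  simp only [Matrix.trace_add, Matrix.trace_sub]
  rw [h1, h2, h3, h4]
  ring

lemma scalarE {l ν : ℝ} (hl : 0 ≤ l) (hν : 0 ≤ ν) (w c : ℂ) :
    l*ν/(l+ν) * Complex.normSq w ≤ l * Complex.normSq (w - c) + ν * Complex.normSq c := by
  rcases eq_or_lt_of_le (by positivity : (0:ℝ) ≤ l + ν) with h0 | hpos
  · have hl0 : l = 0 := by linarith
    have hν0 : ν = 0 := by linarith
    simp [hl0, hν0]
  · rw [div_mul_eq_mul_div, div_le_iff₀ hpos]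
    simp only [Complex.normSq_apply, Complex.sub_re, Complex.sub_im]
    nlinarith [sq_nonneg (l*(w.re-c.re) - ν*c.re), sq_nonneg (l*(w.im-c.im) - ν*c.im),
      sq_nonneg (w.re-c.re), sq_nonneg (w.im-c.im), sq_nonneg c.re, sq_nonneg c.im]

lemma scalarF {l ν : ℝ} (hl : 0 ≤ l) (hν : 0 ≤ ν) (w : ℂ) :
    l * Complex.normSq (w - ((l/(l+ν) : ℝ):ℂ)*w) + ν * Complex.normSq (((l/(l+ν) : ℝ):ℂ)*w)
      = l*ν/(l+ν) * Complex.normSq w := by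
  rcases eq_or_lt_of_le (by positivity : (0:ℝ) ≤ l + ν) with h0 | hpos
  · have hl0 : l = 0 := by linarith
    have hν0 : ν = 0 := by linarith
    simp [hl0, hν0]
  · have hsub : w - ((l/(l+ν):ℝ):ℂ)*w = ((ν/(l+ν):ℝ):ℂ)*w := by
      have hne : (l:ℂ) + ν ≠ 0 := by
        have : ((l+ν:ℝ):ℂ) ≠ 0 := by exact_mod_cast hpos.ne'
        push_cast at this; exact this
      have : ((ν/(l+ν):ℝ):ℂ) = 1 - ((l/(l+ν):ℝ):ℂ) := by
        push_cast
        field_simp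
        ring
      rw [this]
      ring
    rw [hsub, Complex.normSq_mul, Complex.normSq_mul, Complex.normSq_ofReal,
      Complex.normSq_ofReal]
    field_simp
    ring

noncomputable def Gker {n : ℕ} (s : ℝ) (lam : Fin n → ℝ) (W : Matrix (Fin n) (Fin n) ℂ) : ℝ :=
  ∑ i, ∑ j, (lam i * lam j / (lam i + s * lam j)) * Complex.normSq (W i j)

lemma G_lower (hρ : ρ.PosSemidef) {s : ℝ} (hs : 0 < s) (Y : Matrix (Fin n) (Fin n) ℂ) :
    s * Gker s hρ.1.eigenvalues
        (star (hρ.1.eigenvectorUnitary : Matrix (Fin n) (Fin n) ℂ) * A *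
          (hρ.1.eigenvectorUnitary : Matrix (Fin n) (Fin n) ℂ)) ≤
      (Matrix.trace ((A-Y)ᴴ * ρ * (A-Y))).re + s * (Matrix.trace (Yᴴ*Y*ρ)).re := by
  set U : Matrix (Fin n) (Fin n) ℂ := (hρ.1.eigenvectorUnitary : Matrix (Fin n) (Fin n) ℂ)
  set W : Matrix (Fin n) (Fin n) ℂ := star U * A * U with hW
  set C : Matrix (Fin n) (Fin n) ℂ := star U * Y * U with hC
  rw [trace_quad_left hρ.1 (A-Y), trace_quad_right hρ.1 Y, Complex.ofReal_re, Complex.ofReal_re]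
  have hWC : star U * (A-Y) * U = W - C := by rw [hW, hC]; noncomm_ring
  rw [hWC, Gker]
  simp only [Finset.mul_sum]
  rw [← Finset.sum_add_distrib]
  apply Finset.sum_le_sum
  intro i _
  rw [← Finset.sum_add_distrib]
  apply Finset.sum_le_sum
  intro j _
  have hE := scalarE (hρ.eigenvalues_nonneg i) (mul_nonneg hs.le (hρ.eigenvalues_nonneg j))
    (W i j) (C i j)
  have e1 : s * (hρ.1.eigenvalues i * hρ.1.eigenvalues j /
        (hρ.1.eigenvalues i + s * hρ.1.eigenvalues j) * Complex.normSq (W i j))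
      = hρ.1.eigenvalues i * (s * hρ.1.eigenvalues j) /
        (hρ.1.eigenvalues i + s * hρ.1.eigenvalues j) * Complex.normSq (W i j) := by
    ring
  rw [e1, Matrix.sub_apply]
  calc hρ.1.eigenvalues i * (s * hρ.1.eigenvalues j) /
        (hρ.1.eigenvalues i + s * hρ.1.eigenvalues j) * Complex.normSq (W i j)
      ≤ hρ.1.eigenvalues i * Complex.normSq (W i j - C i j)
        + (s * hρ.1.eigenvalues j) * Complex.normSq (C i j) := hE
    _ = hρ.1.eigenvalues i * Complex.normSq (W i j - C i j)
        + s * (hρ.1.eigenvalues j * Complex.normSq (C i j)) := by ring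

lemma G_attain (hρ : ρ.PosSemidef) {s : ℝ} (hs : 0 < s) :
    ∃ Y : Matrix (Fin n) (Fin n) ℂ,
      (Matrix.trace ((A-Y)ᴴ * ρ * (A-Y))).re + s * (Matrix.trace (Yᴴ*Y*ρ)).re
        = s * Gker s hρ.1.eigenvalues
            (star (hρ.1.eigenvectorUnitary : Matrix (Fin n) (Fin n) ℂ) * A *
              (hρ.1.eigenvectorUnitary : Matrix (Fin n) (Fin n) ℂ)) := by
  classical
  set U : Matrix (Fin n) (Fin n) ℂ := (hρ.1.eigenvectorUnitary : Matrix (Fin n) (Fin n) ℂ) with hU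
  set W : Matrix (Fin n) (Fin n) ℂ := star U * A * U with hW
  set lam : Fin n → ℝ := hρ.1.eigenvalues with hlam
  set Cmin : Matrix (Fin n) (Fin n) ℂ :=
    Matrix.of (fun i j => ((lam i/(lam i + s * lam j) : ℝ):ℂ) * W i j) with hCmin
  refine ⟨U * Cmin * star U, ?_⟩
  have c2 : star U * U = 1 := star_mul_self_eq_one hρ.1
  have hCY : star U * (U * Cmin * star U) * U = Cmin := by
    have h2' : ∀ X : Matrix (Fin n) (Fin n) ℂ, star U * (U * X) = X := fun X => by
      rw [← Matrix.mul_assoc, c2, Matrix.one_mul]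
    calc star U * (U * Cmin * star U) * U
        = star U * (U * (Cmin * (star U * U))) := by noncomm_ring
      _ = Cmin := by rw [c2, Matrix.mul_one, h2']
  rw [trace_quad_left hρ.1 _, trace_quad_right hρ.1 _, Complex.ofReal_re, Complex.ofReal_re]
  have hWC : star U * (A - U * Cmin * star U) * U = W - Cmin := by
    rw [Matrix.mul_sub, Matrix.sub_mul, ← hW, hCY]
  rw [hWC, hCY, Gker]
  simp only [Finset.mul_sum]
  rw [← Finset.sum_add_distrib]
  apply Finset.sum_congr rfl
  intro i _
  rw [← Finset.sum_add_distrib]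
  apply Finset.sum_congr rfl
  intro j _
  have hF := scalarF (hρ.eigenvalues_nonneg i) (mul_nonneg hs.le (hρ.eigenvalues_nonneg j))
    (W i j)
  rw [Matrix.sub_apply, hCmin]
  simp only [Matrix.of_apply]
  calc lam i * Complex.normSq (W i j - ((lam i/(lam i + s * lam j):ℝ):ℂ) * W i j)
        + s * (lam j * Complex.normSq (((lam i/(lam i + s * lam j):ℝ):ℂ) * W i j))
      = lam i * Complex.normSq (W i j - ((lam i/(lam i + s * lam j):ℝ):ℂ) * W i j)
        + (s * lam j) * Complex.normSq (((lam i/(lam i + s * lam j):ℝ):ℂ) * W i j) := by ring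
    _ = lam i * (s * lam j) / (lam i + s * lam j) * Complex.normSq (W i j) := hF
    _ = s * (lam i * lam j / (lam i + s * lam j) * Complex.normSq (W i j)) := by ring

lemma smul_trace_re (t : ℝ) (z : ℂ) : (t • z).re = t * z.re := by
  simp [Complex.real_smul, Complex.mul_re]

lemma quad_lin_left {ρ σ : Matrix (Fin n) (Fin n) ℂ} (t : ℝ) (Z : Matrix (Fin n) (Fin n) ℂ) :
    (Matrix.trace (Zᴴ * (t • ρ + (1-t) • σ) * Z)).re
      = t * (Matrix.trace (Zᴴ * ρ * Z)).re + (1-t) * (Matrix.trace (Zᴴ * σ * Z)).re := by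
  have : Zᴴ * (t • ρ + (1-t) • σ) * Z = t • (Zᴴ * ρ * Z) + (1-t) • (Zᴴ * σ * Z) := by
    rw [Matrix.mul_add, Matrix.add_mul, Matrix.mul_smul, Matrix.mul_smul,
      Matrix.smul_mul, Matrix.smul_mul]
  rw [this, Matrix.trace_add, Matrix.trace_smul, Matrix.trace_smul, Complex.add_re,
    smul_trace_re, smul_trace_re]

lemma quad_lin_right {ρ σ : Matrix (Fin n) (Fin n) ℂ} (t : ℝ) (Z : Matrix (Fin n) (Fin n) ℂ) :
    (Matrix.trace (Zᴴ * Z * (t • ρ + (1-t) • σ))).re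
      = t * (Matrix.trace (Zᴴ * Z * ρ)).re + (1-t) * (Matrix.trace (Zᴴ * Z * σ)).re := by
  have : Zᴴ * Z * (t • ρ + (1-t) • σ) = t • (Zᴴ * Z * ρ) + (1-t) • (Zᴴ * Z * σ) := by
    rw [Matrix.mul_add, Matrix.mul_smul, Matrix.mul_smul]
  rw [this, Matrix.trace_add, Matrix.trace_smul, Matrix.trace_smul, Complex.add_re,
    smul_trace_re, smul_trace_re]

lemma G_concave {ρ σ : Matrix (Fin n) (Fin n) ℂ} (hρ : ρ.PosSemidef) (hσ : σ.PosSemidef)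
    {t : ℝ} (ht0 : 0 ≤ t) (ht1 : t ≤ 1)
    (hbar : (t • ρ + (1-t) • σ).PosSemidef) {s : ℝ} (hs : 0 < s) :
    t * Gker s hρ.1.eigenvalues
        (star (hρ.1.eigenvectorUnitary : Matrix (Fin n) (Fin n) ℂ) * A *
          (hρ.1.eigenvectorUnitary : Matrix (Fin n) (Fin n) ℂ))
      + (1-t) * Gker s hσ.1.eigenvalues
        (star (hσ.1.eigenvectorUnitary : Matrix (Fin n) (Fin n) ℂ) * A *
          (hσ.1.eigenvectorUnitary : Matrix (Fin n) (Fin n) ℂ))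
      ≤ Gker s hbar.1.eigenvalues
        (star (hbar.1.eigenvectorUnitary : Matrix (Fin n) (Fin n) ℂ) * A *
          (hbar.1.eigenvectorUnitary : Matrix (Fin n) (Fin n) ℂ)) := by
  obtain ⟨Y, hY⟩ := G_attain (A := A) hbar hs
  set Gb := Gker s hbar.1.eigenvalues
        (star (hbar.1.eigenvectorUnitary : Matrix (Fin n) (Fin n) ℂ) * A *
          (hbar.1.eigenvectorUnitary : Matrix (Fin n) (Fin n) ℂ))
  set Gr := Gker s hρ.1.eigenvalues
        (star (hρ.1.eigenvectorUnitary : Matrix (Fin n) (Fin n) ℂ) * A *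
          (hρ.1.eigenvectorUnitary : Matrix (Fin n) (Fin n) ℂ))
  set Gs := Gker s hσ.1.eigenvalues
        (star (hσ.1.eigenvectorUnitary : Matrix (Fin n) (Fin n) ℂ) * A *
          (hσ.1.eigenvectorUnitary : Matrix (Fin n) (Fin n) ℂ))
  have hlin : s * Gb = t * ((Matrix.trace ((A-Y)ᴴ * ρ * (A-Y))).re
        + s * (Matrix.trace (Yᴴ*Y*ρ)).re)
      + (1-t) * ((Matrix.trace ((A-Y)ᴴ * σ * (A-Y))).re
        + s * (Matrix.trace (Yᴴ*Y*σ)).re) := by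
    rw [← hY, quad_lin_left t (A-Y), quad_lin_right t Y]
    ring
  have h1 := G_lower (A := A) hρ hs Y
  have h2 := G_lower (A := A) hσ hs Y
  have key : s * (t * Gr + (1-t) * Gs) ≤ s * Gb := by
    rw [hlin]
    have e1 : s * (t * Gr + (1-t) * Gs) = t * (s * Gr) + (1-t) * (s * Gs) := by ring
    rw [e1]
    have := mul_le_mul_of_nonneg_left h1 ht0
    have := mul_le_mul_of_nonneg_left h2 (by linarith : (0:ℝ) ≤ 1-t)
    linarith
  exact le_of_mul_le_mul_left key hs



lemma Gker_expand {p : ℝ} (lam : Fin n → ℝ) (W : Matrix (Fin n) (Fin n) ℂ) :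
    (fun s : ℝ => s ^ (p-1) * Gker s lam W)
      = fun s : ℝ => ∑ i, ∑ j,
          (s ^ (p-1) * (lam i * lam j / (lam i + s * lam j))) * Complex.normSq (W i j) := by
  funext s
  rw [Gker, Finset.mul_sum]
  apply Finset.sum_congr rfl
  intro i _
  rw [Finset.mul_sum]
  apply Finset.sum_congr rfl
  intro j _
  ring

lemma Gker_integrable {p : ℝ} (hp0 : 0 < p) (hp1 : p < 1) (lam : Fin n → ℝ)
    (hlam : ∀ i, 0 ≤ lam i) (W : Matrix (Fin n) (Fin n) ℂ) :
    IntegrableOn (fun s : ℝ => s ^ (p-1) * Gker s lam W) (Ioi 0) := by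
  rw [Gker_expand]
  apply integrable_finset_sum
  intro i _
  apply integrable_finset_sum
  intro j _
  exact (kernel_integrable' hp0 hp1 (hlam i) (hlam j)).mul_const _

lemma Gker_integral {p : ℝ} (hp0 : 0 < p) (hp1 : p < 1) (lam : Fin n → ℝ)
    (hlam : ∀ i, 0 ≤ lam i) (W : Matrix (Fin n) (Fin n) ℂ) :
    ∫ s in Ioi (0:ℝ), s ^ (p-1) * Gker s lam W
      = (∑ i, ∑ j, lam i ^ p * lam j ^ (1-p) * Complex.normSq (W i j)) * Ipc p := by
  rw [Gker_expand]
  rw [integral_finset_sum _ (fun i _ => integrable_finset_sum _ (fun j _ =>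
    (kernel_integrable' hp0 hp1 (hlam i) (hlam j)).mul_const _))]
  rw [Finset.sum_mul]
  apply Finset.sum_congr rfl
  intro i _
  rw [integral_finset_sum _ (fun j _ => (kernel_integrable' hp0 hp1 (hlam i) (hlam j)).mul_const _)]
  rw [Finset.sum_mul]
  apply Finset.sum_congr rfl
  intro j _
  rw [integral_mul_const, kernel_integral' hp0 hp1 (hlam i) (hlam j)]
  ring

noncomputable def Sval (p : ℝ) {ρ : Matrix (Fin n) (Fin n) ℂ} (hρ : ρ.IsHermitian)
    (A : Matrix (Fin n) (Fin n) ℂ) : ℝ :=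
  ∑ i, ∑ j, hρ.eigenvalues i ^ p * hρ.eigenvalues j ^ (1-p) *
    Complex.normSq ((star (hρ.eigenvectorUnitary : Matrix (Fin n) (Fin n) ℂ) * A *
      (hρ.eigenvectorUnitary : Matrix (Fin n) (Fin n) ℂ)) i j)

lemma wyd_eq' {p : ℝ} (hρ : ρ.PosSemidef) (hA : A.IsHermitian) :
    wyd p ρ A = Matrix.trace (ρ * A * A) - ((Sval p hρ.1 A : ℝ) : ℂ) :=
  wyd_eq hρ hA

lemma psd_combo {ρ σ : Matrix (Fin n) (Fin n) ℂ} (hρ : ρ.PosSemidef) (hσ : σ.PosSemidef)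
    {t : ℝ} (ht0 : 0 ≤ t) (ht1 : t ≤ 1) : (t • ρ + (1-t) • σ).PosSemidef := by
  constructor
  · have : (t • ρ + (1-t) • σ)ᴴ = t • ρᴴ + (1-t) • σᴴ := by
      rw [Matrix.conjTranspose_add, Matrix.conjTranspose_smul, Matrix.conjTranspose_smul,
        star_trivial, star_trivial]
    rw [Matrix.IsHermitian, this, hρ.1.eq, hσ.1.eq]
  · exact ((hρ.smul ht0).add (hσ.smul (by linarith : (0:ℝ) ≤ 1-t))).2

lemma S_concave {p : ℝ} (hp0 : 0 < p) (hp1 : p < 1) {ρ σ : Matrix (Fin n) (Fin n) ℂ}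
    (hρ : ρ.PosSemidef) (hσ : σ.PosSemidef) {t : ℝ} (ht0 : 0 ≤ t) (ht1 : t ≤ 1)
    (hbar : (t • ρ + (1-t) • σ).PosSemidef) :
    t * Sval p hρ.1 A + (1-t) * Sval p hσ.1 A ≤ Sval p hbar.1 A := by
  set Wρ := star (hρ.1.eigenvectorUnitary : Matrix (Fin n) (Fin n) ℂ) * A *
      (hρ.1.eigenvectorUnitary : Matrix (Fin n) (Fin n) ℂ) with hWρ
  set Wσ := star (hσ.1.eigenvectorUnitary : Matrix (Fin n) (Fin n) ℂ) * A *
      (hσ.1.eigenvectorUnitary : Matrix (Fin n) (Fin n) ℂ) with hWσ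
  set Wb := star (hbar.1.eigenvectorUnitary : Matrix (Fin n) (Fin n) ℂ) * A *
      (hbar.1.eigenvectorUnitary : Matrix (Fin n) (Fin n) ℂ) with hWb
  have hiρ := Gker_integrable hp0 hp1 hρ.1.eigenvalues hρ.eigenvalues_nonneg Wρ
  have hiσ := Gker_integrable hp0 hp1 hσ.1.eigenvalues hσ.eigenvalues_nonneg Wσ
  have hib := Gker_integrable hp0 hp1 hbar.1.eigenvalues hbar.eigenvalues_nonneg Wb
  have hmono : ∫ s in Ioi (0:ℝ),
        (t * (s ^ (p-1) * Gker s hρ.1.eigenvalues Wρ)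
          + (1-t) * (s ^ (p-1) * Gker s hσ.1.eigenvalues Wσ))
      ≤ ∫ s in Ioi (0:ℝ), s ^ (p-1) * Gker s hbar.1.eigenvalues Wb := by
    apply setIntegral_mono_on
    · exact (hiρ.const_mul t).add (hiσ.const_mul (1-t))
    · exact hib
    · exact measurableSet_Ioi
    · intro s hs
      have hs0 : (0:ℝ) < s := hs
      have hG := G_concave (A := A) hρ hσ ht0 ht1 hbar hs0
      have hsp : (0:ℝ) ≤ s ^ (p-1) := Real.rpow_nonneg hs0.le _
      have := mul_le_mul_of_nonneg_left hG hsp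
      nlinarith [this]
  rw [MeasureTheory.integral_add (hiρ.const_mul t) (hiσ.const_mul (1-t))] at hmono
  rw [integral_const_mul, integral_const_mul] at hmono
  rw [Gker_integral hp0 hp1 _ hρ.eigenvalues_nonneg, Gker_integral hp0 hp1 _ hσ.eigenvalues_nonneg,
    Gker_integral hp0 hp1 _ hbar.eigenvalues_nonneg] at hmono
  have hIpc : 0 < Ipc p := Ipc_pos hp0 hp1
  have : (t * Sval p hρ.1 A + (1-t) * Sval p hσ.1 A) * Ipc p ≤ Sval p hbar.1 A * Ipc p := by
    rw [Sval, Sval, Sval]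
    nlinarith [hmono]
  exact le_of_mul_le_mul_right this hIpc

end


/-- Convexity of the Wigner-Yanase-Dyson skew information, `0 < p < 1`, in the state
variable on positive semidefinite density matrices (Lieb's theorem). -/
theorem wyd_convex {n : ℕ} (p : ℝ) (hp0 : 0 < p) (hp1 : p < 1)
    (A : Matrix (Fin n) (Fin n) ℂ) (hA : A.IsHermitian)
    (ρ σ : Matrix (Fin n) (Fin n) ℂ) (hρ : ρ.PosSemidef) (hσ : σ.PosSemidef)
    (hρtr : ρ.trace = 1) (hσtr : σ.trace = 1)
    (t : ℝ) (ht0 : 0 ≤ t) (ht1 : t ≤ 1) :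
    wyd p (t • ρ + (1 - t) • σ) A ≤ (t : ℂ) * wyd p ρ A + ((1 - t : ℝ) : ℂ) * wyd p σ A := by
  have hbar : (t • ρ + (1 - t) • σ).PosSemidef := psd_combo hρ hσ ht0 ht1
  have eρ := wyd_eq' (p := p) hρ hA
  have eσ := wyd_eq' (p := p) hσ hA
  have ebar := wyd_eq' (p := p) hbar hA
  have hS := S_concave (A := A) hp0 hp1 hρ hσ ht0 ht1 hbar
  have Tlin : Matrix.trace ((t • ρ + (1 - t) • σ) * A * A)
      = t • Matrix.trace (ρ * A * A) + (1-t) • Matrix.trace (σ * A * A) := by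
    have : (t • ρ + (1 - t) • σ) * A * A = t • (ρ * A * A) + (1-t) • (σ * A * A) := by
      rw [Matrix.add_mul, Matrix.add_mul, Matrix.smul_mul, Matrix.smul_mul,
        Matrix.smul_mul, Matrix.smul_mul]
    rw [this, Matrix.trace_add, Matrix.trace_smul, Matrix.trace_smul]
  rw [ebar, eρ, eσ, Tlin]
  rw [Complex.le_def]
  constructor
  · simp only [Complex.add_re, Complex.sub_re, Complex.mul_re, Complex.ofReal_re,
      Complex.ofReal_im, Complex.sub_im, Complex.mul_im, smul_trace_re]
    have : (t • Matrix.trace (ρ * A * A) + (1-t) • Matrix.trace (σ * A * A)).im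
        = t * (Matrix.trace (ρ * A * A)).im + (1-t) * (Matrix.trace (σ * A * A)).im := by
      simp [Complex.add_im, Complex.real_smul, Complex.mul_im]
    nlinarith [hS]
  · simp [Complex.add_im, Complex.sub_im, Complex.mul_im, Complex.real_smul,
      Complex.mul_re, Complex.ofReal_re, Complex.ofReal_im]
end

section
/- Let f ∈ F_op with Morozova-Chentsov function c, and let ρ be a semi-quantum state on ℂ^n ⊗ ℂ^m that is positive definite, with spectral decomposition ρ = Σ_k λ_k v_k v_k* (orthonormal eigenbasis (v_k), eigenvalues λ_k > 0). Then for every n×n complex Hermitian matrix A and every m×m complex Hermitian matrix B the cross term vanishes: Σ_{k,l} ĉ(λ_k, λ_l) · ⟨v_k, (A ⊗ 1₂) v_l⟩ · ⟨v_l, (1₁ ⊗ B) v_k⟩ = 0 (equivalently, Tr((A⊗1₂)·ĉ(L_ρ,R_ρ)(1₁⊗B)) = 0). -/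
open Matrix Kronecker ComplexOrder

/-- `ĉ(x,y) = (x-y)² · c(x,y)` where `c(x,y) = 1/(y·f(x/y))` is the
Morozova-Chentsov function associated with `f`. -/
noncomputable def chat (f : ℝ → ℝ) (x y : ℝ) : ℝ :=
  (x - y) ^ 2 * (1 / (y * f (x / y)))

/-- The quadratic form `Σ_{k,l} ĉ(λ_k,λ_l)·|⟨u_k, A u_l⟩|²` computed from the spectral
decomposition of the Hermitian matrix `ρ` (junk value `0` on non-Hermitian matrices). -/
noncomputable def skewSum {ι : Type} [Fintype ι] [DecidableEq ι] (f : ℝ → ℝ)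
    (ρ A : Matrix ι ι ℂ) : ℝ :=
  if hρ : ρ.IsHermitian then
    ∑ i, ∑ j, chat f (hρ.eigenvalues i) (hρ.eigenvalues j) *
      Complex.normSq (star ⇑(hρ.eigenvectorBasis i) ⬝ᵥ A *ᵥ ⇑(hρ.eigenvectorBasis j))
  else 0

/-- A bipartite state `ρ` on `ℂⁿ ⊗ ℂᵐ` is semi-quantum if `ρ = Σ_i p_i·(P_i ⊗ ρ_i)` for
mutually orthogonal rank-one projections `(P_i)` summing to the identity, a probability
distribution `(p_i)` and density matrices `ρ_i` on the second factor. -/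
def IsSemiQuantum {n m : ℕ} (ρ : Matrix (Fin n × Fin m) (Fin n × Fin m) ℂ) : Prop :=
  ∃ (P : Fin n → Matrix (Fin n) (Fin n) ℂ) (p : Fin n → ℝ)
      (σ : Fin n → Matrix (Fin m) (Fin m) ℂ),
    (∀ i, (P i).IsHermitian) ∧ (∀ i, P i * P i = P i) ∧
    (∀ i j, i ≠ j → P i * P j = 0) ∧ (∑ i, P i = 1) ∧ (∀ i, (P i).rank = 1) ∧
    (∀ i, 0 ≤ p i) ∧ (∑ i, p i = 1) ∧
    (∀ i, (σ i).PosSemidef) ∧ (∀ i, (σ i).trace = 1) ∧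
    ρ = ∑ i, (p i : ℂ) • (P i ⊗ₖ σ i)

set_option linter.unusedSectionVars false
set_option linter.unusedVariables false
set_option maxHeartbeats 1600000

section Aux
variable {ι : Type} [Fintype ι] [DecidableEq ι]

lemma gram_one (v : ι → ι → ℂ)
    (hv : ∀ k l, star (v k) ⬝ᵥ v l = if k = l then 1 else 0) :
    (Matrix.of fun i k => v k i)ᴴ * (Matrix.of fun i k => v k i) = 1 := by
  ext k l
  have := hv k l
  simpa [Matrix.mul_apply, Matrix.conjTranspose_apply, Matrix.one_apply, dotProduct] using this

lemma expand_entry (U C : Matrix ι ι ℂ) (k l : ι) :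
    (Uᴴ * C * U) k l = ∑ p, ∑ q, (starRingEnd ℂ) (U p k) * (C p q * U q l) := by
  rw [Matrix.mul_assoc, Matrix.mul_apply]
  refine Finset.sum_congr rfl fun p _ => ?_
  rw [Matrix.mul_apply, Finset.mul_sum]
  simp [Matrix.conjTranspose_apply]

lemma dot_expand (X : Matrix ι ι ℂ) (x y : ι → ℂ) :
    star x ⬝ᵥ X *ᵥ y = ∑ p, ∑ q, (starRingEnd ℂ) (x p) * (X p q * y q) := by
  simp [dotProduct, Matrix.mulVec, Finset.mul_sum]

lemma entry_eq (X : Matrix ι ι ℂ) (v : ι → ι → ℂ) (k l : ι) :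
    ((Matrix.of fun i k => v k i)ᴴ * X * (Matrix.of fun i k => v k i)) k l
      = star (v k) ⬝ᵥ X *ᵥ v l := by
  rw [expand_entry, dot_expand]
  rfl

lemma decomp_matrix (v : ι → ι → ℂ) (lam : ι → ℝ) :
    ∑ k, (lam k : ℂ) • Matrix.vecMulVec (v k) (star (v k))
      = (Matrix.of fun i k => v k i) * Matrix.diagonal (fun k => (lam k : ℂ))
        * (Matrix.of fun i k => v k i)ᴴ := by
  ext i j
  rw [Matrix.mul_apply]
  simp only [Matrix.sum_apply, Matrix.smul_apply, Matrix.vecMulVec_apply,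
    Matrix.mul_diagonal, Matrix.conjTranspose_apply, Matrix.of_apply, smul_eq_mul,
    Pi.star_apply]
  exact Finset.sum_congr rfl fun k _ => by ring

lemma trace_double (P Q : Matrix ι ι ℂ) :
    ∑ k, ∑ l, P k l * Q l k = Matrix.trace (P * Q) := by
  simp [Matrix.trace, Matrix.diag, Matrix.mul_apply]

lemma sum_weighted_eq (G : ℝ → ℝ → ℂ) (U M N : Matrix ι ι ℂ) (lam mu : ι → ℝ)
    (hU : U * Uᴴ = 1)
    (hcomm : ∀ p k, (lam p : ℂ) * U p k = U p k * (mu k : ℂ)) :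
    ∑ k, ∑ l, G (mu k) (mu l) * ((Uᴴ * M * U) k l) * ((Uᴴ * N * U) l k)
      = ∑ p, ∑ q, G (lam p) (lam q) * M p q * N q p := by
  set Mt : Matrix ι ι ℂ := Matrix.of fun p q => G (lam p) (lam q) * M p q with hMt
  have key : ∀ k l, G (mu k) (mu l) * ((Uᴴ * M * U) k l) = (Uᴴ * Mt * U) k l := by
    intro k l
    rw [expand_entry, expand_entry, Finset.mul_sum]
    refine Finset.sum_congr rfl fun p _ => ?_
    rw [Finset.mul_sum]
    refine Finset.sum_congr rfl fun q _ => ?_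
    by_cases hpk : U p k = 0
    · simp [hpk]
    by_cases hql : U q l = 0
    · simp [hql]
    have h1 : lam p = mu k := by
      have h := hcomm p k
      rw [mul_comm] at h
      exact_mod_cast mul_left_cancel₀ hpk h
    have h2 : lam q = mu l := by
      have h := hcomm q l
      rw [mul_comm] at h
      exact_mod_cast mul_left_cancel₀ hql h
    simp only [hMt, Matrix.of_apply, h1, h2]
    ring
  calc ∑ k, ∑ l, G (mu k) (mu l) * ((Uᴴ * M * U) k l) * ((Uᴴ * N * U) l k)
      = ∑ k, ∑ l, ((Uᴴ * Mt * U) k l) * ((Uᴴ * N * U) l k) :=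
        Finset.sum_congr rfl fun k _ => Finset.sum_congr rfl fun l _ => by rw [← key k l]
    _ = Matrix.trace ((Uᴴ * Mt * U) * (Uᴴ * N * U)) := trace_double _ _
    _ = Matrix.trace (Mt * N) := by
        have h5 : (Uᴴ * Mt * U) * (Uᴴ * N * U) = Uᴴ * ((Mt * (U * Uᴴ) * N) * U) := by
          simp only [Matrix.mul_assoc]
        rw [h5, hU, Matrix.trace_mul_comm, Matrix.mul_one]
        rw [Matrix.mul_assoc, hU, Matrix.mul_one]
    _ = ∑ p, ∑ q, G (lam p) (lam q) * M p q * N q p := by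
        rw [← trace_double]
        exact Finset.sum_congr rfl fun p _ => Finset.sum_congr rfl fun q _ => by
          simp [hMt]

lemma basis_change (G : ℝ → ℝ → ℂ) (X Y : Matrix ι ι ℂ)
    (v w : ι → ι → ℂ) (lam mu : ι → ℝ)
    (hv : ∀ k l, star (v k) ⬝ᵥ v l = if k = l then 1 else 0)
    (hw : ∀ k l, star (w k) ⬝ᵥ w l = if k = l then 1 else 0)
    (hvw : ∑ k, (lam k : ℂ) • Matrix.vecMulVec (v k) (star (v k))
         = ∑ k, (mu k : ℂ) • Matrix.vecMulVec (w k) (star (w k))) :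
    ∑ k, ∑ l, G (lam k) (lam l) * (star (v k) ⬝ᵥ X *ᵥ v l) * (star (v l) ⬝ᵥ Y *ᵥ v k)
      = ∑ k, ∑ l, G (mu k) (mu l) * (star (w k) ⬝ᵥ X *ᵥ w l) * (star (w l) ⬝ᵥ Y *ᵥ w k) := by
  set V : Matrix ι ι ℂ := Matrix.of fun i k => v k i with hV
  set W : Matrix ι ι ℂ := Matrix.of fun i k => w k i with hW
  have hVg : Vᴴ * V = 1 := gram_one v hv
  have hWg : Wᴴ * W = 1 := gram_one w hw
  have hVg2 : V * Vᴴ = 1 := mul_eq_one_comm.mp hVg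
  have hWg2 : W * Wᴴ = 1 := mul_eq_one_comm.mp hWg
  set U : Matrix ι ι ℂ := Vᴴ * W with hU
  have hUU : U * Uᴴ = 1 := by
    rw [hU, Matrix.conjTranspose_mul, Matrix.conjTranspose_conjTranspose]
    calc Vᴴ * W * (Wᴴ * V) = Vᴴ * (W * Wᴴ) * V := by simp only [Matrix.mul_assoc]
      _ = 1 := by rw [hWg2, Matrix.mul_one, hVg]
  have hrho : V * Matrix.diagonal (fun k => (lam k : ℂ)) * Vᴴ
      = W * Matrix.diagonal (fun k => (mu k : ℂ)) * Wᴴ := by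
    rw [← decomp_matrix, ← decomp_matrix, hvw]
  have e1 : Vᴴ * (V * Matrix.diagonal (fun k => (lam k : ℂ)) * Vᴴ) * W
      = Matrix.diagonal (fun k => (lam k : ℂ)) * U := by
    have h : Vᴴ * (V * Matrix.diagonal (fun k => (lam k : ℂ)) * Vᴴ) * W
        = (Vᴴ * V) * Matrix.diagonal (fun k => (lam k : ℂ)) * (Vᴴ * W) := by
      simp only [Matrix.mul_assoc]
    rw [h, hVg, Matrix.one_mul, hU]
  have e2 : Vᴴ * (W * Matrix.diagonal (fun k => (mu k : ℂ)) * Wᴴ) * W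
      = U * Matrix.diagonal (fun k => (mu k : ℂ)) := by
    have h : Vᴴ * (W * Matrix.diagonal (fun k => (mu k : ℂ)) * Wᴴ) * W
        = (Vᴴ * W) * Matrix.diagonal (fun k => (mu k : ℂ)) * (Wᴴ * W) := by
      simp only [Matrix.mul_assoc]
    rw [h, hWg, Matrix.mul_one, hU]
  have hDU : Matrix.diagonal (fun k => (lam k : ℂ)) * U
      = U * Matrix.diagonal (fun k => (mu k : ℂ)) := by
    rw [← e1, hrho, e2]
  have hcomm : ∀ p k, (lam p : ℂ) * U p k = U p k * (mu k : ℂ) := by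
    intro p k
    have h := congrFun (congrFun hDU p) k
    simpa [Matrix.diagonal_mul, Matrix.mul_diagonal] using h
  have hWVU : W = V * U := by rw [hU, ← Matrix.mul_assoc, hVg2, Matrix.one_mul]
  have hXW : ∀ (C : Matrix ι ι ℂ), Wᴴ * C * W = Uᴴ * (Vᴴ * C * V) * U := by
    intro C
    rw [hWVU, Matrix.conjTranspose_mul]
    simp only [Matrix.mul_assoc]
  have main := sum_weighted_eq G U (Vᴴ * X * V) (Vᴴ * Y * V) lam mu hUU hcomm
  calc ∑ k, ∑ l, G (lam k) (lam l) * (star (v k) ⬝ᵥ X *ᵥ v l) * (star (v l) ⬝ᵥ Y *ᵥ v k)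
      = ∑ p, ∑ q, G (lam p) (lam q) * ((Vᴴ * X * V) p q) * ((Vᴴ * Y * V) q p) :=
        Finset.sum_congr rfl fun p _ => Finset.sum_congr rfl fun q _ => by
          rw [entry_eq, entry_eq]
    _ = ∑ k, ∑ l, G (mu k) (mu l) * ((Uᴴ * (Vᴴ * X * V) * U) k l) * ((Uᴴ * (Vᴴ * Y * V) * U) l k) :=
        main.symm
    _ = ∑ k, ∑ l, G (mu k) (mu l) * ((Wᴴ * X * W) k l) * ((Wᴴ * Y * W) l k) := by
        rw [hXW X, hXW Y]
    _ = ∑ k, ∑ l, G (mu k) (mu l) * (star (w k) ⬝ᵥ X *ᵥ w l) * (star (w l) ⬝ᵥ Y *ᵥ w k) :=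
        Finset.sum_congr rfl fun k _ => Finset.sum_congr rfl fun l _ => by
          rw [entry_eq, entry_eq]


lemma completeness (v : ι → ι → ℂ)
    (hv : ∀ k l, star (v k) ⬝ᵥ v l = if k = l then 1 else 0) :
    ∑ k, Matrix.vecMulVec (v k) (star (v k)) = 1 := by
  have h2 : (Matrix.of fun i k => v k i) * (Matrix.of fun i k => v k i)ᴴ = 1 :=
    mul_eq_one_comm.mp (gram_one v hv)
  ext i j
  have h3 : ((Matrix.of fun i k => v k i) * (Matrix.of fun i k => v k i)ᴴ) i j
      = (1 : Matrix ι ι ℂ) i j := by rw [h2]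
  simpa [Matrix.mul_apply, Matrix.conjTranspose_apply, Matrix.sum_apply,
    Matrix.vecMulVec_apply] using h3

lemma eigen_orth {M : Matrix ι ι ℂ} (hM : M.IsHermitian) (a b : ι) :
    star ⇑(hM.eigenvectorBasis a) ⬝ᵥ ⇑(hM.eigenvectorBasis b) = if a = b then 1 else 0 := by
  have h := orthonormal_iff_ite.mp hM.eigenvectorBasis.orthonormal a b
  rw [EuclideanSpace.inner_eq_star_dotProduct, dotProduct_comm] at h
  exact h

lemma mul_vecMulVec (M : Matrix ι ι ℂ) (x y : ι → ℂ) :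
    M * Matrix.vecMulVec x y = Matrix.vecMulVec (M *ᵥ x) y := by
  ext i j
  simp [Matrix.mul_apply, Matrix.vecMulVec_apply, Matrix.mulVec, dotProduct,
    Finset.sum_mul, mul_assoc]

lemma vecMulVec_mulVec (a b x : ι → ℂ) :
    Matrix.vecMulVec a b *ᵥ x = (b ⬝ᵥ x) • a := by
  ext i
  simp [Matrix.mulVec, dotProduct, Matrix.vecMulVec_apply, Finset.sum_mul, mul_assoc,
    mul_comm, mul_left_comm, Finset.mul_sum]

lemma spectral_sum {M : Matrix ι ι ℂ} (hM : M.IsHermitian) :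
    M = ∑ a, (hM.eigenvalues a : ℂ) •
      Matrix.vecMulVec (⇑(hM.eigenvectorBasis a)) (star ⇑(hM.eigenvectorBasis a)) := by
  have hcomp := completeness (fun a => ⇑(hM.eigenvectorBasis a)) (fun a b => eigen_orth hM a b)
  calc M = M * ∑ a, Matrix.vecMulVec (⇑(hM.eigenvectorBasis a)) (star ⇑(hM.eigenvectorBasis a)) := by
        rw [hcomp, Matrix.mul_one]
    _ = ∑ a, M * Matrix.vecMulVec (⇑(hM.eigenvectorBasis a)) (star ⇑(hM.eigenvectorBasis a)) := by
        rw [Finset.mul_sum]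
    _ = ∑ a, (hM.eigenvalues a : ℂ) •
        Matrix.vecMulVec (⇑(hM.eigenvectorBasis a)) (star ⇑(hM.eigenvectorBasis a)) := by
        refine Finset.sum_congr rfl fun a _ => ?_
        rw [_root_.mul_vecMulVec, Matrix.IsHermitian.mulVec_eigenvectorBasis]
        ext i j
        simp [Matrix.vecMulVec_apply, Complex.real_smul]
        ring

lemma exists_ne_zero_of_dot_one {e : ι → ℂ} (he : star e ⬝ᵥ e = 1) : ∃ i, e i ≠ 0 := by
  by_contra h
  push_neg at h
  rw [show e = 0 from funext h] at he
  simp [dotProduct] at he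

lemma rank_one_proj {P : Matrix ι ι ℂ} (hP : P.IsHermitian)
    (hidem : P * P = P) (hrank : P.rank = 1) :
    ∃ e : ι → ℂ, star e ⬝ᵥ e = 1 ∧ P = Matrix.vecMulVec e (star e) := by
  have hcard : Fintype.card {a // hP.eigenvalues a ≠ 0} = 1 := by
    rw [← Matrix.IsHermitian.rank_eq_card_non_zero_eigs hP]; exact hrank
  obtain ⟨⟨a0, ha0⟩, huniq⟩ := Fintype.card_eq_one_iff.mp hcard
  have heig : ∀ a, hP.eigenvalues a ≠ 0 → a = a0 := fun a h =>
    congrArg Subtype.val (huniq ⟨a, h⟩)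
  have hvals : ∀ a, hP.eigenvalues a = 0 ∨ hP.eigenvalues a = 1 := by
    intro a
    have h1 := Matrix.IsHermitian.mulVec_eigenvectorBasis hP a
    have h2 : P *ᵥ (P *ᵥ ⇑(hP.eigenvectorBasis a)) = P *ᵥ ⇑(hP.eigenvectorBasis a) := by
      rw [Matrix.mulVec_mulVec, hidem]
    rw [h1, Matrix.mulVec_smul, h1, smul_smul] at h2
    obtain ⟨i, hi⟩ := exists_ne_zero_of_dot_one (by simpa using eigen_orth hP a a)
    have h5 : hP.eigenvalues a * hP.eigenvalues a = hP.eigenvalues a := by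
      have h3 := congrFun h2 i
      have h3' : ((hP.eigenvalues a * hP.eigenvalues a : ℝ) : ℂ) * (hP.eigenvectorBasis a) i
          = ((hP.eigenvalues a : ℝ) : ℂ) * (hP.eigenvectorBasis a) i := by
        simpa [Pi.smul_apply, Complex.real_smul] using h3
      exact_mod_cast mul_right_cancel₀ hi h3'
    rcases eq_or_ne (hP.eigenvalues a) 0 with h0 | h0
    · exact Or.inl h0
    · refine Or.inr (mul_left_cancel₀ h0 ?_)
      rw [mul_one]
      exact h5
  have ha1 : hP.eigenvalues a0 = 1 := (hvals a0).resolve_left ha0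
  refine ⟨⇑(hP.eigenvectorBasis a0), by simpa using eigen_orth hP a0 a0, ?_⟩
  have hs := spectral_sum hP
  conv_lhs => rw [hs]
  refine (Finset.sum_eq_single a0 ?_ ?_).trans ?_
  · intro a _ hne
    have hz : hP.eigenvalues a = 0 := by
      by_contra h
      exact hne (heig a h)
    rw [hz]
    norm_num
  · intro h
    exact absurd (Finset.mem_univ a0) h
  · rw [ha1]
    norm_num


end Aux

section Aux2
variable {ι : Type} [Fintype ι] [DecidableEq ι]

lemma vecMulVec_mulVec' (a b x : ι → ℂ) :
    Matrix.vecMulVec a b *ᵥ x = (b ⬝ᵥ x) • a := by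
  ext i
  simp [Matrix.mulVec, dotProduct, Matrix.vecMulVec_apply, Finset.sum_mul, mul_assoc,
    mul_comm, mul_left_comm, Finset.mul_sum]

lemma exists_ne_zero_of_dot_one' {e : ι → ℂ} (he : star e ⬝ᵥ e = 1) : ∃ i, e i ≠ 0 := by
  by_contra h
  push_neg at h
  rw [show e = 0 from funext h] at he
  simp [dotProduct] at he

lemma proj_orth_dot {e g : ι → ℂ} (he : star e ⬝ᵥ e = 1) (hg : star g ⬝ᵥ g = 1)
    (h : Matrix.vecMulVec e (star e) * Matrix.vecMulVec g (star g) = 0) :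
    star e ⬝ᵥ g = 0 := by
  have h0 : (Matrix.vecMulVec e (star e) * Matrix.vecMulVec g (star g)) *ᵥ g = 0 := by
    rw [h, Matrix.zero_mulVec]
  rw [← Matrix.mulVec_mulVec, vecMulVec_mulVec', vecMulVec_mulVec', hg, one_smul] at h0
  obtain ⟨i, hi⟩ := exists_ne_zero_of_dot_one' he
  have h1 := congrFun h0 i
  simp only [Pi.smul_apply, smul_eq_mul, Pi.zero_apply] at h1
  rcases mul_eq_zero.mp h1 with h2 | h2
  · exact h2
  · exact absurd h2 hi

end Aux2

section Prod
variable {n m : ℕ}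

lemma prod_dot (x1 x2 : Fin n → ℂ) (y1 y2 : Fin m → ℂ) :
    star (fun q : Fin n × Fin m => x1 q.1 * y1 q.2) ⬝ᵥ (fun q : Fin n × Fin m => x2 q.1 * y2 q.2)
      = (star x1 ⬝ᵥ x2) * (star y1 ⬝ᵥ y2) := by
  simp only [dotProduct, Pi.star_apply]
  rw [Finset.sum_mul_sum, ← Fintype.sum_prod_type']
  refine Finset.sum_congr rfl fun q _ => ?_
  simp only [star_mul']
  ring

lemma kron_mulVec (A : Matrix (Fin n) (Fin n) ℂ) (B : Matrix (Fin m) (Fin m) ℂ)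
    (x : Fin n → ℂ) (y : Fin m → ℂ) :
    (A ⊗ₖ B) *ᵥ (fun q : Fin n × Fin m => x q.1 * y q.2)
      = fun q : Fin n × Fin m => (A *ᵥ x) q.1 * (B *ᵥ y) q.2 := by
  funext q
  obtain ⟨a, b⟩ := q
  simp only [Matrix.mulVec, dotProduct, Matrix.kroneckerMap_apply, Fintype.sum_prod_type]
  rw [Finset.sum_mul_sum]
  refine Finset.sum_congr rfl fun c _ => Finset.sum_congr rfl fun d _ => by ring

lemma kron_dot (A : Matrix (Fin n) (Fin n) ℂ) (B : Matrix (Fin m) (Fin m) ℂ)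
    (x1 x2 : Fin n → ℂ) (y1 y2 : Fin m → ℂ) :
    star (fun q : Fin n × Fin m => x1 q.1 * y1 q.2) ⬝ᵥ
        (A ⊗ₖ B) *ᵥ (fun q : Fin n × Fin m => x2 q.1 * y2 q.2)
      = (star x1 ⬝ᵥ A *ᵥ x2) * (star y1 ⬝ᵥ B *ᵥ y2) := by
  rw [kron_mulVec, prod_dot]

end Prod


-- final computation in the nice product basis
section Final
variable {n m : ℕ}

lemma nice_sum_zero (f : ℝ → ℝ → ℂ) (hf : ∀ x, f x x = 0)
    (A : Matrix (Fin n) (Fin n) ℂ) (B : Matrix (Fin m) (Fin m) ℂ)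
    (e : Fin n → Fin n → ℂ) (w : Fin n → Fin m → Fin m → ℂ) (lam : Fin n × Fin m → ℝ)
    (heij : ∀ i j, i ≠ j → star (e i) ⬝ᵥ e j = 0)
    (hworth : ∀ i r s, star (w i r) ⬝ᵥ w i s = if r = s then 1 else 0) :
    ∑ k : Fin n × Fin m, ∑ l : Fin n × Fin m, f (lam k) (lam l) *
        (star (fun q : Fin n × Fin m => e k.1 q.1 * w k.1 k.2 q.2) ⬝ᵥ
          (A ⊗ₖ (1 : Matrix (Fin m) (Fin m) ℂ)) *ᵥ (fun q : Fin n × Fin m => e l.1 q.1 * w l.1 l.2 q.2)) *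
        (star (fun q : Fin n × Fin m => e l.1 q.1 * w l.1 l.2 q.2) ⬝ᵥ
          ((1 : Matrix (Fin n) (Fin n) ℂ) ⊗ₖ B) *ᵥ (fun q : Fin n × Fin m => e k.1 q.1 * w k.1 k.2 q.2)) = 0 := by
  refine Finset.sum_eq_zero fun k _ => Finset.sum_eq_zero fun l _ => ?_
  obtain ⟨k1, k2⟩ := k
  obtain ⟨l1, l2⟩ := l
  rw [kron_dot, kron_dot, Matrix.one_mulVec, Matrix.one_mulVec]
  by_cases h1 : k1 = l1
  · subst h1
    by_cases h2 : k2 = l2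
    · subst h2
      rw [hf]
      ring
    · rw [hworth k1 k2 l2, if_neg h2]
      ring
  · rw [heij l1 k1 (Ne.symm h1)]
    ring

end Final

/-- For `f ∈ F_op` and a positive definite semi-quantum state `ρ` with spectral
decomposition `ρ = Σ_k λ_k v_k v_k*`, the cross term vanishes:
`Σ_{k,l} ĉ(λ_k,λ_l)·⟨v_k,(A ⊗ 1₂)v_l⟩·⟨v_l,(1₁ ⊗ B)v_k⟩ = 0`. -/
theorem crossTerm_eq_zero_of_semiQuantum {n m : ℕ} (f : ℝ → ℝ)
    (hf_mono : OperatorMonotone f) (hf_pos : ∀ t > 0, 0 < f t)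
    (hf_symm : ∀ t > 0, f t = t * f (1 / t)) (hf_one : f 1 = 1)
    (ρ : Matrix (Fin n × Fin m) (Fin n × Fin m) ℂ) (hρ : ρ.PosDef) (hρtr : ρ.trace = 1)
    (hsq : IsSemiQuantum ρ)
    (v : Fin n × Fin m → (Fin n × Fin m → ℂ)) (lam : Fin n × Fin m → ℝ)
    (horth : ∀ k l, star (v k) ⬝ᵥ v l = if k = l then 1 else 0)
    (hlam : ∀ k, 0 < lam k)
    (hdecomp : ρ = ∑ k, (lam k : ℂ) • Matrix.vecMulVec (v k) (star (v k)))
    (A : Matrix (Fin n) (Fin n) ℂ) (hA : A.IsHermitian)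
    (B : Matrix (Fin m) (Fin m) ℂ) (hB : B.IsHermitian) :
    ∑ k, ∑ l, (chat f (lam k) (lam l) : ℂ) *
        (star (v k) ⬝ᵥ (A ⊗ₖ (1 : Matrix (Fin m) (Fin m) ℂ)) *ᵥ v l) *
        (star (v l) ⬝ᵥ ((1 : Matrix (Fin n) (Fin n) ℂ) ⊗ₖ B) *ᵥ v k) = 0 := by
    classical
  obtain ⟨P, p, σ, hPh, hPidem, hPorth, _hPsum, hPrank, _hp0, _hp1, hσpsd, _hσtr, hρeq⟩ := hsq
  choose e he1 he2 using fun i => rank_one_proj (hPh i) (hPidem i) (hPrank i)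
  have heij : ∀ i j, i ≠ j → star (e i) ⬝ᵥ e j = 0 := fun i j hij =>
    proj_orth_dot (he1 i) (he1 j) (by rw [← he2 i, ← he2 j]; exact hPorth i j hij)
  have hσh : ∀ i, (σ i).IsHermitian := fun i => (hσpsd i).1
  have hworth : ∀ i r s, star ⇑((hσh i).eigenvectorBasis r) ⬝ᵥ ⇑((hσh i).eigenvectorBasis s)
      = if r = s then 1 else 0 := fun i r s => eigen_orth (hσh i) r s
  have hworth' : ∀ (i : Fin n) (r s : Fin m),
      (star (fun q => ((hσh i).eigenvectorBasis r) q)) ⬝ᵥ (fun q => ((hσh i).eigenvectorBasis s) q)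
      = if r = s then 1 else 0 := fun i r s => eigen_orth (hσh i) r s
  have hv'orth : ∀ k l : Fin n × Fin m,
      star (fun q : Fin n × Fin m => e k.1 q.1 * ((hσh k.1).eigenvectorBasis k.2) q.2) ⬝ᵥ
        (fun q : Fin n × Fin m => e l.1 q.1 * ((hσh l.1).eigenvectorBasis l.2) q.2)
      = if k = l then 1 else 0 := by
    intro k l
    obtain ⟨k1, k2⟩ := k
    obtain ⟨l1, l2⟩ := l
    refine (prod_dot (e k1) (e l1) (fun q => ((hσh k1).eigenvectorBasis k2) q)
        (fun q => ((hσh l1).eigenvectorBasis l2) q)).trans ?_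
    by_cases h1 : k1 = l1
    · subst h1
      rw [he1 k1, one_mul]
      refine (hworth' k1 k2 l2).trans ?_
      by_cases h2 : k2 = l2 <;> simp [h2, Prod.ext_iff]
    · rw [heij k1 l1 h1, zero_mul, if_neg (by simp [Prod.ext_iff, h1])]
  have hdec' : ρ = ∑ k : Fin n × Fin m, ((p k.1 * (hσh k.1).eigenvalues k.2 : ℝ) : ℂ) •
      Matrix.vecMulVec (fun q : Fin n × Fin m => e k.1 q.1 * ((hσh k.1).eigenvectorBasis k.2) q.2)
        (star fun q : Fin n × Fin m => e k.1 q.1 * ((hσh k.1).eigenvectorBasis k.2) q.2) := by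
    rw [hρeq]
    ext ⟨a, b⟩ ⟨c, d⟩
    simp only [Matrix.sum_apply, Matrix.smul_apply, smul_eq_mul, Matrix.kroneckerMap_apply,
      Matrix.vecMulVec_apply, Pi.star_apply]
    rw [Fintype.sum_prod_type]
    refine Finset.sum_congr rfl fun i _ => ?_
    rw [he2 i, spectral_sum (hσh i)]
    simp only [Matrix.sum_apply, Matrix.smul_apply, Matrix.vecMulVec_apply, smul_eq_mul,
      Pi.star_apply, Finset.mul_sum]
    refine Finset.sum_congr rfl fun r _ => ?_
    push_cast
    simp only [star_mul']
    ring_nf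
  have key := basis_change (fun a b => (chat f a b : ℂ))
      (A ⊗ₖ (1 : Matrix (Fin m) (Fin m) ℂ)) ((1 : Matrix (Fin n) (Fin n) ℂ) ⊗ₖ B)
      v (fun k : Fin n × Fin m => fun q : Fin n × Fin m =>
          e k.1 q.1 * ((hσh k.1).eigenvectorBasis k.2) q.2)
      lam (fun k : Fin n × Fin m => p k.1 * (hσh k.1).eigenvalues k.2)
      horth hv'orth (by rw [← hdecomp, ← hdec'])
  exact key.trans (nice_sum_zero (fun a b => (chat f a b : ℂ))
    (fun x => by simp [chat]) A B e
    (fun i r => ⇑((hσh i).eigenvectorBasis r))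
    (fun k : Fin n × Fin m => p k.1 * (hσh k.1).eigenvalues k.2) heij hworth)
end
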